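/- arXiv:1409.4123 — 3 statements merged into one kernel-verified Lean document; each statement's English description precedes it below -/
import Mathlib

section
/- For every integer r ≥ 2 there is a constant c_r (one may take c_r = 30·(r choose 2)²·log₂ r) such that for every ℓ ≥ 1 and every m ≥ 1, forb(m, r, 𝓣_ℓ(r)) ≤ 2^{c_r·ℓ²}. Equivalently: every m-rowed simple r-matrix with more than r^{30·(r choose 2)²·ℓ²} columns contains, for some a ≠ b ∈ {0,…,r−1}, the matrix I_ℓ(a,b) or the matrix T_ℓ(a,b) as a configuration. -/
/-- An `r`-matrix with explicit row and column counts: a matrix with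
entries in `{0,1,…,r-1}` (modelled as `Fin r`). -/
structure RMat (r : ℕ) where
  rows : ℕ
  cols : ℕ
  mat : Matrix (Fin rows) (Fin cols) (Fin r)

/-- A matrix is *simple* if its columns are pairwise distinct. -/
def Simple {r m n : ℕ} (A : Matrix (Fin m) (Fin n) (Fin r)) : Prop :=
  Function.Injective fun j : Fin n => fun i : Fin m => A i j

/-- A matrix is *`s`-simple* if every column appears with multiplicity at most `s`. -/
def SSimple {r m n : ℕ} (s : ℕ) (A : Matrix (Fin m) (Fin n) (Fin r)) : Prop :=
  ∀ c : Fin m → Fin r,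
    (Finset.univ.filter fun j : Fin n => (fun i : Fin m => A i j) = c).card ≤ s

/-- `F` is a *configuration* in `A` (written `F ≺ A`): some row and column
permutation of `F` is a submatrix of `A`; equivalently there are injections
of the rows and the columns of `F` into those of `A` realizing `F`. -/
def ConfigSub {r k l m n : ℕ} (F : Matrix (Fin k) (Fin l) (Fin r))
    (A : Matrix (Fin m) (Fin n) (Fin r)) : Prop :=
  ∃ ρ : Fin k → Fin m, ∃ σ : Fin l → Fin n,
    Function.Injective ρ ∧ Function.Injective σ ∧ ∀ i j, A (ρ i) (σ j) = F i j

/-- Configuration relation for a packaged matrix `F : RMat r`. -/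
def ConfigIn {r m n : ℕ} (F : RMat r) (A : Matrix (Fin m) (Fin n) (Fin r)) : Prop :=
  ConfigSub F.mat A

/-- `A` avoids every member of the family `𝓕`. -/
def AvoidsF {r m n : ℕ} (𝓕 : Set (RMat r)) (A : Matrix (Fin m) (Fin n) (Fin r)) : Prop :=
  ∀ F ∈ 𝓕, ¬ ConfigIn F A

/-- `forb m r 𝓕`: the maximum number of columns of an `m`-rowed simple
`r`-matrix having no member of `𝓕` as a configuration. -/
noncomputable def forb (m r : ℕ) (𝓕 : Set (RMat r)) : ℕ :=
  sSup { n | ∃ A : Matrix (Fin m) (Fin n) (Fin r), Simple A ∧ AvoidsF 𝓕 A }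

/-- `forbS m r 𝓕 s`: the analogous maximum over `m`-rowed `s`-simple `r`-matrices. -/
noncomputable def forbS (m r : ℕ) (𝓕 : Set (RMat r)) (s : ℕ) : ℕ :=
  sSup { n | ∃ A : Matrix (Fin m) (Fin n) (Fin r), SSimple s A ∧ AvoidsF 𝓕 A }

/-- `forbP m r S 𝓕`: as `forb`, but over simple matrices all of whose entries lie
in the set `S ⊆ {0,…,r-1}`. -/
noncomputable def forbP (m r : ℕ) (S : Set (Fin r)) (𝓕 : Set (RMat r)) : ℕ :=
  sSup { n | ∃ A : Matrix (Fin m) (Fin n) (Fin r),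
    Simple A ∧ (∀ i j, A i j ∈ S) ∧ AvoidsF 𝓕 A }

/-- `forbmaxP m r S 𝓕 = max_{1 ≤ m' ≤ m} forbP m' r S 𝓕`. -/
noncomputable def forbmaxP (m r : ℕ) (S : Set (Fin r)) (𝓕 : Set (RMat r)) : ℕ :=
  (Finset.Icc 1 m).sup fun m' => forbP m' r S 𝓕

/-- `I_ℓ(a,b)`: the `ℓ×ℓ` matrix with `a`'s on the diagonal and `b`'s elsewhere. -/
def Imat (ℓ r : ℕ) (a b : Fin r) : Matrix (Fin ℓ) (Fin ℓ) (Fin r) :=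
  fun i j => if i = j then a else b

/-- `T_ℓ(a,b)`: the `ℓ×ℓ` matrix with `a`'s strictly below the diagonal and
`b`'s on and above the diagonal. -/
def Tmat (ℓ r : ℕ) (a b : Fin r) : Matrix (Fin ℓ) (Fin ℓ) (Fin r) :=
  fun i j => if (j : ℕ) < (i : ℕ) then a else b

/-- The family `𝓣_ℓ(r) = {I_ℓ(a,b) : a ≠ b} ∪ {T_ℓ(a,b) : a ≠ b}`. -/
def TFam (ℓ r : ℕ) : Set (RMat r) :=
  { F | ∃ a b : Fin r, a ≠ b ∧
      (F = ⟨ℓ, ℓ, Imat ℓ r a b⟩ ∨ F = ⟨ℓ, ℓ, Tmat ℓ r a b⟩) }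

/-- `t·M`: the concatenation of `t` copies of `M`. -/
def tCopy {r : ℕ} (t : ℕ) (M : RMat r) : RMat r :=
  ⟨M.rows, t * M.cols, fun i j => M.mat i (finProdFinEquiv.symm j).2⟩

/-! ### Auxiliary development -/

noncomputable section AnsteeLuAux

open Finset

/-- A pattern `M` (a `k×k` matrix of values) occurs in the "set system" given by
the finset of columns `V` (functions `ℕ → Fin r`), using rows from `s`. -/
def hasPat (r : ℕ) {k : ℕ} (M : Fin k → Fin k → Fin r)
    (s : Finset ℕ) (V : Finset (ℕ → Fin r)) : Prop :=
  ∃ ρ : Fin k → ℕ, ∃ σ : Fin k → ℕ → Fin r,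
    (∀ i, ρ i ∈ s) ∧ Function.Injective ρ ∧ Function.Injective σ ∧
    (∀ j, σ j ∈ V) ∧ ∀ i j, σ j (ρ i) = M i j

def hasT (r k : ℕ) (a b : Fin r) (s : Finset ℕ) (V : Finset (ℕ → Fin r)) : Prop :=
  hasPat r (fun i j : Fin k => if (j : ℕ) < (i : ℕ) then a else b) s V

def hasI (r k : ℕ) (a b : Fin r) (s : Finset ℕ) (V : Finset (ℕ → Fin r)) : Prop :=
  hasPat r (fun i j : Fin k => if i = j then a else b) s V

/-- The finset of ordered pairs `(a,b)` with `a < b`. -/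
def pairsF (r : ℕ) : Finset (Fin r × Fin r) :=
  Finset.univ.filter fun p => p.1 < p.2

lemma pairsF_card_le (r : ℕ) : (pairsF r).card ≤ r.choose 2 := by
  classical
  have h := Finset.card_le_card_of_injOn (fun p : Fin r × Fin r => ({p.1, p.2} : Finset (Fin r)))
    (fun p hp => ?_) (fun p hp q hq hpq => ?_) (s := pairsF r)
    (t := (Finset.univ : Finset (Fin r)).powersetCard 2)
  · calc (pairsF r).card ≤ ((Finset.univ : Finset (Fin r)).powersetCard 2).card := h
      _ = r.choose 2 := by
        rw [Finset.card_powersetCard]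
        simp
  · have hlt : p.1 < p.2 := (Finset.mem_filter.mp hp).2
    rw [Finset.mem_coe, Finset.mem_powersetCard]
    refine ⟨by intro x _; exact Finset.mem_univ x, ?_⟩
    exact Finset.card_pair (ne_of_lt hlt)
  · have hp' : p.1 < p.2 := (Finset.mem_filter.mp (Finset.mem_coe.mp hp)).2
    have hq' : q.1 < q.2 := (Finset.mem_filter.mp (Finset.mem_coe.mp hq)).2
    have hpq' : ({p.1, p.2} : Finset (Fin r)) = {q.1, q.2} := hpq
    have h1 : p.1 ∈ ({q.1, q.2} : Finset (Fin r)) := by rw [← hpq']; simp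
    have h2 : p.2 ∈ ({q.1, q.2} : Finset (Fin r)) := by rw [← hpq']; simp
    have h3 : q.1 ∈ ({p.1, p.2} : Finset (Fin r)) := by rw [hpq']; simp
    simp only [Finset.mem_insert, Finset.mem_singleton] at h1 h2 h3
    have hv1 : (p.1 : ℕ) < (p.2 : ℕ) := hp'
    have hv2 : (q.1 : ℕ) < (q.2 : ℕ) := hq'
    have e1 : (p.1 : ℕ) = q.1 ∨ (p.1 : ℕ) = q.2 := by
      rcases h1 with h | h
      · exact Or.inl (congrArg Fin.val h)
      · exact Or.inr (congrArg Fin.val h)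
    have e2 : (p.2 : ℕ) = q.1 ∨ (p.2 : ℕ) = q.2 := by
      rcases h2 with h | h
      · exact Or.inl (congrArg Fin.val h)
      · exact Or.inr (congrArg Fin.val h)
    have e3 : (q.1 : ℕ) = p.1 ∨ (q.1 : ℕ) = p.2 := by
      rcases h3 with h | h
      · exact Or.inl (congrArg Fin.val h)
      · exact Or.inr (congrArg Fin.val h)
    have hval : (p.1 : ℕ) = q.1 ∧ (p.2 : ℕ) = q.2 := by omega
    exact Prod.ext (Fin.ext hval.1) (Fin.ext hval.2)

/-- Lifting a pattern through the "collapse a row" operation. -/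
lemma hasPat_lift {r k : ℕ} (M : Fin k → Fin k → Fin r) (s : Finset ℕ) (i : ℕ) (z : Fin r)
    (V W : Finset (ℕ → Fin r))
    (hlift : ∀ g ∈ W, ∃ f ∈ V, Function.update f i z = g) :
    hasPat r M (s.erase i) W → hasPat r M s V := by
  rintro ⟨ρ, σ, hρs, hρ, hσ, hσW, hval⟩
  have hch : ∀ j : Fin k, ∃ f, f ∈ V ∧ Function.update f i z = σ j := by
    intro j
    obtain ⟨f, hf, he⟩ := hlift _ (hσW j)
    exact ⟨f, hf, he⟩
  choose F hFV hFe using hch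
  refine ⟨ρ, F, fun i' => Finset.mem_of_mem_erase (hρs i'), hρ, ?_, hFV, ?_⟩
  · intro j j' hjj
    apply hσ
    rw [← hFe j, ← hFe j', hjj]
  · intro i' j
    have hne : ρ i' ≠ i := (Finset.mem_erase.mp (hρs i')).1
    have : Function.update (F j) i z (ρ i') = σ j (ρ i') := by rw [hFe]
    rw [Function.update_of_ne hne] at this
    rw [this, hval]

lemma hasT_one {r : ℕ} (s : Finset ℕ) (i : ℕ) (hi : i ∈ s) (x y : Fin r)
    (V : Finset (ℕ → Fin r)) (f : ℕ → Fin r) (hf : f ∈ V) (hfi : f i = y) :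
    hasT r 1 x y s V := by
  refine ⟨fun _ => i, fun _ => f, fun _ => hi, ?_, ?_, fun _ => hf, ?_⟩
  · intro u v _; exact Subsingleton.elim u v
  · intro u v _; exact Subsingleton.elim u v
  · intro i' j
    have hij : ¬ ((j : ℕ) < (i' : ℕ)) := by
      have h1 := j.isLt
      have h2 := i'.isLt
      omega
    simp only [if_neg hij]
    exact hfi

/-- Key extension step: a `T`-pattern in the doubled-column part extends by one. -/
lemma hasT_extend {r : ℕ} (k : ℕ) (s : Finset ℕ) (i : ℕ) (hi : i ∈ s) (z x y : Fin r)
    (hxy : x ≠ y)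
    (V B : Finset (ℕ → Fin r))
    (hxl : ∀ g ∈ B, ∃ f ∈ V, Function.update f i z = g ∧ f i = x)
    (hyl : ∀ g ∈ B, ∃ f ∈ V, Function.update f i z = g ∧ f i = y) :
    hasT r (k+1) x y (s.erase i) B → hasT r (k+2) x y s V := by
  rintro ⟨ρ, σ, hρs, hρ, hσ, hσB, hval⟩
  have hch : ∀ j : Fin (k+1), ∃ f, f ∈ V ∧ Function.update f i z = σ j ∧ f i = x := by
    intro j
    obtain ⟨f, hf, he, hx'⟩ := hxl _ (hσB j)
    exact ⟨f, hf, he, hx'⟩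
  choose FX hFXV hFXe hFXi using hch
  obtain ⟨fy, hfyV, hfye, hfyi⟩ := hyl (σ (Fin.last k)) (hσB _)
  have hρnei : ∀ i0 : Fin (k+1), ρ i0 ≠ i := fun i0 => (Finset.mem_erase.mp (hρs i0)).1
  have hFXval : ∀ (j : Fin (k+1)) (i0 : Fin (k+1)), FX j (ρ i0) = σ j (ρ i0) := by
    intro j i0
    have : Function.update (FX j) i z (ρ i0) = σ j (ρ i0) := by rw [hFXe]
    rwa [Function.update_of_ne (hρnei i0)] at this
  have hfyval : ∀ i0 : Fin (k+1), fy (ρ i0) = σ (Fin.last k) (ρ i0) := by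
    intro i0
    have : Function.update fy i z (ρ i0) = σ (Fin.last k) (ρ i0) := by rw [hfye]
    rwa [Function.update_of_ne (hρnei i0)] at this
  refine ⟨Fin.snoc ρ i, Fin.snoc FX fy, ?_, ?_, ?_, ?_, ?_⟩
  · intro i'
    induction i' using Fin.lastCases with
    | last => simpa using hi
    | cast i0 =>
      rw [Fin.snoc_castSucc]
      exact Finset.mem_of_mem_erase (hρs i0)
  · intro i1 i2 h12
    induction i1 using Fin.lastCases with
    | last =>
      induction i2 using Fin.lastCases with
      | last => rfl
      | cast i0 =>
        rw [Fin.snoc_last, Fin.snoc_castSucc] at h12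
        exact absurd h12.symm (hρnei i0)
    | cast i0 =>
      induction i2 using Fin.lastCases with
      | last =>
        rw [Fin.snoc_last, Fin.snoc_castSucc] at h12
        exact absurd h12 (hρnei i0)
      | cast i0' =>
        rw [Fin.snoc_castSucc, Fin.snoc_castSucc] at h12
        exact congrArg Fin.castSucc (hρ h12)
  · intro j1 j2 h12
    induction j1 using Fin.lastCases with
    | last =>
      induction j2 using Fin.lastCases with
      | last => rfl
      | cast j0 =>
        rw [Fin.snoc_last, Fin.snoc_castSucc] at h12
        have : fy i = FX j0 i := by rw [h12]
        rw [hfyi, hFXi] at this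
        exact absurd this.symm hxy
    | cast j0 =>
      induction j2 using Fin.lastCases with
      | last =>
        rw [Fin.snoc_last, Fin.snoc_castSucc] at h12
        have : FX j0 i = fy i := by rw [h12]
        rw [hfyi, hFXi] at this
        exact absurd this hxy
      | cast j0' =>
        rw [Fin.snoc_castSucc, Fin.snoc_castSucc] at h12
        have : σ j0 = σ j0' := by rw [← hFXe j0, ← hFXe j0', h12]
        exact congrArg Fin.castSucc (hσ this)
  · intro j
    induction j using Fin.lastCases with
    | last => rw [Fin.snoc_last]; exact hfyV
    | cast j0 => rw [Fin.snoc_castSucc]; exact hFXV j0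
  · intro i' j
    show (Fin.snoc FX fy : Fin (k+2) → ℕ → Fin r) j ((Fin.snoc ρ i : Fin (k+2) → ℕ) i')
        = if (j : ℕ) < (i' : ℕ) then x else y
    induction i' using Fin.lastCases with
    | last =>
      induction j using Fin.lastCases with
      | last =>
        rw [Fin.snoc_last, Fin.snoc_last, hfyi]
        rw [if_neg (lt_irrefl _)]
      | cast j0 =>
        rw [Fin.snoc_last, Fin.snoc_castSucc, hFXi]
        rw [if_pos]
        simp only [Fin.coe_castSucc, Fin.val_last]
        exact j0.isLt
    | cast i0 =>
      induction j using Fin.lastCases with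
      | last =>
        rw [Fin.snoc_castSucc, Fin.snoc_last, hfyval i0]
        have hv := hval i0 (Fin.last k)
        simp only at hv
        rw [hv]
        have h1 : ¬ ((Fin.last k : ℕ) < (i0 : ℕ)) := by
          simp only [Fin.val_last]
          have := i0.isLt
          omega
        have h2 : ¬ ((Fin.last (k+1) : ℕ) < ((i0.castSucc : Fin (k+2)) : ℕ)) := by
          simp only [Fin.val_last, Fin.coe_castSucc]
          have := i0.isLt
          omega
        rw [if_neg h1, if_neg h2]
      | cast j0 =>
        rw [Fin.snoc_castSucc, Fin.snoc_castSucc, hFXval j0 i0]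
        have hv := hval i0 j0
        simp only at hv
        rw [hv]
        simp only [Fin.coe_castSucc]


/-- The polynomial-in-`m` bound for families avoiding triangular patterns. -/
lemma lemA (r : ℕ) (hr : 2 ≤ r) (z : Fin r) :
    ∀ (m : ℕ) (s : Finset ℕ) (t : Fin r → Fin r → ℕ) (V : Finset (ℕ → Fin r)),
    s.card = m →
    (∀ f ∈ V, ∀ j ∉ s, f j = z) →
    (∀ a b : Fin r, a ≠ b → 1 ≤ t a b ∧ t a b = t b a ∧ ¬ hasT r (t a b) a b s V) →
    V.card ≤ ((r*r) * (m + 1)) ^ (∑ p ∈ pairsF r, (t p.1 p.2 - 1)) := by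
  intro m
  induction m with
  | zero =>
    intro s t V hm hsupp _
    have hs : s = ∅ := Finset.card_eq_zero.mp hm
    subst hs
    have h1 : V.card ≤ 1 := by
      apply Finset.card_le_one.mpr
      intro f hf g hg
      funext j
      rw [hsupp f hf j (by simp), hsupp g hg j (by simp)]
    have h2 : 1 ≤ ((r*r) * (0 + 1)) ^ (∑ p ∈ pairsF r, (t p.1 p.2 - 1)) := by
      apply Nat.one_le_pow
      positivity
    omega
  | succ m IH =>
    intro s t V hm hsupp H
    classical
    have hsne : s.Nonempty := Finset.card_pos.mp (by omega)
    obtain ⟨i, hi⟩ := hsne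
    have hs' : (s.erase i).card = m := by
      rw [Finset.card_erase_of_mem hi, hm]
      omega
    set U : Finset (ℕ → Fin r) := V.image (fun f : ℕ → Fin r => Function.update f i z)
      with hUdef
    set W : (ℕ → Fin r) → Finset (Fin r) := fun g =>
      (V.filter fun f : ℕ → Fin r => Function.update f i z = g).image
        (fun f : ℕ → Fin r => f i) with hWdef
    set Bp : Fin r × Fin r → Finset (ℕ → Fin r) := fun p =>
      U.filter (fun g => p.1 ∈ W g ∧ p.2 ∈ W g) with hBpdef
    have hV'supp : ∀ g ∈ U, ∀ j ∉ s.erase i, g j = z := by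
      intro g hg j hj
      rw [hUdef] at hg
      obtain ⟨f, hf, rfl⟩ := Finset.mem_image.mp hg
      by_cases hji : j = i
      · subst hji; simp
      · rw [Function.update_of_ne hji]
        apply hsupp f hf
        intro hjs
        exact hj (Finset.mem_erase.mpr ⟨hji, hjs⟩)
    have hV'lift : ∀ g ∈ U, ∃ f ∈ V, Function.update f i z = g := by
      intro g hg
      rw [hUdef] at hg
      obtain ⟨f, hf, he⟩ := Finset.mem_image.mp hg
      exact ⟨f, hf, he⟩
    have hV'avoid : ∀ a b : Fin r, a ≠ b → 1 ≤ t a b ∧ t a b = t b a ∧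
        ¬ hasT r (t a b) a b (s.erase i) U := by
      intro a b hab
      obtain ⟨h1, h2, h3⟩ := H a b hab
      exact ⟨h1, h2, fun hT => h3 (hasPat_lift _ s i z V U hV'lift hT)⟩
    have hd : U.card ≤ ((r*r) * (m+1)) ^ (∑ p ∈ pairsF r, (t p.1 p.2 - 1)) :=
      IH (s.erase i) t U hs' hV'supp hV'avoid
    -- fibers have the same size as value sets
    have hfib : ∀ g : ℕ → Fin r,
        (V.filter fun f : ℕ → Fin r => Function.update f i z = g).card = (W g).card := by
      intro g
      rw [hWdef]
      rw [Finset.card_image_of_injOn]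
      intro f hf f' hf' hff
      have h1 : Function.update f i z = g := (Finset.mem_filter.mp hf).2
      have h2 : Function.update f' i z = g := (Finset.mem_filter.mp hf').2
      funext j
      by_cases hji : j = i
      · subst hji; exact hff
      · have h3 := congrFun (h1.trans h2.symm) j
        rwa [Function.update_of_ne hji, Function.update_of_ne hji] at h3
    have hWle : ∀ g : ℕ → Fin r,
        (W g).card ≤ 1 + ((pairsF r).filter fun p => p.1 ∈ W g ∧ p.2 ∈ W g).card := by
      intro g
      by_cases hne : (W g).Nonempty
      · have hcard1 : 1 ≤ (W g).card := Finset.card_pos.mpr hne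
        have hle := Finset.card_le_card_of_injOn
          (fun w => (((W g).min' hne, w) : Fin r × Fin r))
          (s := (W g).erase ((W g).min' hne))
          (t := (pairsF r).filter fun p => p.1 ∈ W g ∧ p.2 ∈ W g) ?_ ?_
        · rw [Finset.card_erase_of_mem ((W g).min'_mem hne)] at hle
          omega
        · intro w hw
          have hw1 : w ∈ W g := Finset.mem_of_mem_erase hw
          have hw2 : w ≠ (W g).min' hne := (Finset.mem_erase.mp hw).1
          have hlt : (W g).min' hne < w := lt_of_le_of_ne ((W g).min'_le _ hw1) (Ne.symm hw2)
          exact Finset.mem_filter.mpr ⟨Finset.mem_filter.mpr ⟨Finset.mem_univ _, hlt⟩,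
            (W g).min'_mem hne, hw1⟩
        · intro w _ w' _ hww
          exact (Prod.ext_iff.mp hww).2
      · rw [Finset.not_nonempty_iff_eq_empty.mp hne]
        simp
    -- main count
    have hcount : V.card ≤ U.card + ∑ p ∈ pairsF r, (Bp p).card := by
      have h0 : V.card = ∑ g ∈ U, (V.filter fun f : ℕ → Fin r =>
          Function.update f i z = g).card := by
        rw [hUdef]
        exact Finset.card_eq_sum_card_image _ _
      have h1 : V.card ≤ ∑ g ∈ U,
          (1 + ((pairsF r).filter fun p => p.1 ∈ W g ∧ p.2 ∈ W g).card) := by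
        rw [h0]
        apply Finset.sum_le_sum
        intro g _
        rw [hfib g]
        exact hWle g
      rw [Finset.sum_add_distrib, Finset.sum_const, smul_eq_mul, mul_one] at h1
      have h2 : ∑ g ∈ U, ((pairsF r).filter fun p => p.1 ∈ W g ∧ p.2 ∈ W g).card
          = ∑ p ∈ pairsF r, (Bp p).card := by
        calc ∑ g ∈ U, ((pairsF r).filter fun p => p.1 ∈ W g ∧ p.2 ∈ W g).card
            = ∑ g ∈ U, ∑ p ∈ pairsF r, (if p.1 ∈ W g ∧ p.2 ∈ W g then 1 else 0) := by
              apply Finset.sum_congr rfl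
              intro g _
              exact Finset.card_filter _ _
          _ = ∑ p ∈ pairsF r, ∑ g ∈ U, (if p.1 ∈ W g ∧ p.2 ∈ W g then 1 else 0) :=
              Finset.sum_comm
          _ = ∑ p ∈ pairsF r, (Bp p).card := by
              apply Finset.sum_congr rfl
              intro p _
              rw [hBpdef]
              exact (Finset.card_filter _ _).symm
      omega
    -- lifts with prescribed value at i for members of Bp p
    have hBmem : ∀ (p : Fin r × Fin r) (c : Fin r), ∀ g ∈ Bp p,
        (c = p.1 ∨ c = p.2) → ∃ f ∈ V, Function.update f i z = g ∧ f i = c := by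
      intro p c g hg hc
      rw [hBpdef] at hg
      have h1 := (Finset.mem_filter.mp hg).2
      have hget : ∀ d : Fin r, d ∈ W g → ∃ f ∈ V, Function.update f i z = g ∧ f i = d := by
        intro d hd
        rw [hWdef] at hd
        obtain ⟨f, hf, hfi⟩ := Finset.mem_image.mp hd
        have hf' := Finset.mem_filter.mp hf
        exact ⟨f, hf'.1, hf'.2, hfi⟩
      rcases hc with rfl | rfl
      · exact hget _ h1.1
      · exact hget _ h1.2
    have hBsubU : ∀ p, Bp p ⊆ U := by
      intro p
      rw [hBpdef]
      exact Finset.filter_subset _ _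
    -- if t p = 1 then Bp p is empty
    have hBempty1 : ∀ p : Fin r × Fin r, p.1 ≠ p.2 → t p.1 p.2 = 1 → (Bp p).card = 0 := by
      intro p hne ht1
      rw [Finset.card_eq_zero]
      by_contra hcon
      obtain ⟨g, hg⟩ := Finset.nonempty_iff_ne_empty.mpr hcon
      obtain ⟨f, hfV, _, hfi⟩ := hBmem p p.2 g hg (Or.inr rfl)
      have hH := (H p.1 p.2 hne).2.2
      rw [ht1] at hH
      exact hH (hasT_one s i hi p.1 p.2 V f hfV hfi)
    by_cases hE : (∑ p ∈ pairsF r, (t p.1 p.2 - 1)) = 0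
    · have hsum0 : ∑ p ∈ pairsF r, (Bp p).card = 0 := by
        apply Finset.sum_eq_zero
        intro p hp
        have hne : p.1 ≠ p.2 := ne_of_lt (Finset.mem_filter.mp hp).2
        have ht1 : t p.1 p.2 - 1 = 0 := Finset.sum_eq_zero_iff.mp hE p hp
        have ht2 : t p.1 p.2 = 1 := by
          have := (H p.1 p.2 hne).1
          omega
        exact hBempty1 p hne ht2
      rw [hE, pow_zero] at hd ⊢
      omega
    · obtain ⟨E', hE'⟩ : ∃ E', (∑ p ∈ pairsF r, (t p.1 p.2 - 1)) = E' + 1 :=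
        ⟨(∑ p ∈ pairsF r, (t p.1 p.2 - 1)) - 1, by omega⟩
      have hBbound : ∀ p ∈ pairsF r, (Bp p).card ≤ ((r*r) * (m+1)) ^ E' := by
        intro p hp
        have hplt : p.1 < p.2 := (Finset.mem_filter.mp hp).2
        have hne : p.1 ≠ p.2 := ne_of_lt hplt
        rcases Nat.lt_or_ge (t p.1 p.2) 2 with ht1 | ht2
        · have ht2' : t p.1 p.2 = 1 := by
            have := (H p.1 p.2 hne).1
            omega
          rw [hBempty1 p hne ht2']
          exact Nat.zero_le _
        · obtain ⟨k, hk⟩ : ∃ k, t p.1 p.2 = k + 2 := ⟨t p.1 p.2 - 2, by omega⟩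
          set t' : Fin r → Fin r → ℕ := fun x y =>
            if (x = p.1 ∧ y = p.2) ∨ (x = p.2 ∧ y = p.1) then t x y - 1 else t x y with ht'
          have hBsupp : ∀ g ∈ Bp p, ∀ j ∉ s.erase i, g j = z :=
            fun g hg => hV'supp g (hBsubU p hg)
          have hpackage : ∀ x y : Fin r, x ≠ y → 1 ≤ t' x y ∧ t' x y = t' y x ∧
              ¬ hasT r (t' x y) x y (s.erase i) (Bp p) := by
            intro x y hxy
            have hsymq : t x y = t y x := (H x y hxy).2.1
            have hone : 1 ≤ t x y := (H x y hxy).1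
            have htsym : ((x = p.1 ∧ y = p.2) ∨ (x = p.2 ∧ y = p.1)) ↔
                ((y = p.1 ∧ x = p.2) ∨ (y = p.2 ∧ x = p.1)) := by tauto
            refine ⟨?_, ?_, ?_⟩
            · rw [ht']; simp only
              by_cases hc : (x = p.1 ∧ y = p.2) ∨ (x = p.2 ∧ y = p.1)
              · rw [if_pos hc]
                rcases hc with ⟨rfl, rfl⟩ | ⟨rfl, rfl⟩
                · omega
                · rw [← hsymq] at ht2
                  omega
              · rw [if_neg hc]; exact hone
            · rw [ht']; simp only
              by_cases hc : (x = p.1 ∧ y = p.2) ∨ (x = p.2 ∧ y = p.1)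
              · rw [if_pos hc, if_pos (htsym.mp hc), hsymq]
              · rw [if_neg hc, if_neg (fun h => hc (htsym.mpr h)), hsymq]
            · by_cases hc : (x = p.1 ∧ y = p.2) ∨ (x = p.2 ∧ y = p.1)
              · have hval : t' x y = t x y - 1 := by rw [ht']; simp only; rw [if_pos hc]
                have htxy2 : t x y = k + 2 := by
                  rcases hc with ⟨rfl, rfl⟩ | ⟨rfl, rfl⟩
                  · exact hk
                  · rw [← hsymq] at hk; exact hk
                rw [hval]
                intro hT
                have hT' : hasT r (k+1) x y (s.erase i) (Bp p) := by
                  have hq : t x y - 1 = k + 1 := by omega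
                  rwa [hq] at hT
                have hxlift : ∀ g ∈ Bp p, ∃ f ∈ V, Function.update f i z = g ∧ f i = x := by
                  intro g hg
                  apply hBmem p x g hg
                  rcases hc with ⟨rfl, _⟩ | ⟨rfl, _⟩
                  · exact Or.inl rfl
                  · exact Or.inr rfl
                have hylift : ∀ g ∈ Bp p, ∃ f ∈ V, Function.update f i z = g ∧ f i = y := by
                  intro g hg
                  apply hBmem p y g hg
                  rcases hc with ⟨_, rfl⟩ | ⟨_, rfl⟩
                  · exact Or.inr rfl
                  · exact Or.inl rfl
                have hTbig := hasT_extend k s i hi z x y hxy V (Bp p) hxlift hylift hT'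
                have hH := (H x y hxy).2.2
                rw [htxy2] at hH
                exact hH hTbig
              · have hval : t' x y = t x y := by rw [ht']; simp only; rw [if_neg hc]
                rw [hval]
                intro hT
                exact (H x y hxy).2.2 (hasPat_lift _ s i z V (Bp p)
                  (fun g hg => hV'lift g (hBsubU p hg)) hT)
          have hIH := IH (s.erase i) t' (Bp p) hs' hBsupp hpackage
          have hEeq : (∑ p' ∈ pairsF r, (t' p'.1 p'.2 - 1)) = E' := by
            have hsplit : ∑ p' ∈ (pairsF r).erase p, (t' p'.1 p'.2 - 1) + (t' p.1 p.2 - 1)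
                = ∑ p' ∈ pairsF r, (t' p'.1 p'.2 - 1) :=
              Finset.sum_erase_add (pairsF r) (fun p' => t' p'.1 p'.2 - 1) hp
            have hsplit2 : ∑ p' ∈ (pairsF r).erase p, (t p'.1 p'.2 - 1) + (t p.1 p.2 - 1)
                = ∑ p' ∈ pairsF r, (t p'.1 p'.2 - 1) :=
              Finset.sum_erase_add (pairsF r) (fun p' => t p'.1 p'.2 - 1) hp
            have hsame : ∑ p' ∈ (pairsF r).erase p, (t' p'.1 p'.2 - 1) =
                ∑ p' ∈ (pairsF r).erase p, (t p'.1 p'.2 - 1) := by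
              apply Finset.sum_congr rfl
              intro p' hp'
              have hp'mem : p' ∈ pairsF r := Finset.mem_of_mem_erase hp'
              have hp'ne : p' ≠ p := (Finset.mem_erase.mp hp').1
              have hp'lt : p'.1 < p'.2 := (Finset.mem_filter.mp hp'mem).2
              have hcnot : ¬ ((p'.1 = p.1 ∧ p'.2 = p.2) ∨ (p'.1 = p.2 ∧ p'.2 = p.1)) := by
                rintro (⟨h1, h2⟩ | ⟨h1, h2⟩)
                · exact hp'ne (Prod.ext h1 h2)
                · rw [h1, h2] at hp'lt
                  exact absurd hplt (by omega)
              rw [ht']; simp only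
              rw [if_neg hcnot]
            have hatp : t' p.1 p.2 - 1 = (t p.1 p.2 - 1) - 1 := by
              rw [ht']
              simp
            omega
          rw [hEeq] at hIH
          exact hIH
      have hsum : ∑ p ∈ pairsF r, (Bp p).card ≤ (r*r) * ((r*r) * (m+1)) ^ E' := by
        calc ∑ p ∈ pairsF r, (Bp p).card
            ≤ ∑ _p ∈ pairsF r, ((r*r) * (m+1)) ^ E' := Finset.sum_le_sum hBbound
          _ = (pairsF r).card * ((r*r) * (m+1)) ^ E' := by
              rw [Finset.sum_const, smul_eq_mul]
          _ ≤ (r*r) * ((r*r) * (m+1)) ^ E' := by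
              apply Nat.mul_le_mul_right
              calc (pairsF r).card ≤ (Finset.univ : Finset (Fin r × Fin r)).card :=
                    Finset.card_filter_le _ _
                _ = r * r := by rw [Finset.card_univ]; simp
      have hfinal : ((r*r) * (m+1)) ^ (E' + 1) + (r*r) * ((r*r) * (m+1)) ^ E' ≤
          ((r*r) * (m + 1 + 1)) ^ (E' + 1) := by
        have hbase : (r*r) * (m + 1 + 1) = (r*r) * (m+1) + (r*r) := by ring
        rw [hbase]
        calc ((r*r) * (m+1)) ^ (E' + 1) + (r*r) * ((r*r) * (m+1)) ^ E'
            = ((r*r) * (m+1)) ^ E' * ((r*r) * (m+1) + (r*r)) := by ring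
          _ ≤ ((r*r) * (m+1) + (r*r)) ^ E' * ((r*r) * (m+1) + (r*r)) := by
              apply Nat.mul_le_mul_right
              apply Nat.pow_le_pow_left
              omega
          _ = ((r*r) * (m+1) + (r*r)) ^ (E' + 1) := by rw [pow_succ]
      rw [hE'] at hd ⊢
      omega

lemma chainLem {κ : Type} [Fintype κ] [DecidableEq κ] (hc : 2 ≤ Fintype.card κ)
    (χ : ℕ → ℕ → κ) :
    ∀ (L : ℕ) (A : Finset ℕ), Fintype.card κ ^ L ≤ A.card →
    ∃ x : Fin L → ℕ, (∀ u v : Fin L, u < v → x u < x v) ∧ (∀ v, x v ∈ A) ∧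
      ∃ γ : Fin L → κ, ∀ u v : Fin L, u < v → χ (x u) (x v) = γ u := by
  intro L
  induction L with
  | zero =>
    intro A hA
    exact ⟨Fin.elim0, fun u => u.elim0, fun v => v.elim0, Fin.elim0, fun u => u.elim0⟩
  | succ L IH =>
    intro A hA
    have hcpos : 0 < Fintype.card κ := by omega
    have hA0 : A.Nonempty := by
      apply Finset.card_pos.mp
      calc 0 < Fintype.card κ ^ (L+1) := Nat.pow_pos hcpos
        _ ≤ A.card := hA
    set x0 := A.min' hA0 with hx0
    set B := A.erase x0 with hB
    have hBcard : A.card - 1 ≤ B.card := by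
      rw [hB, Finset.card_erase_of_mem (A.min'_mem hA0)]
    obtain ⟨γ0, hγ0⟩ : ∃ γ0 : κ, Fintype.card κ ^ L ≤ (B.filter fun y => χ x0 y = γ0).card := by
      by_contra hcon
      push_neg at hcon
      have hsum : B.card = ∑ γ0 ∈ Finset.univ, (B.filter fun y => χ x0 y = γ0).card :=
        Finset.card_eq_sum_card_fiberwise (fun x _ => Finset.mem_univ _)
      have hle : B.card ≤ Fintype.card κ * (Fintype.card κ ^ L - 1) := by
        rw [hsum]
        calc ∑ γ0 ∈ Finset.univ, (B.filter fun y => χ x0 y = γ0).card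
            ≤ ∑ _γ0 ∈ (Finset.univ : Finset κ), (Fintype.card κ ^ L - 1) := by
              apply Finset.sum_le_sum
              intro γ0 _
              have := hcon γ0
              omega
          _ = Fintype.card κ * (Fintype.card κ ^ L - 1) := by
              rw [Finset.sum_const, Finset.card_univ, smul_eq_mul]
      have hpow : 0 < Fintype.card κ ^ L := Nat.pow_pos hcpos
      have h1 : Fintype.card κ ^ (L+1) = Fintype.card κ * Fintype.card κ ^ L := by
        rw [pow_succ, mul_comm]
      have h2 : Fintype.card κ * (Fintype.card κ ^ L - 1) + Fintype.card κ =
          Fintype.card κ * Fintype.card κ ^ L := by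
        rw [← Nat.mul_succ]
        congr 1
        omega
      omega
    obtain ⟨x, hmono, hmem, γ, hγ⟩ := IH _ hγ0
    have hmemB : ∀ v, x v ∈ B := by
      intro v
      exact Finset.mem_of_mem_filter _ (hmem v)
    have hx0lt : ∀ v, x0 < x v := by
      intro v
      have h1 := Finset.mem_erase.mp (hmemB v)
      exact lt_of_le_of_ne (A.min'_le _ h1.2) (Ne.symm h1.1)
    refine ⟨Fin.cons x0 x, ?_, ?_, Fin.cons γ0 γ, ?_⟩
    · intro u v huv
      induction v using Fin.cases with
      | zero => exact absurd huv (Fin.not_lt_zero u)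
      | succ v' =>
        induction u using Fin.cases with
        | zero => simpa using hx0lt v'
        | succ u' =>
          simp only [Fin.cons_succ]
          exact hmono _ _ (by exact_mod_cast Fin.succ_lt_succ_iff.mp huv)
    · intro v
      induction v using Fin.cases with
      | zero => simpa using A.min'_mem hA0
      | succ v' =>
        simp only [Fin.cons_succ]
        exact Finset.mem_of_mem_erase (hmemB v')
    · intro u v huv
      induction v using Fin.cases with
      | zero => exact absurd huv (Fin.not_lt_zero u)
      | succ v' =>
        induction u using Fin.cases with
        | zero =>
          simp only [Fin.cons_succ, Fin.cons_zero]
          exact (Finset.mem_filter.mp (hmem v')).2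
        | succ u' =>
          simp only [Fin.cons_succ]
          exact hγ _ _ (by exact_mod_cast Fin.succ_lt_succ_iff.mp huv)

/-- Multicolour Ramsey with explicit (weak) bound. -/
lemma ramseyLem {κ : Type} [Fintype κ] [DecidableEq κ] (hc : 2 ≤ Fintype.card κ)
    (χ : ℕ → ℕ → κ) (K : ℕ) (A : Finset ℕ)
    (hA : Fintype.card κ ^ (Fintype.card κ * K + 1) ≤ A.card) :
    ∃ x : Fin K → ℕ, (∀ u v : Fin K, u < v → x u < x v) ∧ (∀ v, x v ∈ A) ∧
      ∃ γ0 : κ, ∀ u v : Fin K, u < v → χ (x u) (x v) = γ0 := by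
  classical
  obtain ⟨x, hmono, hmem, γ, hγ⟩ := chainLem hc χ (Fintype.card κ * K + 1) A hA
  have hL : Fintype.card κ * K + 1 = Fintype.card κ * K + 1 := rfl
  obtain ⟨γ0, hγ0⟩ : ∃ γ0 : κ, K ≤ ((Finset.univ : Finset (Fin (Fintype.card κ * K + 1))).filter fun v => γ v = γ0).card := by
    by_contra hcon
    push_neg at hcon
    have hsum : (Finset.univ : Finset (Fin (Fintype.card κ * K + 1))).card =
        ∑ γ0 ∈ Finset.univ, ((Finset.univ : Finset (Fin (Fintype.card κ * K + 1))).filter fun v => γ v = γ0).card :=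
      Finset.card_eq_sum_card_fiberwise (fun x _ => Finset.mem_univ _)
    have hK1 : 1 ≤ K := by
      by_contra hK
      have hK0 : K = 0 := by omega
      obtain ⟨c⟩ := Fintype.card_pos_iff.mp (by omega : 0 < Fintype.card κ)
      have := hcon c
      omega
    have hle : (Finset.univ : Finset (Fin (Fintype.card κ * K + 1))).card ≤ Fintype.card κ * (K - 1) := by
      rw [hsum]
      calc ∑ γ0 ∈ (Finset.univ : Finset κ), ((Finset.univ : Finset (Fin (Fintype.card κ * K + 1))).filter fun v => γ v = γ0).card
          ≤ ∑ _γ0 ∈ (Finset.univ : Finset κ), (K - 1) := by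
            apply Finset.sum_le_sum
            intro γ0 _
            have := hcon γ0
            omega
        _ = Fintype.card κ * (K - 1) := by
            rw [Finset.sum_const, Finset.card_univ, smul_eq_mul]
    rw [Finset.card_univ, Fintype.card_fin] at hle
    have : Fintype.card κ * (K-1) + Fintype.card κ = Fintype.card κ * K := by
      rw [← Nat.mul_succ]
      congr 1
      omega
    omega
  obtain ⟨S, hSsub, hScard⟩ := Finset.exists_subset_card_eq hγ0
  have e := S.orderIsoOfFin hScard
  have he : ∀ u v : Fin K, u < v → ((e u : Fin (Fintype.card κ * K + 1)) < (e v : Fin (Fintype.card κ * K + 1))) := by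
    intro u v huv
    exact_mod_cast e.strictMono huv
  refine ⟨fun v => x (e v), ?_, ?_, γ0, ?_⟩
  · intro u v huv
    exact hmono _ _ (he u v huv)
  · intro v
    exact hmem _
  · intro u v huv
    have h1 : χ (x (e u)) (x (e v)) = γ (e u) := hγ _ _ (he u v huv)
    have h2 : ((e u : {x // x ∈ S}) : Fin (Fintype.card κ * K + 1)) ∈ S := (e u).2
    have h3 := hSsub h2
    exact h1.trans (Finset.mem_filter.mp h3).2

/-- The twin lemma: many rows carrying an `(a,b)`-twin force a pattern. -/
lemma twinLem (r ℓ : ℕ) (hr : 2 ≤ r) (hℓ : 1 ≤ ℓ)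
    (s : Finset ℕ) (V : Finset (ℕ → Fin r)) (a b : Fin r) (hab : a ≠ b)
    (R : Finset ℕ) (hRs : R ⊆ s) (F G : ℕ → ℕ → Fin r)
    (hF : ∀ i ∈ R, F i ∈ V) (hG : ∀ i ∈ R, G i ∈ V)
    (hFa : ∀ i ∈ R, F i i = a) (hGb : ∀ i ∈ R, G i i = b)
    (hagree : ∀ i ∈ R, ∀ j, j ≠ i → F i j = G i j)
    (hcard : (r*r) ^ ((r*r) * (2*ℓ) + 1) ≤ R.card) :
    ∃ x y : Fin r, x ≠ y ∧ (hasT r ℓ x y s V ∨ hasI r ℓ x y s V) := by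
  classical
  have hcardκ : Fintype.card (Fin r × Fin r) = r * r := by simp
  have hc2 : 2 ≤ Fintype.card (Fin r × Fin r) := by rw [hcardκ]; nlinarith
  obtain ⟨x, hmono, hmem, ⟨c1, c2⟩, hmc⟩ := ramseyLem hc2
    (fun u v => ((F v u, F u v) : Fin r × Fin r)) (2*ℓ) R
    (by rw [hcardκ]; exact hcard)
  have hcol1 : ∀ u v : Fin (2*ℓ), u < v → F (x v) (x u) = c1 := by
    intro u v huv
    have := hmc u v huv
    exact (Prod.mk.injEq _ _ _ _).mp this |>.1
  have hcol2 : ∀ u v : Fin (2*ℓ), u < v → F (x u) (x v) = c2 := by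
    intro u v huv
    have := hmc u v huv
    exact (Prod.mk.injEq _ _ _ _).mp this |>.2
  have hxne : ∀ u v : Fin (2*ℓ), u ≠ v → x u ≠ x v := by
    intro u v huv
    rcases lt_or_gt_of_ne huv with h | h
    · exact ne_of_lt (hmono _ _ h)
    · exact (ne_of_lt (hmono _ _ h)).symm
  have hmemR : ∀ v : Fin (2*ℓ), x v ∈ R := hmem
  have hℓ2 : ℓ ≤ 2*ℓ := by omega
  by_cases hcc : c1 = c2
  · -- constant colour c
    by_cases hca : c1 = a
    · -- use the G columns : I_ℓ(b, a)
      refine ⟨b, a, hab.symm, Or.inr ?_⟩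
      refine ⟨fun i => x (Fin.castLE hℓ2 i), fun j => G (x (Fin.castLE hℓ2 j)),
        fun i => hRs (hmemR _), ?_, ?_, fun j => hG _ (hmemR _), ?_⟩
      · intro i i' hii
        have h1 : Fin.castLE hℓ2 i = Fin.castLE hℓ2 i' := by
          by_contra hcon
          exact hxne _ _ hcon hii
        exact Fin.castLE_injective hℓ2 h1
      · intro j j' hjj
        by_contra hjj'
        have hne : Fin.castLE hℓ2 j ≠ Fin.castLE hℓ2 j' :=
          fun h => hjj' (Fin.castLE_injective hℓ2 h)
        have h1 : G (x (Fin.castLE hℓ2 j)) (x (Fin.castLE hℓ2 j)) = b := hGb _ (hmemR _)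
        have h2 : G (x (Fin.castLE hℓ2 j')) (x (Fin.castLE hℓ2 j)) = a := by
          have hne2 : x (Fin.castLE hℓ2 j) ≠ x (Fin.castLE hℓ2 j') := hxne _ _ hne
          rw [← hagree _ (hmemR _) _ hne2]
          rcases lt_or_gt_of_ne hne with h | h
          · rw [← hca]; exact hcol1 _ _ h
          · rw [← hca, hcc]; exact hcol2 _ _ h
        have hjj2 : G (x (Fin.castLE hℓ2 j)) (x (Fin.castLE hℓ2 j))
            = G (x (Fin.castLE hℓ2 j')) (x (Fin.castLE hℓ2 j)) := congrFun hjj _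
        rw [h1, h2] at hjj2
        exact hab hjj2.symm
      · intro i j
        show G (x (Fin.castLE hℓ2 j)) (x (Fin.castLE hℓ2 i)) = if i = j then b else a
        by_cases hij : i = j
        · subst hij
          rw [if_pos rfl]
          exact hGb _ (hmemR _)
        · rw [if_neg hij]
          have hne : Fin.castLE hℓ2 j ≠ Fin.castLE hℓ2 i :=
            fun h => hij (Fin.castLE_injective hℓ2 h).symm
          rw [← hagree (x (Fin.castLE hℓ2 j)) (hmemR _) (x (Fin.castLE hℓ2 i))
            (hxne _ _ hne.symm)]
          rcases lt_or_gt_of_ne hne.symm with h | h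
          · rw [← hca]; exact hcol1 _ _ h
          · rw [← hca, hcc]; exact hcol2 _ _ h
    · -- use the F columns : I_ℓ(a, c1)
      refine ⟨a, c1, fun h => hca h.symm, Or.inr ?_⟩
      refine ⟨fun i => x (Fin.castLE hℓ2 i), fun j => F (x (Fin.castLE hℓ2 j)),
        fun i => hRs (hmemR _), ?_, ?_, fun j => hF _ (hmemR _), ?_⟩
      · intro i i' hii
        have h1 : Fin.castLE hℓ2 i = Fin.castLE hℓ2 i' := by
          by_contra hcon
          exact hxne _ _ hcon hii
        exact Fin.castLE_injective hℓ2 h1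
      · intro j j' hjj
        by_contra hjj'
        have hne : Fin.castLE hℓ2 j ≠ Fin.castLE hℓ2 j' :=
          fun h => hjj' (Fin.castLE_injective hℓ2 h)
        have h1 : F (x (Fin.castLE hℓ2 j)) (x (Fin.castLE hℓ2 j)) = a := hFa _ (hmemR _)
        have h2 : F (x (Fin.castLE hℓ2 j')) (x (Fin.castLE hℓ2 j)) = c1 := by
          rcases lt_or_gt_of_ne hne with h | h
          · exact hcol1 _ _ h
          · rw [hcc]; exact hcol2 _ _ h
        have hjj2 : F (x (Fin.castLE hℓ2 j)) (x (Fin.castLE hℓ2 j))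
            = F (x (Fin.castLE hℓ2 j')) (x (Fin.castLE hℓ2 j)) := congrFun hjj _
        rw [h1, h2] at hjj2
        exact hca hjj2.symm
      · intro i j
        show F (x (Fin.castLE hℓ2 j)) (x (Fin.castLE hℓ2 i)) = if i = j then a else c1
        by_cases hij : i = j
        · subst hij
          rw [if_pos rfl]
          exact hFa _ (hmemR _)
        · rw [if_neg hij]
          have hne : Fin.castLE hℓ2 j ≠ Fin.castLE hℓ2 i :=
            fun h => hij (Fin.castLE_injective hℓ2 h).symm
          rcases lt_or_gt_of_ne hne.symm with h | h
          · exact hcol1 _ _ h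
          · rw [hcc]; exact hcol2 _ _ h
  · -- two colours : T_ℓ(c2, c1)
    have hrow : ∀ i : Fin ℓ, (2 * (i : ℕ) : ℕ) < 2*ℓ := by
      intro i; have := i.isLt; omega
    have hcolix : ∀ j : Fin ℓ, (2 * (j : ℕ) + 1 : ℕ) < 2*ℓ := by
      intro j; have := j.isLt; omega
    refine ⟨c2, c1, fun h => hcc h.symm, Or.inl ?_⟩
    refine ⟨fun i => x ⟨2 * (i : ℕ), hrow i⟩, fun j => F (x ⟨2 * (j : ℕ) + 1, hcolix j⟩),
      fun i => hRs (hmemR _), ?_, ?_, fun j => hF _ (hmemR _), ?_⟩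
    · intro i i' hii
      by_contra hii'
      have hne : (⟨2 * (i : ℕ), hrow i⟩ : Fin (2*ℓ)) ≠ ⟨2 * (i' : ℕ), hrow i'⟩ := by
        intro h
        have := congrArg Fin.val h
        simp only at this
        exact hii' (Fin.ext (by omega))
      exact hxne _ _ hne hii
    · intro j j' hjj
      by_contra hjj'
      have hne : (⟨2 * (j : ℕ) + 1, hcolix j⟩ : Fin (2*ℓ)) ≠ ⟨2 * (j' : ℕ) + 1, hcolix j'⟩ := by
        intro h
        have := congrArg Fin.val h
        simp only at this
        exact hjj' (Fin.ext (by omega))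
      rcases lt_or_gt_of_ne hne with h | h
      · have e1 : F (x ⟨2 * (j : ℕ) + 1, hcolix j⟩) (x ⟨2 * (j : ℕ) + 1, hcolix j⟩)
            = F (x ⟨2 * (j' : ℕ) + 1, hcolix j'⟩) (x ⟨2 * (j : ℕ) + 1, hcolix j⟩) :=
          congrFun hjj _
        have e2 : F (x ⟨2 * (j : ℕ) + 1, hcolix j⟩) (x ⟨2 * (j' : ℕ) + 1, hcolix j'⟩)
            = F (x ⟨2 * (j' : ℕ) + 1, hcolix j'⟩) (x ⟨2 * (j' : ℕ) + 1, hcolix j'⟩) :=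
          congrFun hjj _
        rw [hFa _ (hmemR _), hcol1 _ _ h] at e1
        rw [hcol2 _ _ h, hFa _ (hmemR _)] at e2
        exact hcc (e1.symm.trans e2.symm)
      · have e1 : F (x ⟨2 * (j : ℕ) + 1, hcolix j⟩) (x ⟨2 * (j' : ℕ) + 1, hcolix j'⟩)
            = F (x ⟨2 * (j' : ℕ) + 1, hcolix j'⟩) (x ⟨2 * (j' : ℕ) + 1, hcolix j'⟩) :=
          congrFun hjj _
        have e2 : F (x ⟨2 * (j : ℕ) + 1, hcolix j⟩) (x ⟨2 * (j : ℕ) + 1, hcolix j⟩)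
            = F (x ⟨2 * (j' : ℕ) + 1, hcolix j'⟩) (x ⟨2 * (j : ℕ) + 1, hcolix j⟩) :=
          congrFun hjj _
        rw [hcol1 _ _ h, hFa _ (hmemR _)] at e1
        rw [hFa _ (hmemR _), hcol2 _ _ h] at e2
        exact hcc (e1.trans e2)
    · intro i j
      show F (x ⟨2 * (j : ℕ) + 1, hcolix j⟩) (x ⟨2 * (i : ℕ), hrow i⟩)
          = if (j : ℕ) < (i : ℕ) then c2 else c1
      by_cases hij : (j : ℕ) < (i : ℕ)
      · rw [if_pos hij]
        have h : (⟨2 * (j : ℕ) + 1, hcolix j⟩ : Fin (2*ℓ)) < ⟨2 * (i : ℕ), hrow i⟩ := by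
          show (2 * (j : ℕ) + 1) < 2 * (i : ℕ)
          omega
        exact hcol2 _ _ h
      · rw [if_neg hij]
        have h : (⟨2 * (i : ℕ), hrow i⟩ : Fin (2*ℓ)) < ⟨2 * (j : ℕ) + 1, hcolix j⟩ := by
          show (2 * (i : ℕ)) < 2 * (j : ℕ) + 1
          omega
        exact hcol1 _ _ h

lemma arithLem (r ℓ : ℕ) (hr : 2 ≤ r) (hℓ : 1 ≤ ℓ) :
    (2 * ((r*r) * (2*ℓ) + 3)) * (r.choose 2 * ℓ) ≤ 30 * (r.choose 2)^2 * ℓ^2 := by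
  obtain ⟨k, rfl⟩ : ∃ k, r = k + 2 := ⟨r - 2, by omega⟩
  obtain ⟨l, rfl⟩ : ∃ l, ℓ = l + 1 := ⟨ℓ - 1, by omega⟩
  have h2q : 2 * (k+2).choose 2 = (k+2) * (k+1) := by
    rw [Nat.choose_two_right]
    rw [Nat.mul_div_cancel']
    · rfl
    · have : Even ((k+1) * ((k+1)+1)) := Nat.even_mul_succ_self (k+1)
      have h2 : (k+2) - 1 = k + 1 := by omega
      rw [h2, mul_comm]
      exact this.two_dvd
  have hstep : 2 * (((k+2)*(k+2)) * (2*(l+1)) + 3) ≤ 30 * ((k+2).choose 2) * (l+1) := by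
    have h30 : 30 * ((k+2).choose 2) * (l+1) = 15 * (2 * (k+2).choose 2) * (l+1) := by ring
    rw [h30, h2q]
    nlinarith [sq_nonneg k, Nat.zero_le k, Nat.zero_le l]
  calc (2 * (((k+2)*(k+2)) * (2*(l+1)) + 3)) * ((k+2).choose 2 * (l+1))
      ≤ (30 * ((k+2).choose 2) * (l+1)) * ((k+2).choose 2 * (l+1)) :=
        Nat.mul_le_mul_right _ hstep
    _ = 30 * ((k+2).choose 2)^2 * (l+1)^2 := by ring

/-- Main combinatorial lemma: bounded size for families avoiding `𝓣_ℓ(r)`. -/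
lemma mainA (r : ℕ) (hr : 2 ≤ r) (ℓ : ℕ) (hℓ : 1 ≤ ℓ) (z : Fin r) :
    ∀ (m : ℕ) (s : Finset ℕ) (V : Finset (ℕ → Fin r)), s.card = m →
    (∀ f ∈ V, ∀ j ∉ s, f j = z) →
    (∀ a b : Fin r, a ≠ b → ¬ hasT r ℓ a b s V) →
    (∀ a b : Fin r, a ≠ b → ¬ hasI r ℓ a b s V) →
    V.card ≤ r ^ (30 * (r.choose 2)^2 * ℓ^2) := by
  intro m
  induction m using Nat.strong_induction_on with
  | _ m IH =>
    intro s V hm hsupp hT hI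
    classical
    by_cases hnt : ∃ i ∈ s, ∀ f ∈ V, ∀ g ∈ V, (∀ j, j ≠ i → f j = g j) → f = g
    · -- a row with no twins: collapse it and recurse
      obtain ⟨i, hi, hnotwin⟩ := hnt
      have hinj : Set.InjOn (fun f : ℕ → Fin r => Function.update f i z) ↑V := by
        intro f hf g hg hfg
        apply hnotwin f (Finset.mem_coe.mp hf) g (Finset.mem_coe.mp hg)
        intro j hj
        have h1 := congrFun hfg j
        simp only at h1
        rwa [Function.update_of_ne hj, Function.update_of_ne hj] at h1
      have hcardU : (V.image (fun f : ℕ → Fin r => Function.update f i z)).card = V.card :=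
        Finset.card_image_of_injOn hinj
      have hUsupp : ∀ g ∈ V.image (fun f : ℕ → Fin r => Function.update f i z),
          ∀ j ∉ s.erase i, g j = z := by
        intro g hg j hj
        obtain ⟨f, hf, rfl⟩ := Finset.mem_image.mp hg
        by_cases hji : j = i
        · subst hji; simp
        · rw [Function.update_of_ne hji]
          apply hsupp f hf
          intro hjs
          exact hj (Finset.mem_erase.mpr ⟨hji, hjs⟩)
      have hUlift : ∀ g ∈ V.image (fun f : ℕ → Fin r => Function.update f i z),
          ∃ f ∈ V, Function.update f i z = g := by
        intro g hg
        obtain ⟨f, hf, he⟩ := Finset.mem_image.mp hg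
        exact ⟨f, hf, he⟩
      have hmlt : (s.erase i).card < m := by
        rw [Finset.card_erase_of_mem hi]
        have : 1 ≤ s.card := Finset.card_pos.mpr ⟨i, hi⟩
        omega
      have hres := IH (s.erase i).card hmlt (s.erase i)
        (V.image (fun f : ℕ → Fin r => Function.update f i z)) rfl hUsupp
        (fun a b hab hTT => hT a b hab (hasPat_lift _ s i z V _ hUlift hTT))
        (fun a b hab hII => hI a b hab (hasPat_lift _ s i z V _ hUlift hII))
      rw [hcardU] at hres
      exact hres
    · -- every row has a twin
      push_neg at hnt
      have hpk : ∀ i ∈ s, ∃ p : (ℕ → Fin r) × (ℕ → Fin r),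
          p.1 ∈ V ∧ p.2 ∈ V ∧ (∀ j, j ≠ i → p.1 j = p.2 j) ∧ p.1 ≠ p.2 := by
        intro i hi
        obtain ⟨f, hf, g, hg, hagr, hne⟩ := hnt i hi
        exact ⟨(f, g), hf, hg, hagr, hne⟩
      set pk : ℕ → ((ℕ → Fin r) × (ℕ → Fin r)) := fun i =>
        if h : ∃ p : (ℕ → Fin r) × (ℕ → Fin r),
            p.1 ∈ V ∧ p.2 ∈ V ∧ (∀ j, j ≠ i → p.1 j = p.2 j) ∧ p.1 ≠ p.2
        then h.choose else (fun _ => z, fun _ => z) with hpkdef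
      have hpks : ∀ i ∈ s, (pk i).1 ∈ V ∧ (pk i).2 ∈ V ∧
          (∀ j, j ≠ i → (pk i).1 j = (pk i).2 j) ∧ (pk i).1 ≠ (pk i).2 := by
        intro i hi
        have h := hpk i hi
        rw [hpkdef]
        simp only [dif_pos h]
        exact h.choose_spec
      set lab : ℕ → Fin r × Fin r := fun i => ((pk i).1 i, (pk i).2 i) with hlabdef
      set N : ℕ := (r*r) ^ ((r*r) * (2*ℓ) + 1) with hNdef
      by_cases hbig : ∃ p0 : Fin r × Fin r, N ≤ (s.filter fun i => lab i = p0).card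
      · exfalso
        obtain ⟨p0, hp0⟩ := hbig
        have hNpos : 0 < N := by
          rw [hNdef]
          exact Nat.pow_pos (by nlinarith)
        have hRne : (s.filter fun i => lab i = p0).Nonempty := by
          apply Finset.card_pos.mp
          omega
        obtain ⟨i0, hi0⟩ := hRne
        have hi0s : i0 ∈ s := Finset.mem_of_mem_filter _ hi0
        have hi0lab : lab i0 = p0 := (Finset.mem_filter.mp hi0).2
        have hRmem : ∀ i ∈ (s.filter fun i => lab i = p0), i ∈ s ∧ lab i = p0 := by
          intro i hi
          exact ⟨Finset.mem_of_mem_filter _ hi, (Finset.mem_filter.mp hi).2⟩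
        have hne : p0.1 ≠ p0.2 := by
          obtain ⟨h1, h2, h3, h4⟩ := hpks i0 hi0s
          intro hcon
          apply h4
          funext j
          by_cases hji : j = i0
          · subst hji
            have e1 : (pk j).1 j = p0.1 := congrArg Prod.fst hi0lab
            have e2 : (pk j).2 j = p0.2 := congrArg Prod.snd hi0lab
            rw [e1, e2, hcon]
          · exact h3 j hji
        have hconc := twinLem r ℓ hr hℓ s V p0.1 p0.2 hne
          (s.filter fun i => lab i = p0) (Finset.filter_subset _ _)
          (fun i => (pk i).1) (fun i => (pk i).2)
          (fun i hi => (hpks i (hRmem i hi).1).1)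
          (fun i hi => (hpks i (hRmem i hi).1).2.1)
          (fun i hi => congrArg Prod.fst (hRmem i hi).2)
          (fun i hi => congrArg Prod.snd (hRmem i hi).2)
          (fun i hi j hj => (hpks i (hRmem i hi).1).2.2.1 j hj)
          (by rw [← hNdef]; exact hp0)
        obtain ⟨x, y, hxy, hTI⟩ := hconc
        rcases hTI with h | h
        · exact hT x y hxy h
        · exact hI x y hxy h
      · push_neg at hbig
        have hmN : m ≤ (r*r) * (N - 1) := by
          have hfib : s.card = ∑ p0 ∈ (Finset.univ : Finset (Fin r × Fin r)),
              (s.filter fun i => lab i = p0).card :=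
            Finset.card_eq_sum_card_fiberwise (fun x _ => Finset.mem_univ _)
          have hle : ∑ p0 ∈ (Finset.univ : Finset (Fin r × Fin r)),
              (s.filter fun i => lab i = p0).card ≤
              ∑ _p0 ∈ (Finset.univ : Finset (Fin r × Fin r)), (N - 1) := by
            apply Finset.sum_le_sum
            intro p0 _
            have := hbig p0
            omega
          rw [Finset.sum_const, Finset.card_univ, smul_eq_mul] at hle
          have hcardprod : Fintype.card (Fin r × Fin r) = r * r := by simp
          rw [hcardprod] at hle
          omega
        -- apply lemA with constant parameters ℓ
        have hle1 : V.card ≤ ((r*r) * (m + 1)) ^ (∑ p ∈ pairsF r, (ℓ - 1)) :=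
          lemA r hr z m s (fun _ _ => ℓ) V hm hsupp
            (fun a b hab => ⟨hℓ, rfl, hT a b hab⟩)
        have hEsum : (∑ p ∈ pairsF r, (ℓ - 1)) = (pairsF r).card * (ℓ - 1) := by
          rw [Finset.sum_const, smul_eq_mul]
        have hX : (r*r) * (m + 1) ≤ r ^ (2 * ((r*r) * (2*ℓ) + 3)) := by
          have h1 : m + 1 ≤ (r*r) * N := by
            have hNpos : 0 < N := by
              rw [hNdef]
              exact Nat.pow_pos (by nlinarith)
            have h2 : (r*r) * (N - 1) + (r*r) = (r*r) * N := by
              rw [← Nat.mul_succ]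
              congr 1
              omega
            nlinarith
          calc (r*r) * (m + 1) ≤ (r*r) * ((r*r) * N) := Nat.mul_le_mul_left _ h1
            _ = (r*r) ^ (((r*r) * (2*ℓ) + 1) + 2) := by
                rw [hNdef]
                ring
            _ = (r^2) ^ ((r*r) * (2*ℓ) + 3) := by
                rw [pow_two]
            _ = r ^ (2 * ((r*r) * (2*ℓ) + 3)) := by rw [← pow_mul]
        have hrpos : 1 ≤ r := by omega
        calc V.card ≤ ((r*r) * (m + 1)) ^ (∑ p ∈ pairsF r, (ℓ - 1)) := hle1
          _ ≤ (r ^ (2 * ((r*r) * (2*ℓ) + 3))) ^ (∑ p ∈ pairsF r, (ℓ - 1)) :=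
              Nat.pow_le_pow_left hX _
          _ = r ^ (2 * ((r*r) * (2*ℓ) + 3) * ((pairsF r).card * (ℓ - 1))) := by
              rw [hEsum, ← pow_mul]
          _ ≤ r ^ (2 * ((r*r) * (2*ℓ) + 3) * (r.choose 2 * ℓ)) := by
              apply Nat.pow_le_pow_right hrpos
              apply Nat.mul_le_mul_left
              exact Nat.mul_le_mul (pairsF_card_le r) (by omega)
          _ ≤ r ^ (30 * (r.choose 2)^2 * ℓ^2) := by
              apply Nat.pow_le_pow_right hrpos
              exact arithLem r ℓ hr hℓ

end AnsteeLuAux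


/-- For every `r ≥ 2`, with the constant
`c_r = 30·(r choose 2)²·log₂ r` (so that `2^{c_r·ℓ²} = r^{30·(r choose 2)²·ℓ²}`),
for every `ℓ ≥ 1` and `m ≥ 1`,
`forb(m, r, 𝓣_ℓ(r)) ≤ 2^{c_r·ℓ²} = r^{30·(r choose 2)²·ℓ²}`. -/
theorem forb_TFam_le (r : ℕ) (hr : 2 ≤ r) (ℓ : ℕ) (hℓ : 1 ≤ ℓ) (m : ℕ) (hm : 1 ≤ m) :
    forb m r (TFam ℓ r) ≤ r ^ (30 * (r.choose 2) ^ 2 * ℓ ^ 2) := by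
  classical
  have hz : (0:ℕ) < r := by omega
  apply csSup_le'
  rintro n ⟨A, hS, hAv⟩
  set z : Fin r := ⟨0, hz⟩ with hzdef
  set colF : Fin n → ℕ → Fin r := fun j x => if h : x < m then A ⟨x, h⟩ j else z with hcolF
  have hcolFval : ∀ (j : Fin n) (i : Fin m), colF j (i : ℕ) = A i j := by
    intro j i
    show (if h : (i:ℕ) < m then A ⟨(i:ℕ), h⟩ j else z) = A i j
    rw [dif_pos i.isLt]
  have hinj : Function.Injective colF := by
    intro j j' hjj
    apply hS
    funext i
    have h1 := congrFun hjj (i : ℕ)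
    rw [hcolFval, hcolFval] at h1
    exact h1
  have hcardV : (Finset.univ.image colF).card = n := by
    rw [Finset.card_image_of_injective _ hinj, Finset.card_univ, Fintype.card_fin]
  have hsupp : ∀ f ∈ Finset.univ.image colF, ∀ x ∉ Finset.range m, f x = z := by
    intro f hf x hx
    obtain ⟨j, _, rfl⟩ := Finset.mem_image.mp hf
    have hxm : ¬ x < m := fun h => hx (Finset.mem_range.mpr h)
    show (if h : x < m then A ⟨x, h⟩ j else z) = z
    rw [dif_neg hxm]
  have hgetC : ∀ (k : ℕ) (σ : Fin k → ℕ → Fin r),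
      (∀ j, σ j ∈ Finset.univ.image colF) → ∃ C : Fin k → Fin n, ∀ j, colF (C j) = σ j := by
    intro k σ hσV
    have hch : ∀ j : Fin k, ∃ c : Fin n, colF c = σ j := by
      intro j
      obtain ⟨c, _, he⟩ := Finset.mem_image.mp (hσV j)
      exact ⟨c, he⟩
    choose C hC using hch
    exact ⟨C, hC⟩
  have hT : ∀ a b : Fin r, a ≠ b → ¬ hasT r ℓ a b (Finset.range m) (Finset.univ.image colF) := by
    rintro a b hab ⟨ρ, σ, hρs, hρ, hσ, hσV, hval⟩
    obtain ⟨C, hC⟩ := hgetC ℓ σ hσV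
    apply hAv ⟨ℓ, ℓ, Tmat ℓ r a b⟩ ⟨a, b, hab, Or.inr rfl⟩
    refine ⟨fun i => ⟨ρ i, Finset.mem_range.mp (hρs i)⟩, C, ?_, ?_, ?_⟩
    · intro i i' hii
      apply hρ
      exact congrArg Fin.val hii
    · intro j j' hjj
      apply hσ
      rw [← hC, ← hC, hjj]
    · intro i j
      have h1 : colF (C j) (ρ i) = σ j (ρ i) := by rw [hC]
      have h2 : colF (C j) (ρ i) = A ⟨ρ i, Finset.mem_range.mp (hρs i)⟩ (C j) := by
        show (if h : ρ i < m then A ⟨ρ i, h⟩ (C j) else z) = _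
        rw [dif_pos (Finset.mem_range.mp (hρs i))]
      rw [← h2, h1, hval]
      rfl
  have hI : ∀ a b : Fin r, a ≠ b → ¬ hasI r ℓ a b (Finset.range m) (Finset.univ.image colF) := by
    rintro a b hab ⟨ρ, σ, hρs, hρ, hσ, hσV, hval⟩
    obtain ⟨C, hC⟩ := hgetC ℓ σ hσV
    apply hAv ⟨ℓ, ℓ, Imat ℓ r a b⟩ ⟨a, b, hab, Or.inl rfl⟩
    refine ⟨fun i => ⟨ρ i, Finset.mem_range.mp (hρs i)⟩, C, ?_, ?_, ?_⟩
    · intro i i' hii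
      apply hρ
      exact congrArg Fin.val hii
    · intro j j' hjj
      apply hσ
      rw [← hC, ← hC, hjj]
    · intro i j
      have h1 : colF (C j) (ρ i) = σ j (ρ i) := by rw [hC]
      have h2 : colF (C j) (ρ i) = A ⟨ρ i, Finset.mem_range.mp (hρs i)⟩ (C j) := by
        show (if h : ρ i < m then A ⟨ρ i, h⟩ (C j) else z) = _
        rw [dif_pos (Finset.mem_range.mp (hρs i))]
      rw [← h2, h1, hval]
      rfl
  have hmain := mainA r hr ℓ hℓ z (Finset.range m).card (Finset.range m)
    (Finset.univ.image colF) rfl hsupp hT hI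
  calc n = (Finset.univ.image colF).card := hcardV.symm
    _ ≤ r ^ (30 * (r.choose 2)^2 * ℓ^2) := hmain
end

section
/- For every ℓ ≥ 2 and every m ≥ 1, forb(m, 2, 𝓣_ℓ(2)) < 6^{6ℓ(ℓ−1)}, and consequently forb(m, {I_ℓ, I_ℓ^c, T_ℓ}) ≤ forb(m, 2, 𝓣_{ℓ+1}(2)) < 6^{6ℓ(ℓ+1)}. -/
namespace AL

open Classical

abbrev Col := ℕ → Fin 2

noncomputable instance : DecidableEq Col := Classical.decEq _

/-- update a column at one row -/
def upd (c : Col) (x : ℕ) (v : Fin 2) : Col := fun y => if y = x then v else c y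

def flp (x : ℕ) (c : Col) : Col := upd c x (1 - c x)

@[simp] lemma upd_same (c : Col) (x : ℕ) (v : Fin 2) : upd c x v x = v := by simp [upd]

@[simp] lemma upd_other (c : Col) (x : ℕ) (v : Fin 2) {y : ℕ} (h : y ≠ x) :
    upd c x v y = c y := by simp [upd, h]

lemma fin2_cases (v : Fin 2) : v = 0 ∨ v = 1 := by omega

lemma fin2_one_sub_ne (v : Fin 2) : 1 - v ≠ v := by
  rcases fin2_cases v with h | h <;> simp [h]

@[simp] lemma flp_same (x : ℕ) (c : Col) : flp x c x = 1 - c x := by simp [flp]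

@[simp] lemma flp_other (x : ℕ) (c : Col) {y : ℕ} (h : y ≠ x) : flp x c y = c y := by
  simp [flp, h]

lemma flp_ne (x : ℕ) (c : Col) : flp x c ≠ c := by
  intro h
  have := congrFun h x
  simp at this
  exact fin2_one_sub_ne _ this

lemma flp_flp (x : ℕ) (c : Col) : flp x (flp x c) = c := by
  funext y
  by_cases h : y = x
  · subst h
    rcases fin2_cases (c y) with h | h <;> simp [h]
  · simp [h]

/-- configuration containment in a column family -/
def Cfg (F : Finset Col) {k l : ℕ} (M : Matrix (Fin k) (Fin l) (Fin 2)) : Prop :=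
  ∃ r : Fin k → ℕ, ∃ c : Fin l → Col, Function.Injective r ∧ Function.Injective c ∧
    (∀ j, c j ∈ F) ∧ ∀ i j, c j (r i) = M i j

/-- enriched identity: `[I_k(a,b) | b-column]`, k rows, k+1 columns -/
def IE (k : ℕ) (a b : Fin 2) : Matrix (Fin k) (Fin (k+1)) (Fin 2) :=
  fun i j => if (j : ℕ) = k then b else if (i : ℕ) = (j : ℕ) then a else b

/-- enriched triangle: `[a-column | T_k(a,b)]`, k rows, k+1 columns -/
def TE (k : ℕ) (a b : Fin 2) : Matrix (Fin k) (Fin (k+1)) (Fin 2) :=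
  fun i j => if (j : ℕ) = 0 then a else if (j : ℕ) ≤ (i : ℕ) then a else b

/-- avoidance of all four enriched configurations -/
def AvoidE (ℓ : ℕ) (F : Finset Col) : Prop :=
  ∀ a b : Fin 2, a ≠ b → ¬ Cfg F (IE ℓ a b) ∧ ¬ Cfg F (TE ℓ a b)

/-- every row of IE contains the value a and the value b -/
lemma IE_row_vals {k : ℕ} (a b : Fin 2) (i : Fin k) :
    (∃ j, IE k a b i j = a) ∧ (∃ j, IE k a b i j = b) := by
  constructor
  · refine ⟨⟨(i : ℕ), by omega⟩, ?_⟩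
    simp only [IE]
    rw [if_neg (by simpa using i.isLt.ne), if_pos (by simp)]
  · refine ⟨⟨k, by omega⟩, ?_⟩
    simp only [IE]
    rw [if_pos (by simp)]

lemma TE_row_vals {k : ℕ} (a b : Fin 2) (i : Fin k) :
    (∃ j, TE k a b i j = a) ∧ (∃ j, TE k a b i j = b) := by
  constructor
  · exact ⟨⟨0, by omega⟩, by simp [TE]⟩
  · refine ⟨⟨k, by omega⟩, ?_⟩
    simp only [TE]
    have hk : k ≠ 0 := by rcases i with ⟨iv, hi⟩; omega
    rw [if_neg (by simpa using hk), if_neg (by simp)]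

section Ramsey

variable (col : ℕ → ℕ → Fin 2 × Fin 2)

/-- pivot chain: from a set of size `5^k` extract `k` pivots, each colored
uniformly towards all later pivots. -/
lemma pivots : ∀ (k : ℕ) (A : Finset ℕ), 5 ^ k ≤ A.card →
    ∃ (v : Fin k → ℕ) (cs : Fin k → Fin 2 × Fin 2),
      (∀ i, v i ∈ A) ∧ StrictMono v ∧
      (∀ i j : Fin k, i < j → col (v i) (v j) = cs i) := by
  intro k
  induction k with
  | zero =>
      intro A hA
      exact ⟨Fin.elim0, Fin.elim0, fun i => i.elim0, fun i j h => i.elim0, fun i => i.elim0⟩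
  | succ k ih =>
      intro A hA
      have hApos : 0 < A.card := lt_of_lt_of_le (by positivity) hA
      have hne : A.Nonempty := Finset.card_pos.mp hApos
      set x := A.min' hne with hx
      have hxA : x ∈ A := A.min'_mem hne
      have hsum : ∑ d : Fin 2 × Fin 2,
          ((A.erase x).filter (fun y => col x y = d)).card = (A.erase x).card := by
        rw [← Finset.card_eq_sum_card_fiberwise (f := fun y => col x y)
          (t := Finset.univ)]
        intro y _; exact Finset.mem_univ _
      have hcard' : 4 * 5 ^ k ≤ (A.erase x).card := by
        have := Finset.card_erase_of_mem hxA
        have h5 : 5 ^ (k+1) = 5 * 5 ^ k := by ring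
        omega
      have hex : ∃ d : Fin 2 × Fin 2,
          5 ^ k ≤ ((A.erase x).filter (fun y => col x y = d)).card := by
        by_contra hcon
        push_neg at hcon
        have hle : ∑ d : Fin 2 × Fin 2,
            ((A.erase x).filter (fun y => col x y = d)).card
            ≤ ∑ _d : Fin 2 × Fin 2, (5 ^ k - 1) :=
          Finset.sum_le_sum (fun d _ => by have := hcon d; omega)
        simp only [Finset.sum_const, Finset.card_univ, smul_eq_mul,
          Fintype.card_prod, Fintype.card_fin] at hle
        rw [hsum] at hle
        have hpos : 1 ≤ 5 ^ k := Nat.one_le_pow _ _ (by norm_num)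
        omega
      obtain ⟨d, hd⟩ := hex
      obtain ⟨v', cs', hv'A, hv'mono, hv'col⟩ := ih _ hd
      have hclass : ∀ i, v' i ∈ (A.erase x).filter (fun y => col x y = d) := hv'A
      have hmem : ∀ i, v' i ∈ A := by
        intro i
        have := hclass i
        simp only [Finset.mem_filter, Finset.mem_erase] at this
        exact this.1.2
      have hxlt : ∀ i, x < v' i := by
        intro i
        have := hclass i
        simp only [Finset.mem_filter, Finset.mem_erase] at this
        exact lt_of_le_of_ne (A.min'_le _ this.1.2) (Ne.symm this.1.1)
      have hcolx : ∀ i, col x (v' i) = d := by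
        intro i
        have := hclass i
        simp only [Finset.mem_filter] at this
        exact this.2
      refine ⟨Fin.cons x v', Fin.cons d cs', ?_, ?_, ?_⟩
      · intro i
        rcases Fin.eq_zero_or_eq_succ i with rfl | ⟨i', rfl⟩
        · simpa using hxA
        · simpa using hmem i'
      · intro i j hij
        rcases Fin.eq_zero_or_eq_succ j with rfl | ⟨j', rfl⟩
        · exact absurd hij (by simp)
        · rcases Fin.eq_zero_or_eq_succ i with rfl | ⟨i', rfl⟩
          · simpa using hxlt j'
          · have : i' < j' := by simpa [Fin.succ_lt_succ_iff] using hij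
            simpa using hv'mono this
      · intro i j hij
        rcases Fin.eq_zero_or_eq_succ j with rfl | ⟨j', rfl⟩
        · exact absurd hij (by simp)
        · rcases Fin.eq_zero_or_eq_succ i with rfl | ⟨i', rfl⟩
          · simpa using hcolx j'
          · have : i' < j' := by simpa [Fin.succ_lt_succ_iff] using hij
            simpa using hv'col i' j' this

/-- 4-colour Ramsey via pivots. -/
lemma ramsey4 (t : ℕ) (A : Finset ℕ) (hA : 5 ^ (4 * t) ≤ A.card) :
    ∃ (S : Finset ℕ) (dd : Fin 2 × Fin 2), S ⊆ A ∧ t ≤ S.card ∧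
      ∀ i ∈ S, ∀ j ∈ S, i < j → col i j = dd := by
  obtain ⟨v, cs, hvA, hvmono, hvcol⟩ := pivots col (4 * t) A hA
  -- pigeonhole on colours of pivots
  have hsum : ∑ d : Fin 2 × Fin 2,
      ((Finset.univ : Finset (Fin (4*t))).filter (fun i => cs i = d)).card
      = (Finset.univ : Finset (Fin (4*t))).card := by
    rw [← Finset.card_eq_sum_card_fiberwise (f := cs) (t := Finset.univ)]
    intro y _; exact Finset.mem_univ _
  have hex : ∃ d : Fin 2 × Fin 2,
      t ≤ ((Finset.univ : Finset (Fin (4*t))).filter (fun i => cs i = d)).card := by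
    rcases Nat.eq_zero_or_pos t with rfl | hpos
    · exact ⟨(0, 0), by omega⟩
    by_contra hcon
    push_neg at hcon
    have hle : ∑ d : Fin 2 × Fin 2,
        ((Finset.univ : Finset (Fin (4*t))).filter (fun i => cs i = d)).card
        ≤ ∑ _d : Fin 2 × Fin 2, (t - 1) :=
      Finset.sum_le_sum (fun d _ => by have := hcon d; omega)
    simp only [Finset.sum_const, Finset.card_univ, smul_eq_mul,
      Fintype.card_prod, Fintype.card_fin] at hle
    rw [hsum] at hle
    simp only [Finset.card_univ, Fintype.card_fin] at hle
    omega
  obtain ⟨d, hd⟩ := hex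
  refine ⟨((Finset.univ : Finset (Fin (4*t))).filter (fun i => cs i = d)).image v, d,
    ?_, ?_, ?_⟩
  · intro y hy
    simp only [Finset.mem_image] at hy
    obtain ⟨i, _, rfl⟩ := hy
    exact hvA i
  · rwa [Finset.card_image_of_injective _ hvmono.injective]
  · intro y hy z hz hyz
    simp only [Finset.mem_image, Finset.mem_filter] at hy hz
    obtain ⟨i, ⟨_, hi⟩, rfl⟩ := hy
    obtain ⟨j, ⟨_, hj⟩, rfl⟩ := hz
    have hij : i < j := by
      by_contra hcon
      push_neg at hcon
      rcases lt_or_eq_of_le hcon with h | h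
      · exact absurd (hvmono h) (by omega)
      · subst h; omega
    rw [hvcol i j hij, hi]

end Ramsey

section Builders

variable {F : Finset Col} {ℓ : ℕ}

/-- building an `IE` configuration from a diagonal system plus a constant column -/
lemma cfg_IE_of (a b : Fin 2) (Y : Finset ℕ) (w : ℕ → Col) (u : Col) (hY : Y.card = ℓ)
    (hu : u ∈ F) (hw : ∀ x ∈ Y, w x ∈ F)
    (hdiag : ∀ x ∈ Y, w x x = a)
    (hoff : ∀ x ∈ Y, ∀ y ∈ Y, x ≠ y → w y x = b)
    (huval : ∀ x ∈ Y, u x = b)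
    (hwu : ∀ x ∈ Y, w x ≠ u)
    (hwinj : ∀ x ∈ Y, ∀ y ∈ Y, x ≠ y → w x ≠ w y) :
    Cfg F (IE ℓ a b) := by
  set e := Y.orderIsoOfFin hY with he
  set r : Fin ℓ → ℕ := fun i => (e i : ℕ) with hr
  have hrY : ∀ i, r i ∈ Y := fun i => (e i).2
  have hrinj : Function.Injective r := by
    intro i j hij
    have : (e i : Y) = (e j : Y) := Subtype.ext hij
    exact e.injective this
  refine ⟨r, fun j => if h : (j : ℕ) < ℓ then w (r ⟨(j : ℕ), h⟩) else u,
    hrinj, ?_, ?_, ?_⟩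
  · intro j₁ j₂ h12
    by_cases h1 : (j₁ : ℕ) < ℓ <;> by_cases h2 : (j₂ : ℕ) < ℓ
    · simp only [dif_pos h1, dif_pos h2] at h12
      by_contra hne
      have hne' : r ⟨(j₁ : ℕ), h1⟩ ≠ r ⟨(j₂ : ℕ), h2⟩ := by
        intro hh
        exact hne (Fin.ext (by simpa using congrArg Fin.val (hrinj hh)))
      exact hwinj _ (hrY _) _ (hrY _) hne' h12
    · simp only [dif_pos h1, dif_neg h2] at h12
      exact absurd h12 (hwu _ (hrY _))
    · simp only [dif_neg h1, dif_pos h2] at h12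
      exact absurd h12.symm (hwu _ (hrY _))
    · exact Fin.ext (by omega)
  · intro j
    by_cases h : (j : ℕ) < ℓ
    · simp only [dif_pos h]; exact hw _ (hrY _)
    · simp only [dif_neg h]; exact hu
  · intro i j
    by_cases h : (j : ℕ) < ℓ
    · simp only [dif_pos h]
      have hjl : ¬ ((j : ℕ) = ℓ) := by omega
      by_cases hij : (i : ℕ) = (j : ℕ)
      · have : r ⟨(j : ℕ), h⟩ = r i := by congr 1; exact Fin.ext hij.symm
        rw [this]
        simp only [IE, if_neg hjl, if_pos hij]
        exact hdiag _ (hrY _)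
      · have hne : r i ≠ r ⟨(j : ℕ), h⟩ := by
          intro hh
          exact hij (by simpa using congrArg Fin.val (hrinj hh))
        simp only [IE, if_neg hjl, if_neg hij]
        exact hoff _ (hrY _) _ (hrY _) hne
    · have hjl : (j : ℕ) = ℓ := by omega
      simp only [dif_neg h, IE, if_pos hjl]
      exact huval _ (hrY _)

/-- building a `TE` configuration from a staircase system plus a constant column -/
lemma cfg_TE_of (a b : Fin 2) (Y : Finset ℕ) (w : ℕ → Col) (u : Col) (hY : Y.card = ℓ)
    (hu : u ∈ F) (hw : ∀ x ∈ Y, w x ∈ F)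
    (hdiag : ∀ x ∈ Y, w x x = b)
    (hlow : ∀ x ∈ Y, ∀ y ∈ Y, y < x → w y x = a)
    (hhigh : ∀ x ∈ Y, ∀ y ∈ Y, x < y → w y x = b)
    (huval : ∀ x ∈ Y, u x = a)
    (hwu : ∀ x ∈ Y, w x ≠ u)
    (hwinj : ∀ x ∈ Y, ∀ y ∈ Y, x ≠ y → w x ≠ w y) :
    Cfg F (TE ℓ a b) := by
  set e := Y.orderIsoOfFin hY with he
  set r : Fin ℓ → ℕ := fun i => (e i : ℕ) with hr
  have hrY : ∀ i, r i ∈ Y := fun i => (e i).2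
  have hrinj : Function.Injective r := by
    intro i j hij
    exact e.injective (Subtype.ext hij)
  have hrmono : ∀ {i j : Fin ℓ}, i < j → r i < r j := by
    intro i j hij
    exact (e.lt_iff_lt.mpr hij)
  refine ⟨r, fun j => if h : 0 < (j : ℕ) then w (r ⟨(j : ℕ) - 1, by omega⟩) else u,
    hrinj, ?_, ?_, ?_⟩
  · intro j₁ j₂ h12
    by_cases h1 : 0 < (j₁ : ℕ) <;> by_cases h2 : 0 < (j₂ : ℕ)
    · simp only [dif_pos h1, dif_pos h2] at h12
      by_contra hne
      have hne' : r ⟨(j₁ : ℕ) - 1, by omega⟩ ≠ r ⟨(j₂ : ℕ) - 1, by omega⟩ := by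
        intro hh
        have := congrArg Fin.val (hrinj hh)
        simp only [Fin.val_mk] at this
        exact hne (Fin.ext (by omega))
      exact hwinj _ (hrY _) _ (hrY _) hne' h12
    · simp only [dif_pos h1, dif_neg h2] at h12
      exact absurd h12 (hwu _ (hrY _))
    · simp only [dif_neg h1, dif_pos h2] at h12
      exact absurd h12.symm (hwu _ (hrY _))
    · exact Fin.ext (by omega)
  · intro j
    by_cases h : 0 < (j : ℕ)
    · simp only [dif_pos h]; exact hw _ (hrY _)
    · simp only [dif_neg h]; exact hu
  · intro i j
    by_cases h : 0 < (j : ℕ)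
    · simp only [dif_pos h]
      have hj0 : ¬ ((j : ℕ) = 0) := by omega
      set j' : Fin ℓ := ⟨(j : ℕ) - 1, by omega⟩ with hj'
      have hj'v : (j' : ℕ) = (j : ℕ) - 1 := rfl
      rcases lt_trichotomy ((j' : ℕ)) ((i : ℕ)) with hlt | heq | hgt
      · have hlt' : (j : ℕ) - 1 < (i : ℕ) := by rw [← hj'v]; exact hlt
        have : r j' < r i := hrmono (Fin.lt_def.mpr hlt)
        have hval := hlow _ (hrY i) _ (hrY j') this
        simp only [TE, if_neg hj0, if_pos (show (j : ℕ) ≤ (i : ℕ) by omega)]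
        exact hval
      · have heq' : (j : ℕ) - 1 = (i : ℕ) := by rw [← hj'v]; exact heq
        have : j' = i := Fin.ext heq
        rw [this]
        simp only [TE, if_neg hj0, if_neg (show ¬ ((j : ℕ) ≤ (i : ℕ)) by omega)]
        exact hdiag _ (hrY _)
      · have hgt' : (i : ℕ) < (j : ℕ) - 1 := by rw [← hj'v]; exact hgt
        have : r i < r j' := hrmono (Fin.lt_def.mpr hgt)
        have hval := hhigh _ (hrY i) _ (hrY j') this
        simp only [TE, if_neg hj0, if_neg (show ¬ ((j : ℕ) ≤ (i : ℕ)) by omega)]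
        exact hval
    · have hj0 : (j : ℕ) = 0 := by omega
      simp only [dif_neg h, TE, if_pos hj0]
      exact huval _ (hrY _)

end Builders

section Twins

/-- a column with many twin rows yields an enriched identity configuration -/
lemma twin_rows_bound {F : Finset Col} {ℓ : ℕ} (hℓ : 1 ≤ ℓ) (hA : AvoidE ℓ F)
    {c : Col} (hc : c ∈ F) (Y : Finset ℕ) (hYf : ∀ x ∈ Y, flp x c ∈ F) :
    Y.card ≤ 2 * ℓ - 2 := by
  by_contra hcon
  push_neg at hcon
  set Y0 := Y.filter (fun x => c x = 0) with hY0
  set Y1 := Y.filter (fun x => ¬ (c x = 0)) with hY1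
  have hsplit : Y0.card + Y1.card = Y.card := Finset.card_filter_add_card_filter_not _
  have hbig : ℓ ≤ Y0.card ∨ ℓ ≤ Y1.card := by omega
  have hwinj : ∀ x ∈ Y, ∀ y ∈ Y, x ≠ y → flp x c ≠ flp y c := by
    intro x hx y hy hxy h
    have := congrFun h x
    rw [flp_same, flp_other _ _ hxy] at this
    exact fin2_one_sub_ne _ this
  rcases hbig with hb | hb
  · obtain ⟨Z, hZsub, hZcard⟩ := Finset.exists_subset_card_eq hb
    have hZY : ∀ x ∈ Z, x ∈ Y := fun x hx => Finset.mem_filter.mp (hZsub hx) |>.1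
    have hZ0 : ∀ x ∈ Z, c x = 0 := fun x hx => Finset.mem_filter.mp (hZsub hx) |>.2
    refine (hA 1 0 (by decide)).1 ?_
    refine cfg_IE_of 1 0 Z (fun x => flp x c) c hZcard hc
      (fun x hx => hYf _ (hZY _ hx)) ?_ ?_ ?_ ?_ ?_
    · intro x hx; show flp x c x = 1; rw [flp_same, hZ0 _ hx]; rfl
    · intro x hx y hy hxy
      show flp y c x = 0
      rw [flp_other _ _ hxy, hZ0 _ hx]
    · intro x hx; exact hZ0 _ hx
    · intro x hx; exact flp_ne _ _
    · intro x hx y hy hxy; exact hwinj _ (hZY _ hx) _ (hZY _ hy) hxy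
  · obtain ⟨Z, hZsub, hZcard⟩ := Finset.exists_subset_card_eq hb
    have hZY : ∀ x ∈ Z, x ∈ Y := fun x hx => Finset.mem_filter.mp (hZsub hx) |>.1
    have hZ1 : ∀ x ∈ Z, c x = 1 := by
      intro x hx
      have := Finset.mem_filter.mp (hZsub hx) |>.2
      rcases fin2_cases (c x) with h | h
      · exact absurd h this
      · exact h
    refine (hA 0 1 (by decide)).1 ?_
    refine cfg_IE_of 0 1 Z (fun x => flp x c) c hZcard hc
      (fun x hx => hYf _ (hZY _ hx)) ?_ ?_ ?_ ?_ ?_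
    · intro x hx; show flp x c x = 0; rw [flp_same, hZ1 _ hx]; rfl
    · intro x hx y hy hxy
      show flp y c x = 1
      rw [flp_other _ _ hxy, hZ1 _ hx]
    · intro x hx; exact hZ1 _ hx
    · intro x hx; exact flp_ne _ _
    · intro x hx y hy hxy; exact hwinj _ (hZY _ hx) _ (hZY _ hy) hxy

/-- greedy selection of rows with pairwise disjoint twin pairs -/
lemma selection {F : Finset Col} {ℓ : ℕ} (hℓ : 1 ≤ ℓ) (hA : AvoidE ℓ F) (pc : ℕ → Col) :
    ∀ (s : ℕ) (R : Finset ℕ),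
    (∀ x ∈ R, pc x ∈ F ∧ flp x (pc x) ∈ F) →
    (4 * ℓ - 3) * s ≤ R.card →
    ∃ X : Finset ℕ, X ⊆ R ∧ X.card = s ∧
      (∀ x ∈ X, ∀ y ∈ X, x ≠ y →
        pc x ≠ pc y ∧ pc x ≠ flp y (pc y) ∧ flp x (pc x) ≠ pc y ∧
          flp x (pc x) ≠ flp y (pc y)) := by
  intro s
  induction s with
  | zero => intro R _ _; exact ⟨∅, by simp, by simp, by simp⟩
  | succ s ih =>
      intro R hR hcard
      have hRpos : 0 < R.card := by
        have h1 : 1 ≤ 4 * ℓ - 3 := by omega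
        have := Nat.mul_le_mul h1 (Nat.le_refl (s+1))
        omega
      obtain ⟨x, hx⟩ := Finset.card_pos.mp hRpos
      set Bad := R.filter (fun y => pc y = pc x ∨ flp y (pc y) = pc x ∨
        pc y = flp x (pc x) ∨ flp y (pc y) = flp x (pc x)) with hBad
      have hBadsub : Bad ⊆ (R.filter (fun y => flp y (pc x) ∈ F)) ∪
          (R.filter (fun y => flp y (flp x (pc x)) ∈ F)) := by
        intro y hy
        simp only [hBad, Finset.mem_filter] at hy
        obtain ⟨hyR, hcase⟩ := hy
        have hpy := (hR y hyR).1
        have hfy := (hR y hyR).2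
        simp only [Finset.mem_union, Finset.mem_filter]
        rcases hcase with h | h | h | h
        · exact Or.inl ⟨hyR, h ▸ hfy⟩
        · refine Or.inl ⟨hyR, ?_⟩
          rw [← h, flp_flp]; exact hpy
        · exact Or.inr ⟨hyR, h ▸ hfy⟩
        · refine Or.inr ⟨hyR, ?_⟩
          rw [← h, flp_flp]; exact hpy
      have hB1 : (R.filter (fun y => flp y (pc x) ∈ F)).card ≤ 2 * ℓ - 2 := by
        refine twin_rows_bound hℓ hA (hR x hx).1 _ ?_
        intro y hy; exact (Finset.mem_filter.mp hy).2
      have hB2 : (R.filter (fun y => flp y (flp x (pc x)) ∈ F)).card ≤ 2 * ℓ - 2 := by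
        refine twin_rows_bound hℓ hA (hR x hx).2 _ ?_
        intro y hy; exact (Finset.mem_filter.mp hy).2
      have hBadcard : Bad.card ≤ 4 * ℓ - 4 := by
        have := Finset.card_le_card hBadsub
        have := Finset.card_union_le (R.filter (fun y => flp y (pc x) ∈ F))
          (R.filter (fun y => flp y (flp x (pc x)) ∈ F))
        omega
      set R' := R \ (insert x Bad) with hR'
      have hR'card : (4 * ℓ - 3) * s ≤ R'.card := by
        have hsd : R.card - (insert x Bad).card ≤ R'.card := Finset.le_card_sdiff _ _
        have hins : (insert x Bad).card ≤ 4 * ℓ - 3 := by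
          have := Finset.card_insert_le x Bad
          omega
        have hmul : (4 * ℓ - 3) * (s + 1) = (4 * ℓ - 3) * s + (4 * ℓ - 3) := by ring
        omega
      obtain ⟨X', hX'sub, hX'card, hX'good⟩ := ih R' (fun y hy => hR y (Finset.mem_sdiff.mp hy).1) hR'card
      have hxnot : x ∉ X' := by
        intro hmem
        have := Finset.mem_sdiff.mp (hX'sub hmem)
        exact this.2 (Finset.mem_insert_self _ _)
      refine ⟨insert x X', ?_, ?_, ?_⟩
      · intro y hy
        rcases Finset.mem_insert.mp hy with rfl | hy'
        · exact hx
        · exact (Finset.mem_sdiff.mp (hX'sub hy')).1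
      · rw [Finset.card_insert_of_notMem hxnot, hX'card]
      · intro y hy z hz hyz
        have hgood : ∀ w ∈ X', pc w ≠ pc x ∧ flp w (pc w) ≠ pc x ∧
            pc w ≠ flp x (pc x) ∧ flp w (pc w) ≠ flp x (pc x) := by
          intro w hw
          have hwR' := hX'sub hw
          have hwnB : w ∉ Bad := by
            intro hmem
            exact (Finset.mem_sdiff.mp hwR').2 (Finset.mem_insert_of_mem hmem)
          have hwR : w ∈ R := (Finset.mem_sdiff.mp hwR').1
          by_contra hcon
          push_neg at hcon
          apply hwnB
          simp only [hBad, Finset.mem_filter]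
          refine ⟨hwR, ?_⟩
          by_cases h1 : pc w = pc x
          · exact Or.inl h1
          by_cases h2 : flp w (pc w) = pc x
          · exact Or.inr (Or.inl h2)
          by_cases h3 : pc w = flp x (pc x)
          · exact Or.inr (Or.inr (Or.inl h3))
          · exact Or.inr (Or.inr (Or.inr (hcon h1 h2 h3)))
        rcases Finset.mem_insert.mp hy with rfl | hy' <;>
          rcases Finset.mem_insert.mp hz with rfl | hz'
        · exact absurd rfl hyz
        · obtain ⟨h1, h2, h3, h4⟩ := hgood z hz'
          exact ⟨h1.symm, h2.symm, h3.symm, h4.symm⟩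
        · obtain ⟨h1, h2, h3, h4⟩ := hgood y hy'
          exact ⟨h1, h3, h2, h4⟩
        · exact hX'good y hy' z hz' hyz

end Twins

section AllTwinned

/-- if every row of `R` carries a twin pair, then `R` is small -/
lemma alltwinned_bound {F : Finset Col} {ℓ : ℕ} (hℓ : 1 ≤ ℓ) (hA : AvoidE ℓ F)
    (R : Finset ℕ) (hT : ∀ x ∈ R, ∃ c ∈ F, flp x c ∈ F) :
    R.card ≤ (4 * ℓ - 3) * 5 ^ (4 * (ℓ + 1)) := by
  by_contra hcon
  push_neg at hcon
  -- choose a twin column for each row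
  have hchoice : ∀ x : ℕ, ∃ c : Col, x ∈ R → (c ∈ F ∧ flp x c ∈ F) := by
    intro x
    by_cases hx : x ∈ R
    · obtain ⟨c, hc1, hc2⟩ := hT x hx
      exact ⟨c, fun _ => ⟨hc1, hc2⟩⟩
    · exact ⟨fun _ => 0, fun h => absurd h hx⟩
  choose pc hpc using hchoice
  obtain ⟨X, hXsub, hXcard, hXgood⟩ := selection hℓ hA pc (5 ^ (4 * (ℓ + 1))) R
    (fun x hx => hpc x hx) (le_of_lt hcon)
  -- Ramsey
  obtain ⟨S, ⟨d₁, d₂⟩, hSsub, hScard, hSmono⟩ :=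
    ramsey4 (fun y z => (pc y z, pc z y)) (ℓ + 1) X (by rw [hXcard])
  have hSX : ∀ x ∈ S, x ∈ X := fun x hx => hSsub hx
  have hSne : S.Nonempty := Finset.card_pos.mp (by omega)
  -- versions with prescribed diagonal value
  set ver : Fin 2 → ℕ → Col := fun δ y => if pc y y = δ then pc y else flp y (pc y)
    with hver
  have hverF : ∀ δ, ∀ y ∈ X, ver δ y ∈ F := by
    intro δ y hy
    simp only [hver]
    by_cases h : pc y y = δ
    · rw [if_pos h]; exact (hpc y (hXsub hy)).1
    · rw [if_neg h]; exact (hpc y (hXsub hy)).2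
  have hverdiag : ∀ δ y, ver δ y y = δ := by
    intro δ y
    simp only [hver]
    by_cases h : pc y y = δ
    · rw [if_pos h]; exact h
    · rw [if_neg h, flp_same]
      rcases fin2_cases (pc y y) with h0 | h0 <;> rcases fin2_cases δ with h1 | h1 <;>
        simp [h0, h1] at h ⊢
  have hverother : ∀ δ y z, z ≠ y → ver δ y z = pc y z := by
    intro δ y z hz
    simp only [hver]
    by_cases h : pc y y = δ
    · rw [if_pos h]
    · rw [if_neg h, flp_other _ _ hz]
  have hverpair : ∀ δ y, ver δ y = pc y ∨ ver δ y = flp y (pc y) := by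
    intro δ y
    simp only [hver]
    by_cases h : pc y y = δ
    · rw [if_pos h]; exact Or.inl rfl
    · rw [if_neg h]; exact Or.inr rfl
  -- distinctness of versions across distinct rows of X
  have hverne : ∀ δ δ' : Fin 2, ∀ y ∈ X, ∀ z ∈ X, y ≠ z → ver δ y ≠ ver δ' z := by
    intro δ δ' y hy z hz hyz
    obtain ⟨h1, h2, h3, h4⟩ := hXgood y hy z hz hyz
    rcases hverpair δ y with hv | hv <;> rcases hverpair δ' z with hv' | hv' <;>
      rw [hv, hv']
    exacts [h1, h2, h3, h4]
  -- colour facts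
  have hcol : ∀ y ∈ S, ∀ z ∈ S, y < z → pc y z = d₁ ∧ pc z y = d₂ := by
    intro y hy z hz hyz
    have := hSmono y hy z hz hyz
    exact ⟨congrArg Prod.fst this, congrArg Prod.snd this⟩
  -- case analysis on the colours
  rcases fin2_cases d₁ with hd1 | hd1 <;> rcases fin2_cases d₂ with hd2 | hd2
  · -- (0,0) : identity with diagonal 1, plus zero column from the max
    subst hd1; subst hd2
    set k := S.max' hSne with hk
    have hkS : k ∈ S := S.max'_mem hSne
    obtain ⟨Y, hYsub, hYcard⟩ :=
      Finset.exists_subset_card_eq (s := S.erase k) (n := ℓ) (by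
        rw [Finset.card_erase_of_mem hkS]; omega)
    have hYS : ∀ x ∈ Y, x ∈ S := fun x hx => (Finset.mem_erase.mp (hYsub hx)).2
    have hYk : ∀ x ∈ Y, x ≠ k := fun x hx => (Finset.mem_erase.mp (hYsub hx)).1
    have hYlt : ∀ x ∈ Y, x < k :=
      fun x hx => lt_of_le_of_ne (S.le_max' x (hYS x hx)) (hYk x hx)
    refine (hA 1 0 (by decide)).1 ?_
    refine cfg_IE_of 1 0 Y (fun x => ver 1 x) (ver 0 k) hYcard
      (hverF 0 k (hSX k hkS)) (fun x hx => hverF 1 x (hSX x (hYS x hx))) ?_ ?_ ?_ ?_ ?_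
    · intro x hx; exact hverdiag 1 x
    · intro x hx y hy hxy
      show ver 1 y x = 0
      rw [hverother 1 y x hxy]
      rcases lt_or_gt_of_ne hxy with h | h
      · exact (hcol x (hYS x hx) y (hYS y hy) h).2
      · exact (hcol y (hYS y hy) x (hYS x hx) h).1
    · intro x hx
      rw [hverother 0 k x (hYk x hx)]
      exact (hcol x (hYS x hx) k hkS (hYlt x hx)).2
    · intro x hx
      exact hverne 1 0 x (hSX x (hYS x hx)) k (hSX k hkS) (hYk x hx)
    · intro x hx y hy hxy
      exact hverne 1 1 x (hSX x (hYS x hx)) y (hSX y (hYS y hy)) hxy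
  · -- (0,1) : triangle TE ℓ 0 1, with zero column from the min
    subst hd1; subst hd2
    set k := S.min' hSne with hk
    have hkS : k ∈ S := S.min'_mem hSne
    obtain ⟨Y, hYsub, hYcard⟩ :=
      Finset.exists_subset_card_eq (s := S.erase k) (n := ℓ) (by
        rw [Finset.card_erase_of_mem hkS]; omega)
    have hYS : ∀ x ∈ Y, x ∈ S := fun x hx => (Finset.mem_erase.mp (hYsub hx)).2
    have hYk : ∀ x ∈ Y, x ≠ k := fun x hx => (Finset.mem_erase.mp (hYsub hx)).1
    have hYgt : ∀ x ∈ Y, k < x :=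
      fun x hx => lt_of_le_of_ne (S.min'_le x (hYS x hx)) (Ne.symm (hYk x hx))
    refine (hA 0 1 (by decide)).2 ?_
    refine cfg_TE_of 0 1 Y (fun x => ver 1 x) (pc k) hYcard
      ((hpc k (hXsub (hSX k hkS))).1) (fun x hx => hverF 1 x (hSX x (hYS x hx))) ?_ ?_ ?_ ?_ ?_ ?_
    · intro x hx; exact hverdiag 1 x
    · intro x hx y hy hyx
      show ver 1 y x = 0
      rw [hverother 1 y x (by omega)]
      exact (hcol y (hYS y hy) x (hYS x hx) hyx).1
    · intro x hx y hy hxy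
      show ver 1 y x = 1
      rw [hverother 1 y x (by omega)]
      exact (hcol x (hYS x hx) y (hYS y hy) hxy).2
    · intro x hx
      exact (hcol k hkS x (hYS x hx) (hYgt x hx)).1
    · intro x hx
      have := hverne 1 0 x (hSX x (hYS x hx)) k (hSX k hkS) (hYk x hx)
      rcases hverpair 0 k with hv | hv
      · intro hcontra
        rcases hverpair 1 x with hw | hw
        · exact (hXgood x (hSX x (hYS x hx)) k (hSX k hkS) (hYk x hx)).1 (hw ▸ hcontra)
        · exact (hXgood x (hSX x (hYS x hx)) k (hSX k hkS) (hYk x hx)).2.2.1 (hw ▸ hcontra)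
      · intro hcontra
        rcases hverpair 1 x with hw | hw
        · exact (hXgood x (hSX x (hYS x hx)) k (hSX k hkS) (hYk x hx)).1 (hw ▸ hcontra)
        · exact (hXgood x (hSX x (hYS x hx)) k (hSX k hkS) (hYk x hx)).2.2.1 (hw ▸ hcontra)
    · intro x hx y hy hxy
      exact hverne 1 1 x (hSX x (hYS x hx)) y (hSX y (hYS y hy)) hxy
  · -- (1,0) : triangle TE ℓ 1 0 with ones column from the min
    subst hd1; subst hd2
    set k := S.min' hSne with hk
    have hkS : k ∈ S := S.min'_mem hSne
    obtain ⟨Y, hYsub, hYcard⟩ :=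
      Finset.exists_subset_card_eq (s := S.erase k) (n := ℓ) (by
        rw [Finset.card_erase_of_mem hkS]; omega)
    have hYS : ∀ x ∈ Y, x ∈ S := fun x hx => (Finset.mem_erase.mp (hYsub hx)).2
    have hYk : ∀ x ∈ Y, x ≠ k := fun x hx => (Finset.mem_erase.mp (hYsub hx)).1
    have hYgt : ∀ x ∈ Y, k < x :=
      fun x hx => lt_of_le_of_ne (S.min'_le x (hYS x hx)) (Ne.symm (hYk x hx))
    refine (hA 1 0 (by decide)).2 ?_
    refine cfg_TE_of 1 0 Y (fun x => ver 0 x) (pc k) hYcard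
      ((hpc k (hXsub (hSX k hkS))).1) (fun x hx => hverF 0 x (hSX x (hYS x hx))) ?_ ?_ ?_ ?_ ?_ ?_
    · intro x hx; exact hverdiag 0 x
    · intro x hx y hy hyx
      show ver 0 y x = 1
      rw [hverother 0 y x (by omega)]
      exact (hcol y (hYS y hy) x (hYS x hx) hyx).1
    · intro x hx y hy hxy
      show ver 0 y x = 0
      rw [hverother 0 y x (by omega)]
      exact (hcol x (hYS x hx) y (hYS y hy) hxy).2
    · intro x hx
      exact (hcol k hkS x (hYS x hx) (hYgt x hx)).1
    · intro x hx
      intro hcontra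
      rcases hverpair 0 x with hw | hw
      · exact (hXgood x (hSX x (hYS x hx)) k (hSX k hkS) (hYk x hx)).1 (hw ▸ hcontra)
      · exact (hXgood x (hSX x (hYS x hx)) k (hSX k hkS) (hYk x hx)).2.2.1 (hw ▸ hcontra)
    · intro x hx y hy hxy
      exact hverne 0 0 x (hSX x (hYS x hx)) y (hSX y (hYS y hy)) hxy
  · -- (1,1) : identity with diagonal 0, ones column from the max
    subst hd1; subst hd2
    set k := S.max' hSne with hk
    have hkS : k ∈ S := S.max'_mem hSne
    obtain ⟨Y, hYsub, hYcard⟩ :=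
      Finset.exists_subset_card_eq (s := S.erase k) (n := ℓ) (by
        rw [Finset.card_erase_of_mem hkS]; omega)
    have hYS : ∀ x ∈ Y, x ∈ S := fun x hx => (Finset.mem_erase.mp (hYsub hx)).2
    have hYk : ∀ x ∈ Y, x ≠ k := fun x hx => (Finset.mem_erase.mp (hYsub hx)).1
    have hYlt : ∀ x ∈ Y, x < k :=
      fun x hx => lt_of_le_of_ne (S.le_max' x (hYS x hx)) (hYk x hx)
    refine (hA 0 1 (by decide)).1 ?_
    refine cfg_IE_of 0 1 Y (fun x => ver 0 x) (ver 1 k) hYcard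
      (hverF 1 k (hSX k hkS)) (fun x hx => hverF 0 x (hSX x (hYS x hx))) ?_ ?_ ?_ ?_ ?_
    · intro x hx; exact hverdiag 0 x
    · intro x hx y hy hxy
      show ver 0 y x = 1
      rw [hverother 0 y x hxy]
      rcases lt_or_gt_of_ne hxy with h | h
      · exact (hcol x (hYS x hx) y (hYS y hy) h).2
      · exact (hcol y (hYS y hy) x (hYS x hx) h).1
    · intro x hx
      rw [hverother 1 k x (hYk x hx)]
      exact (hcol x (hYS x hx) k hkS (hYlt x hx)).2
    · intro x hx
      exact hverne 0 1 x (hSX x (hYS x hx)) k (hSX k hkS) (hYk x hx)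
    · intro x hx y hy hxy
      exact hverne 0 0 x (hSX x (hYS x hx)) y (hSX y (hYS y hy)) hxy

end AllTwinned

section Deletion

/-- the set of twin traces at row x -/
noncomputable def Bx (F : Finset Col) (x : ℕ) : Finset Col :=
  (F.filter (fun c => flp x c ∈ F)).image (fun c => upd c x 0)

lemma Bx_zero {F : Finset Col} {x : ℕ} {t : Col} (ht : t ∈ Bx F x) : t x = 0 := by
  simp only [Bx, Finset.mem_image] at ht
  obtain ⟨d, _, rfl⟩ := ht
  simp

lemma Bx_both {F : Finset Col} {x : ℕ} {t : Col} (ht : t ∈ Bx F x) :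
    ∀ v : Fin 2, upd t x v ∈ F := by
  simp only [Bx, Finset.mem_image, Finset.mem_filter] at ht
  obtain ⟨d, ⟨hdF, hdfl⟩, rfl⟩ := ht
  have hupd : ∀ v : Fin 2, upd (upd d x 0) x v = upd d x v := by
    intro v; funext y
    by_cases h : y = x
    · subst h; simp
    · simp [h]
  have hdd : upd d x (d x) = d := by
    funext y
    by_cases h : y = x
    · subst h; simp
    · simp [h]
  intro v
  rw [hupd]
  rcases fin2_cases (d x) with h | h
  · rcases fin2_cases v with hv | hv
    · rw [hv, ← h, hdd]; exact hdF
    · have : upd d x v = flp x d := by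
        funext y
        by_cases hy : y = x
        · subst hy; simp [h, hv]
        · simp [hy]
      rw [this]; exact hdfl
  · rcases fin2_cases v with hv | hv
    · have : upd d x v = flp x d := by
        funext y
        by_cases hy : y = x
        · subst hy; simp [h, hv]
        · simp [hy]
      rw [this]; exact hdfl
    · rw [hv, ← h, hdd]; exact hdF

/-- distinct columns with the same value at `x` stay distinct after arbitrary updates at x -/
lemma upd_ne_of_ne {t t' : Col} (x : ℕ) (h0 : t x = t' x) (hne : t ≠ t') (v v' : Fin 2) :
    upd t x v ≠ upd t' x v' := by
  intro h
  by_cases hv : v = v'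
  · apply hne
    funext y
    by_cases hy : y = x
    · subst hy; exact h0
    · have := congrFun h y
      rwa [upd_other _ _ _ hy, upd_other _ _ _ hy] at this
  · have := congrFun h x
    simp at this
    exact hv this

/-- counting: deleting a row loses at most `|Bx|` columns -/
lemma card_le_image_add_Bx (F : Finset Col) (x : ℕ) :
    F.card ≤ (F.image (fun c => upd c x 0)).card + (Bx F x).card := by
  classical
  set G := F.filter (fun c => ¬ (c x = 1 ∧ flp x c ∈ F)) with hG
  set D := F.filter (fun c => (c x = 1 ∧ flp x c ∈ F)) with hD
  have hsplit : G.card + D.card = F.card := by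
    rw [hG, hD]
    have h := Finset.card_filter_add_card_filter_not
      (s := F) (p := fun c => (c x = 1 ∧ flp x c ∈ F))
    linarith [h]
  have hGinj : Set.InjOn (fun c => upd c x 0) G := by
    intro c hc c' hc' h
    simp only [hG, Finset.coe_filter, Set.mem_setOf_eq] at hc hc'
    by_contra hne
    have hx : c x ≠ c' x := by
      intro hxx
      apply hne
      funext y
      by_cases hy : y = x
      · subst hy; exact hxx
      · have := congrFun h y
        simpa [upd, hy] using this
    have hoff : ∀ y, y ≠ x → c y = c' y := by
      intro y hy
      have := congrFun h y
      simpa [upd, hy] using this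
    have hflip : c' = flp x c := by
      funext y
      by_cases hy : y = x
      · subst hy
        rw [flp_same]
        rcases fin2_cases (c y) with h1 | h1 <;> rcases fin2_cases (c' y) with h2 | h2 <;>
          simp [h1, h2] at hx ⊢
      · rw [flp_other _ _ hy]; exact (hoff y hy).symm
    have hflip' : c = flp x c' := by rw [hflip, flp_flp]
    rcases fin2_cases (c x) with h1 | h1
    · have h2 : c' x = 1 := by
        rcases fin2_cases (c' x) with h2 | h2
        · exact absurd (h1.trans h2.symm) hx
        · exact h2
      exact hc'.2 ⟨h2, hflip' ▸ hc.1⟩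
    · exact hc.2 ⟨h1, hflip ▸ hc'.1⟩
  have hDinj : Set.InjOn (fun c => upd c x 0) D := by
    intro c hc c' hc' h
    simp only [hD, Finset.coe_filter, Set.mem_setOf_eq] at hc hc'
    funext y
    by_cases hy : y = x
    · subst hy; rw [hc.2.1, hc'.2.1]
    · have := congrFun h y
      simpa [upd, hy] using this
  have hGcard : G.card ≤ (F.image (fun c => upd c x 0)).card := by
    calc G.card = (G.image (fun c => upd c x 0)).card := (Finset.card_image_of_injOn hGinj).symm
    _ ≤ (F.image (fun c => upd c x 0)).card := Finset.card_le_card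
        (Finset.image_subset_image (Finset.filter_subset _ _))
  have hDcard : D.card ≤ (Bx F x).card := by
    calc D.card = (D.image (fun c => upd c x 0)).card := (Finset.card_image_of_injOn hDinj).symm
    _ ≤ (Bx F x).card := by
        apply Finset.card_le_card
        intro t ht
        simp only [Finset.mem_image, hD, Finset.mem_filter] at ht
        obtain ⟨d, ⟨hdF, _, hdfl⟩, rfl⟩ := ht
        simp only [Bx, Finset.mem_image, Finset.mem_filter]
        exact ⟨d, ⟨hdF, hdfl⟩, rfl⟩
  linarith [hsplit, hGcard, hDcard]

end Deletion

section Lifting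

/-- rows of a config with two distinct entries cannot sit on the deleted row;
so configurations of the restricted family lift. -/
lemma cfg_image_rev {F : Finset Col} {x : ℕ} {k l : ℕ} {M : Matrix (Fin k) (Fin l) (Fin 2)}
    (hrow : ∀ i : Fin k, ∃ j j' : Fin l, M i j ≠ M i j')
    (h : Cfg (F.image (fun c => upd c x 0)) M) : Cfg F M := by
  obtain ⟨r, c, hrinj, hcinj, hcF, hcval⟩ := h
  have hpre : ∀ j : Fin l, ∃ d : Col, d ∈ F ∧ upd d x 0 = c j := by
    intro j
    have := hcF j
    simp only [Finset.mem_image] at this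
    obtain ⟨d, hd, hde⟩ := this
    exact ⟨d, hd, hde⟩
  choose d hdF hde using hpre
  have hrx : ∀ i, r i ≠ x := by
    intro i hix
    obtain ⟨j, j', hjj⟩ := hrow i
    apply hjj
    have h1 : c j (r i) = 0 := by rw [hix, ← hde j]; simp
    have h2 : c j' (r i) = 0 := by rw [hix, ← hde j']; simp
    rw [← hcval i j, ← hcval i j', h1, h2]
  refine ⟨r, d, hrinj, ?_, hdF, ?_⟩
  · intro j j' hjj
    apply hcinj
    rw [← hde j, ← hde j', hjj]
  · intro i j
    have : d j (r i) = upd (d j) x 0 (r i) := (upd_other _ _ _ (hrx i)).symm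
    rw [this, hde j]
    exact hcval i j

lemma IE_row_ne {k : ℕ} {a b : Fin 2} (hab : a ≠ b) (i : Fin k) :
    ∃ j j' : Fin (k+1), IE k a b i j ≠ IE k a b i j' := by
  obtain ⟨⟨j, hj⟩, ⟨j', hj'⟩⟩ := IE_row_vals a b i
  exact ⟨j, j', by rw [hj, hj']; exact hab⟩

lemma TE_row_ne {k : ℕ} {a b : Fin 2} (hab : a ≠ b) (i : Fin k) :
    ∃ j j' : Fin (k+1), TE k a b i j ≠ TE k a b i j' := by
  obtain ⟨⟨j, hj⟩, ⟨j', hj'⟩⟩ := TE_row_vals a b i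
  exact ⟨j, j', by rw [hj, hj']; exact hab⟩

/-- restriction preserves avoidance -/
lemma avoid_image {F : Finset Col} {ℓ : ℕ} (hA : AvoidE ℓ F) (x : ℕ) :
    AvoidE ℓ (F.image (fun c => upd c x 0)) := by
  intro a b hab
  exact ⟨fun h => (hA a b hab).1 (cfg_image_rev (IE_row_ne hab) h),
    fun h => (hA a b hab).2 (cfg_image_rev (TE_row_ne hab) h)⟩

lemma Bx_cfg_rows_ne {F : Finset Col} {x : ℕ} {k l : ℕ} {M : Matrix (Fin k) (Fin l) (Fin 2)}
    (hrow : ∀ i : Fin k, ∃ j j' : Fin l, M i j ≠ M i j')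
    (h : Cfg (Bx F x) M) :
    ∃ r : Fin k → ℕ, ∃ c : Fin l → Col, Function.Injective r ∧ Function.Injective c ∧
      (∀ j, c j ∈ Bx F x) ∧ (∀ i j, c j (r i) = M i j) ∧ (∀ i, r i ≠ x) := by
  obtain ⟨r, c, hrinj, hcinj, hcF, hcval⟩ := h
  refine ⟨r, c, hrinj, hcinj, hcF, hcval, ?_⟩
  intro i hix
  obtain ⟨j, j', hjj⟩ := hrow i
  apply hjj
  have h1 : c j (r i) = 0 := by rw [hix]; exact Bx_zero (hcF j)
  have h2 : c j' (r i) = 0 := by rw [hix]; exact Bx_zero (hcF j')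
  rw [← hcval i j, ← hcval i j', h1, h2]

/-- key lifting: an enriched identity in `Bx` lifts to one a size larger in `F` -/
lemma lift_IE {F : Finset Col} {k : ℕ} (x : ℕ) (a b : Fin 2) (hab : a ≠ b)
    (h : Cfg (Bx F x) (IE k a b)) : Cfg F (IE (k+1) a b) := by
  obtain ⟨r, c, hrinj, hcinj, hcB, hcval, hrx⟩ := Bx_cfg_rows_ne (IE_row_ne hab) h
  have hzero : ∀ j, c j x = 0 := fun j => Bx_zero (hcB j)
  have hboth : ∀ j, ∀ v : Fin 2, upd (c j) x v ∈ F := fun j => Bx_both (hcB j)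
  set w : Col := c (Fin.last k) with hw
  have hwval : ∀ i0 : Fin k, w (r i0) = b := by
    intro i0
    rw [hw, hcval]
    simp [IE]
  have hcne : ∀ (j0 j0' : Fin (k+1)) (v v' : Fin 2), j0 ≠ j0' →
      upd (c j0) x v ≠ upd (c j0') x v' := by
    intro j0 j0' v v' hjj
    exact upd_ne_of_ne x (by rw [hzero, hzero]) (fun hc => hjj (hcinj hc)) v v'
  refine ⟨Fin.cons x r, fun j' =>
    if (j' : ℕ) = 0 then upd w x a
    else if (j' : ℕ) = k + 1 then upd w x b
    else upd (c ⟨(j' : ℕ) - 1, by omega⟩) x b, ?_, ?_, ?_, ?_⟩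
  · intro i i' hii
    rcases Fin.eq_zero_or_eq_succ i with rfl | ⟨i0, rfl⟩ <;>
      rcases Fin.eq_zero_or_eq_succ i' with rfl | ⟨i0', rfl⟩
    · rfl
    · simp only [Fin.cons_zero, Fin.cons_succ] at hii
      exact absurd hii.symm (hrx i0')
    · simp only [Fin.cons_zero, Fin.cons_succ] at hii
      exact absurd hii (hrx i0)
    · simp only [Fin.cons_succ] at hii
      rw [hrinj hii]
  · intro j j' hjj
    dsimp only at hjj
    by_cases h1 : (j : ℕ) = 0 <;> by_cases h2 : (j' : ℕ) = 0
    · exact Fin.ext (h1.trans h2.symm)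
    · exfalso
      rw [if_pos h1, if_neg h2] at hjj
      by_cases h3 : (j' : ℕ) = k + 1
      · rw [if_pos h3] at hjj
        have := congrFun hjj x
        simp only [upd_same] at this
        exact hab this
      · rw [if_neg h3] at hjj
        refine hcne (Fin.last k) ⟨(j' : ℕ) - 1, by omega⟩ a b ?_ hjj
        intro hcon
        have := congrArg Fin.val hcon
        simp only [Fin.val_last, Fin.val_mk] at this
        omega
    · exfalso
      rw [if_neg h1, if_pos h2] at hjj
      by_cases h3 : (j : ℕ) = k + 1
      · rw [if_pos h3] at hjj
        have := congrFun hjj x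
        simp only [upd_same] at this
        exact hab this.symm
      · rw [if_neg h3] at hjj
        refine hcne ⟨(j : ℕ) - 1, by omega⟩ (Fin.last k) b a ?_ hjj
        intro hcon
        have := congrArg Fin.val hcon
        simp only [Fin.val_last, Fin.val_mk] at this
        omega
    · rw [if_neg h1, if_neg h2] at hjj
      by_cases h3 : (j : ℕ) = k + 1 <;> by_cases h4 : (j' : ℕ) = k + 1
      · exact Fin.ext (h3.trans h4.symm)
      · exfalso
        rw [if_pos h3, if_neg h4] at hjj
        refine hcne (Fin.last k) ⟨(j' : ℕ) - 1, by omega⟩ b b ?_ hjj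
        intro hcon
        have := congrArg Fin.val hcon
        simp only [Fin.val_last, Fin.val_mk] at this
        omega
      · exfalso
        rw [if_neg h3, if_pos h4] at hjj
        refine hcne ⟨(j : ℕ) - 1, by omega⟩ (Fin.last k) b b ?_ hjj
        intro hcon
        have := congrArg Fin.val hcon
        simp only [Fin.val_last, Fin.val_mk] at this
        omega
      · rw [if_neg h3, if_neg h4] at hjj
        by_contra hne
        have hvne : (j : ℕ) ≠ (j' : ℕ) := fun hv => hne (Fin.ext hv)
        refine absurd hjj (hcne ⟨(j : ℕ) - 1, by omega⟩ ⟨(j' : ℕ) - 1, by omega⟩ b b ?_)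
        intro hcon
        have := congrArg Fin.val hcon
        simp only [Fin.val_mk] at this
        omega
  · intro j
    dsimp only
    by_cases h1 : (j : ℕ) = 0
    · rw [if_pos h1]; exact hboth _ a
    by_cases h2 : (j : ℕ) = k + 1
    · rw [if_neg h1, if_pos h2]; exact hboth _ b
    · rw [if_neg h1, if_neg h2]; exact hboth _ b
  · intro i j
    dsimp only
    rcases Fin.eq_zero_or_eq_succ i with rfl | ⟨i0, rfl⟩
    · simp only [Fin.cons_zero]
      by_cases h1 : (j : ℕ) = 0
      · rw [if_pos h1, upd_same]
        have hjk : ¬ ((j : ℕ) = k + 1) := by omega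
        simp only [IE, if_neg hjk]
        rw [if_pos (by simp [h1])]
      · rw [if_neg h1]
        by_cases h2 : (j : ℕ) = k + 1
        · rw [if_pos h2, upd_same]
          simp only [IE, if_pos h2]
        · rw [if_neg h2, upd_same]
          simp only [IE, if_neg h2]
          rw [if_neg (by simp; omega)]
    · simp only [Fin.cons_succ]
      by_cases h1 : (j : ℕ) = 0
      · rw [if_pos h1, upd_other _ _ _ (hrx i0), hwval i0]
        have hjk : ¬ ((j : ℕ) = k + 1) := by omega
        simp only [IE, if_neg hjk]
        rw [if_neg (by simp only [Fin.val_succ, h1]; omega)]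
      · rw [if_neg h1]
        by_cases h2 : (j : ℕ) = k + 1
        · rw [if_pos h2, upd_other _ _ _ (hrx i0), hwval i0]
          simp only [IE, if_pos h2]
        · rw [if_neg h2, upd_other _ _ _ (hrx i0), hcval i0]
          simp only [IE, Fin.val_mk]
          rw [if_neg (by omega)]
          simp only [if_neg h2]
          by_cases h3 : (i0 : ℕ) = (j : ℕ) - 1
          · rw [if_pos h3, if_pos (by simp [Fin.val_succ]; omega)]
          · rw [if_neg h3, if_neg (by simp [Fin.val_succ]; omega)]

/-- key lifting for the enriched triangle -/
lemma lift_TE {F : Finset Col} {k : ℕ} (x : ℕ) (a b : Fin 2) (hab : a ≠ b)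
    (h : Cfg (Bx F x) (TE k a b)) : Cfg F (TE (k+1) a b) := by
  obtain ⟨r, c, hrinj, hcinj, hcB, hcval, hrx⟩ := Bx_cfg_rows_ne (TE_row_ne hab) h
  have hzero : ∀ j, c j x = 0 := fun j => Bx_zero (hcB j)
  have hboth : ∀ j, ∀ v : Fin 2, upd (c j) x v ∈ F := fun j => Bx_both (hcB j)
  set v0 : Col := c 0 with hv0
  have hv0val : ∀ i0 : Fin k, v0 (r i0) = a := by
    intro i0
    rw [hv0, hcval]
    simp [TE]
  have hcne : ∀ (j0 j0' : Fin (k+1)) (v v' : Fin 2), j0 ≠ j0' →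
      upd (c j0) x v ≠ upd (c j0') x v' := by
    intro j0 j0' v v' hjj
    exact upd_ne_of_ne x (by rw [hzero, hzero]) (fun hc => hjj (hcinj hc)) v v'
  refine ⟨Fin.cons x r, fun j' =>
    if (j' : ℕ) = 0 then upd v0 x a
    else if (j' : ℕ) = 1 then upd v0 x b
    else upd (c ⟨(j' : ℕ) - 1, by omega⟩) x b, ?_, ?_, ?_, ?_⟩
  · intro i i' hii
    rcases Fin.eq_zero_or_eq_succ i with rfl | ⟨i0, rfl⟩ <;>
      rcases Fin.eq_zero_or_eq_succ i' with rfl | ⟨i0', rfl⟩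
    · rfl
    · simp only [Fin.cons_zero, Fin.cons_succ] at hii
      exact absurd hii.symm (hrx i0')
    · simp only [Fin.cons_zero, Fin.cons_succ] at hii
      exact absurd hii (hrx i0)
    · simp only [Fin.cons_succ] at hii
      rw [hrinj hii]
  · intro j j' hjj
    dsimp only at hjj
    by_cases h1 : (j : ℕ) = 0 <;> by_cases h2 : (j' : ℕ) = 0
    · exact Fin.ext (h1.trans h2.symm)
    · exfalso
      rw [if_pos h1, if_neg h2] at hjj
      by_cases h3 : (j' : ℕ) = 1
      · rw [if_pos h3] at hjj
        have := congrFun hjj x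
        simp only [upd_same] at this
        exact hab this
      · rw [if_neg h3] at hjj
        refine hcne 0 ⟨(j' : ℕ) - 1, by omega⟩ a b ?_ hjj
        intro hcon
        have := congrArg Fin.val hcon
        simp only [Fin.val_zero, Fin.val_mk] at this
        omega
    · exfalso
      rw [if_neg h1, if_pos h2] at hjj
      by_cases h3 : (j : ℕ) = 1
      · rw [if_pos h3] at hjj
        have := congrFun hjj x
        simp only [upd_same] at this
        exact hab this.symm
      · rw [if_neg h3] at hjj
        refine hcne ⟨(j : ℕ) - 1, by omega⟩ 0 b a ?_ hjj
        intro hcon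
        have := congrArg Fin.val hcon
        simp only [Fin.val_zero, Fin.val_mk] at this
        omega
    · rw [if_neg h1, if_neg h2] at hjj
      by_cases h3 : (j : ℕ) = 1 <;> by_cases h4 : (j' : ℕ) = 1
      · exact Fin.ext (h3.trans h4.symm)
      · exfalso
        rw [if_pos h3, if_neg h4] at hjj
        refine hcne 0 ⟨(j' : ℕ) - 1, by omega⟩ b b ?_ hjj
        intro hcon
        have := congrArg Fin.val hcon
        simp only [Fin.val_zero, Fin.val_mk] at this
        omega
      · exfalso
        rw [if_neg h3, if_pos h4] at hjj
        refine hcne ⟨(j : ℕ) - 1, by omega⟩ 0 b b ?_ hjj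
        intro hcon
        have := congrArg Fin.val hcon
        simp only [Fin.val_zero, Fin.val_mk] at this
        omega
      · rw [if_neg h3, if_neg h4] at hjj
        by_contra hne
        have hvne : (j : ℕ) ≠ (j' : ℕ) := fun hv => hne (Fin.ext hv)
        refine absurd hjj (hcne ⟨(j : ℕ) - 1, by omega⟩ ⟨(j' : ℕ) - 1, by omega⟩ b b ?_)
        intro hcon
        have := congrArg Fin.val hcon
        simp only [Fin.val_mk] at this
        omega
  · intro j
    dsimp only
    by_cases h1 : (j : ℕ) = 0
    · rw [if_pos h1]; exact hboth _ a
    by_cases h2 : (j : ℕ) = 1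
    · rw [if_neg h1, if_pos h2]; exact hboth _ b
    · rw [if_neg h1, if_neg h2]; exact hboth _ b
  · intro i j
    dsimp only
    rcases Fin.eq_zero_or_eq_succ i with rfl | ⟨i0, rfl⟩
    · simp only [Fin.cons_zero]
      by_cases h1 : (j : ℕ) = 0
      · rw [if_pos h1, upd_same]
        simp only [TE, if_pos h1]
      · rw [if_neg h1]
        by_cases h2 : (j : ℕ) = 1
        · rw [if_pos h2, upd_same]
          simp only [TE, if_neg h1]
          rw [if_neg (show ¬ ((j : ℕ) ≤ ((0 : Fin (k+1)) : ℕ)) by rw [Fin.val_zero]; omega)]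
        · rw [if_neg h2, upd_same]
          simp only [TE, if_neg h1]
          rw [if_neg (show ¬ ((j : ℕ) ≤ ((0 : Fin (k+1)) : ℕ)) by rw [Fin.val_zero]; omega)]
    · simp only [Fin.cons_succ]
      by_cases h1 : (j : ℕ) = 0
      · rw [if_pos h1, upd_other _ _ _ (hrx i0), hv0val i0]
        simp only [TE, if_pos h1]
      · rw [if_neg h1]
        by_cases h2 : (j : ℕ) = 1
        · rw [if_pos h2, upd_other _ _ _ (hrx i0), hv0val i0]
          simp only [TE, if_neg h1]
          rw [if_pos (by simp [Fin.val_succ]; omega)]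
        · rw [if_neg h2, upd_other _ _ _ (hrx i0), hcval i0]
          simp only [TE, Fin.val_mk]
          rw [if_neg (by omega), if_neg h1]
          by_cases h3 : (j : ℕ) - 1 ≤ (i0 : ℕ)
          · rw [if_pos h3, if_pos (by simp [Fin.val_succ]; omega)]
          · rw [if_neg h3, if_neg (by simp [Fin.val_succ]; omega)]

end Lifting

section Main

/-- per-level factor -/
def H0 (ℓ : ℕ) : ℕ := (4 * ℓ - 3) * 5 ^ (4 * (ℓ + 1))

/-- the recursive bound -/
def gbound : ℕ → ℕ
  | 0 => 1
  | 1 => 1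
  | (n+2) => 1 + H0 (n+2) * gbound (n+1)

lemma gbound_succ (k : ℕ) (hk : 1 ≤ k) : gbound (k+1) = 1 + H0 (k+1) * gbound k := by
  obtain ⟨k', rfl⟩ : ∃ k', k = k' + 1 := ⟨k - 1, by omega⟩
  rfl

/-- base case: avoiding the four 1×2 enriched configurations forces ≤ 1 column -/
lemma base_case {F : Finset Col} (hA : AvoidE 1 F) : F.card ≤ 1 := by
  by_contra hcon
  push_neg at hcon
  obtain ⟨c, hc, c', hc', hne⟩ := Finset.one_lt_card.mp hcon
  have hdiff : ∃ x, c x ≠ c' x := by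
    by_contra hall
    push_neg at hall
    exact hne (funext hall)
  obtain ⟨x, hx⟩ := hdiff
  refine (hA (c x) (c' x) hx).1 ?_
  refine ⟨fun _ => x, fun j => if (j : ℕ) = 0 then c else c', ?_, ?_, ?_, ?_⟩
  · intro i i' _; exact Subsingleton.elim i i'
  · intro j j' hjj
    dsimp only at hjj
    by_cases h1 : (j : ℕ) = 0 <;> by_cases h2 : (j' : ℕ) = 0
    · exact Fin.ext (h1.trans h2.symm)
    · rw [if_pos h1, if_neg h2] at hjj; exact absurd hjj hne
    · rw [if_neg h1, if_pos h2] at hjj; exact absurd hjj.symm hne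
    · have : (j : ℕ) = 1 := by omega
      have h2' : (j' : ℕ) = 1 := by omega
      exact Fin.ext (this.trans h2'.symm)
  · intro j
    dsimp only
    by_cases h1 : (j : ℕ) = 0
    · rw [if_pos h1]; exact hc
    · rw [if_neg h1]; exact hc'
  · intro i j
    dsimp only
    by_cases h1 : (j : ℕ) = 0
    · rw [if_pos h1]
      simp only [IE]
      rw [if_neg (by omega), if_pos (by omega)]
    · rw [if_neg h1]
      have : (j : ℕ) = 1 := by omega
      simp only [IE]
      rw [if_pos this]

/-- Main abstract bound: a simple family supported on finitely many rows that
avoids all four enriched configurations at level ℓ has at most `gbound ℓ` columns. -/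
theorem main_bound : ∀ (ℓ : ℕ), 1 ≤ ℓ → ∀ (R : Finset ℕ) (F : Finset Col),
    (∀ c ∈ F, ∀ x : ℕ, x ∉ R → c x = 0) → AvoidE ℓ F → F.card ≤ gbound ℓ := by
  intro ℓ
  induction ℓ with
  | zero => omega
  | succ k ihk =>
      intro _ R F hsupp hA
      by_cases hk : k = 0
      · subst hk
        have := base_case hA
        simpa [gbound] using this
      -- now k ≥ 1
      have hk1 : 1 ≤ k := by omega
      have inner : ∀ (n : ℕ) (R : Finset ℕ) (F : Finset Col), R.card ≤ n →
          (∀ c ∈ F, ∀ x : ℕ, x ∉ R → c x = 0) → AvoidE (k+1) F →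
          F.card ≤ 1 + min R.card (H0 (k+1)) * gbound k := by
        intro n
        induction n with
        | zero =>
            intro R F hRn hsupp hA
            have hR : R = ∅ := Finset.card_eq_zero.mp (by omega)
            subst hR
            have : ∀ c ∈ F, c = (fun _ => 0) := by
              intro c hc
              funext y
              exact hsupp c hc y (by simp)
            have : F ⊆ {fun _ => 0} := by
              intro c hc; simp [this c hc]
            have := Finset.card_le_card this
            simp only [Finset.card_singleton] at this
            omega
        | succ n ihn =>
            intro R F hRn hsupp hA
            by_cases hR0 : R.card = 0
            · have hR : R = ∅ := Finset.card_eq_zero.mp hR0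
              subst hR
              have hsub : F ⊆ {fun _ => 0} := by
                intro c hc
                simp only [Finset.mem_singleton]
                funext y
                exact hsupp c hc y (by simp)
              have := Finset.card_le_card hsub
              simp only [Finset.card_singleton] at this
              omega
            -- R nonempty
            by_cases hall : ∀ x ∈ R, ∃ c ∈ F, flp x c ∈ F
            · -- every row twinned
              have hRH : R.card ≤ H0 (k+1) := by
                have := alltwinned_bound (F := F) (ℓ := k+1) (by omega) hA R hall
                simpa [H0] using this
              obtain ⟨x, hx⟩ := Finset.card_pos.mp (show 0 < R.card by omega)
              set F' := F.image (fun c => upd c x 0) with hF'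
              have hcount : F.card ≤ F'.card + (Bx F x).card := card_le_image_add_Bx F x
              have hBxA : AvoidE k (Bx F x) := by
                intro a b hab
                constructor
                · intro hcfg; exact (hA a b hab).1 (lift_IE x a b hab hcfg)
                · intro hcfg; exact (hA a b hab).2 (lift_TE x a b hab hcfg)
              have hBxsupp : ∀ c ∈ Bx F x, ∀ y : ℕ, y ∉ R.erase x → c y = 0 := by
                intro c hc y hy
                simp only [Bx, Finset.mem_image, Finset.mem_filter] at hc
                obtain ⟨d, ⟨hdF, _⟩, rfl⟩ := hc
                by_cases hyx : y = x
                · subst hyx; simp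
                · rw [upd_other _ _ _ hyx]
                  apply hsupp d hdF
                  intro hyR
                  exact hy (Finset.mem_erase.mpr ⟨hyx, hyR⟩)
              have hBxcard : (Bx F x).card ≤ gbound k := ihk hk1 (R.erase x) _ hBxsupp hBxA
              have hF'supp : ∀ c ∈ F', ∀ y : ℕ, y ∉ R.erase x → c y = 0 := by
                intro c hc y hy
                simp only [hF', Finset.mem_image] at hc
                obtain ⟨d, hdF, rfl⟩ := hc
                by_cases hyx : y = x
                · subst hyx; simp
                · rw [upd_other _ _ _ hyx]
                  apply hsupp d hdF
                  intro hyR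
                  exact hy (Finset.mem_erase.mpr ⟨hyx, hyR⟩)
              have hF'A : AvoidE (k+1) F' := avoid_image hA x
              have hF'card : F'.card ≤ 1 + min (R.erase x).card (H0 (k+1)) * gbound k := by
                refine ihn (R.erase x) F' ?_ hF'supp hF'A
                rw [Finset.card_erase_of_mem hx]
                omega
              obtain ⟨q', hq'⟩ : ∃ q', R.card = q' + 1 := ⟨R.card - 1, by omega⟩
              have herase : (R.erase x).card = q' := by
                rw [Finset.card_erase_of_mem hx, hq']
                omega
              have hmin1 : min (R.erase x).card (H0 (k+1)) = q' := by
                rw [herase]; exact Nat.min_eq_left (by omega)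
              have hmin2 : min R.card (H0 (k+1)) = q' + 1 := by
                rw [hq']; exact Nat.min_eq_left (by omega)
              rw [hmin2]
              rw [hmin1] at hF'card
              calc F.card ≤ F'.card + (Bx F x).card := hcount
                _ ≤ (1 + q' * gbound k) + gbound k := by omega
                _ = 1 + (q' + 1) * gbound k := by ring
            · -- some untwinned row
              push_neg at hall
              obtain ⟨x, hxR, hxuntw⟩ := hall
              set F' := F.image (fun c => upd c x 0) with hF'
              have hinj : Set.InjOn (fun c => upd c x 0) F := by
                intro c hc c' hc' h
                by_contra hne
                have hx' : c x ≠ c' x := by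
                  intro hxx
                  apply hne
                  funext y
                  by_cases hy : y = x
                  · subst hy; exact hxx
                  · have := congrFun h y
                    simpa [upd, hy] using this
                have hoff : ∀ y, y ≠ x → c y = c' y := by
                  intro y hy
                  have := congrFun h y
                  simpa [upd, hy] using this
                have hflip : c' = flp x c := by
                  funext y
                  by_cases hy : y = x
                  · subst hy
                    rw [flp_same]
                    rcases fin2_cases (c y) with h1 | h1 <;> rcases fin2_cases (c' y) with h2 | h2 <;>
                      simp [h1, h2] at hx' ⊢
                  · rw [flp_other _ _ hy]; exact (hoff y hy).symm
                exact hxuntw c hc (hflip ▸ hc')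
              have hcard : F.card = F'.card := (Finset.card_image_of_injOn hinj).symm
              have hF'supp : ∀ c ∈ F', ∀ y : ℕ, y ∉ R.erase x → c y = 0 := by
                intro c hc y hy
                simp only [hF', Finset.mem_image] at hc
                obtain ⟨d, hdF, rfl⟩ := hc
                by_cases hyx : y = x
                · subst hyx; simp
                · rw [upd_other _ _ _ hyx]
                  apply hsupp d hdF
                  intro hyR
                  exact hy (Finset.mem_erase.mpr ⟨hyx, hyR⟩)
              have hF'A : AvoidE (k+1) F' := avoid_image hA x
              have hF'card : F'.card ≤ 1 + min (R.erase x).card (H0 (k+1)) * gbound k := by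
                refine ihn (R.erase x) F' ?_ hF'supp hF'A
                rw [Finset.card_erase_of_mem hxR]
                omega
              have hminle : min (R.erase x).card (H0 (k+1)) ≤ min R.card (H0 (k+1)) := by
                apply min_le_min _ (le_refl _)
                rw [Finset.card_erase_of_mem hxR]
                omega
              have := Nat.mul_le_mul_right (gbound k) hminle
              omega
      -- conclude
      have := inner R.card R F (le_refl _) hsupp hA
      have hminle : min R.card (H0 (k+1)) ≤ H0 (k+1) := Nat.min_le_right _ _
      have hmul := Nat.mul_le_mul_right (gbound k) hminle
      rw [gbound_succ k hk1]
      omega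

end Main

section Numeric

lemma lin_le_pow5 (ℓ : ℕ) (h : 1 ≤ ℓ) : 4 * ℓ + 1 ≤ 5 ^ ℓ := by
  induction ℓ with
  | zero => omega
  | succ p ih =>
      by_cases hp : p = 0
      · subst hp; norm_num
      · have h5 : 5 ^ (p+1) = 5 * 5 ^ p := by ring
        have := ih (by omega)
        omega

lemma key_ineq (ℓ : ℕ) (h : 2 ≤ ℓ) : 1 + H0 (ℓ+1) ≤ 6 ^ (12 * ℓ) := by
  have h1 : H0 (ℓ+1) = (4 * ℓ + 1) * 5 ^ (4 * ℓ + 8) := by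
    have e1 : 4 * (ℓ+1) - 3 = 4 * ℓ + 1 := by omega
    have e2 : 4 * ((ℓ+1) + 1) = 4 * ℓ + 8 := by omega
    simp only [H0, e1, e2]
  have h2 : (4 * ℓ + 1) * 5 ^ (4 * ℓ + 8) ≤ 5 ^ ℓ * 5 ^ (4 * ℓ + 8) :=
    Nat.mul_le_mul_right _ (lin_le_pow5 ℓ (by omega))
  have h3 : (5:ℕ) ^ ℓ * 5 ^ (4 * ℓ + 8) = 5 ^ (5 * ℓ + 8) := by
    rw [← pow_add]; congr 1; ring
  have h4 : 1 + H0 (ℓ+1) ≤ 2 * 5 ^ (5 * ℓ + 8) := by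
    have hp : 1 ≤ (5:ℕ) ^ (5 * ℓ + 8) := Nat.one_le_pow _ _ (by norm_num)
    omega
  have h5 : (2:ℕ) * 5 ^ (5 * ℓ + 8) ≤ 5 ^ (5 * ℓ + 9) := by
    calc (2:ℕ) * 5 ^ (5 * ℓ + 8) ≤ 5 * 5 ^ (5 * ℓ + 8) :=
          Nat.mul_le_mul_right _ (by norm_num)
      _ = 5 ^ (5 * ℓ + 9) := by ring
  have h6 : (5:ℕ) ^ (5 * ℓ + 9) ≤ 6 ^ (5 * ℓ + 9) :=
    Nat.pow_le_pow_left (by norm_num) _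
  have h7 : (6:ℕ) ^ (5 * ℓ + 9) ≤ 6 ^ (12 * ℓ) :=
    Nat.pow_le_pow_right (by norm_num) (by omega)
  omega

lemma H0_pos (ℓ : ℕ) (h : 1 ≤ ℓ) : 1 ≤ H0 ℓ := by
  simp only [H0]
  have h1 : 1 ≤ 4 * ℓ - 3 := by omega
  have h2 : 1 ≤ (5:ℕ) ^ (4 * (ℓ+1)) := Nat.one_le_pow _ _ (by norm_num)
  exact Nat.one_le_iff_ne_zero.mpr (Nat.mul_ne_zero (by omega) (by omega))

lemma gbound_lt :
    ∀ ℓ : ℕ, 2 ≤ ℓ → gbound ℓ < 6 ^ (6 * ℓ * (ℓ - 1)) := by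
  intro ℓ
  induction ℓ with
  | zero => omega
  | succ m ih =>
      intro h2
      by_cases hm : m = 1
      · subst hm
        show gbound 2 < 6 ^ (6 * 2 * (2 - 1))
        have : gbound 2 = 1 + H0 2 * gbound 1 := rfl
        rw [this]
        have h1 : gbound 1 = 1 := rfl
        rw [h1]
        simp only [H0]
        norm_num
      · have hm2 : 2 ≤ m := by omega
        have ihm := ih hm2
        obtain ⟨p, rfl⟩ : ∃ p, m = p + 2 := ⟨m - 2, by omega⟩
        set A := (6:ℕ) ^ (6 * (p+2) * (p+2-1)) with hA
        have hA1 : 1 ≤ A := Nat.one_le_pow _ _ (by norm_num)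
        have hH := H0_pos (p+3) (by omega)
        have hgs : gbound (p+3) = 1 + H0 (p+3) * gbound (p+2) := gbound_succ _ (by omega)
        have hstep1 : gbound (p+3) < (1 + H0 (p+3)) * A := by
          rw [hgs]
          calc 1 + H0 (p+3) * gbound (p+2)
              < 1 + H0 (p+3) * gbound (p+2) + (gbound (p+2) + H0 (p+3)) := by
                have : 1 ≤ gbound (p+2) + H0 (p+3) := by omega
                omega
            _ = (1 + H0 (p+3)) * (gbound (p+2) + 1) := by ring
            _ ≤ (1 + H0 (p+3)) * A := by
                apply Nat.mul_le_mul_left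
                omega
        have hstep2 : (1 + H0 (p+3)) * A ≤ 6 ^ (12 * (p+2)) * A :=
          Nat.mul_le_mul_right _ (key_ineq (p+2) (by omega))
        have hexp : 6 ^ (12 * (p+2)) * A = 6 ^ (6 * (p+3) * (p+3-1)) := by
          rw [hA, ← pow_add]
          congr 1
          have e1 : p + 2 - 1 = p + 1 := by omega
          have e2 : p + 3 - 1 = p + 2 := by omega
          rw [e1, e2]
          ring
        calc gbound (p+3) < (1 + H0 (p+3)) * A := hstep1
          _ ≤ 6 ^ (12 * (p+2)) * A := hstep2
          _ = _ := hexp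

end Numeric

end AL

namespace AL

open Classical

/-- the columns of a matrix, extended to `ℕ` by zero -/
def embCols {m n : ℕ} (A : Matrix (Fin m) (Fin n) (Fin 2)) : Fin n → Col :=
  fun j y => if h : y < m then A ⟨y, h⟩ j else 0

lemma cfg_to_matrix {m n : ℕ} {A : Matrix (Fin m) (Fin n) (Fin 2)}
    {k l : ℕ} {M : Matrix (Fin k) (Fin l) (Fin 2)}
    (hrow : ∀ i : Fin k, ∃ j j' : Fin l, M i j ≠ M i j')
    (h : Cfg (Finset.univ.image (embCols A)) M) :
    ∃ ρ : Fin k → Fin m, ∃ σ : Fin l → Fin n,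
      Function.Injective ρ ∧ Function.Injective σ ∧ ∀ i j, A (ρ i) (σ j) = M i j := by
  obtain ⟨r, c, hrinj, hcinj, hcF, hcval⟩ := h
  have hpre : ∀ j : Fin l, ∃ jx : Fin n, embCols A jx = c j := by
    intro j
    have := hcF j
    simp only [Finset.mem_image, Finset.mem_univ, true_and] at this
    exact this
  choose σ hσ using hpre
  have hrlt : ∀ i, (r i) < m := by
    intro i
    by_contra hge
    obtain ⟨j, j', hjj⟩ := hrow i
    apply hjj
    have h1 : c j (r i) = 0 := by
      rw [← hσ j]; simp only [embCols]; rw [dif_neg hge]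
    have h2 : c j' (r i) = 0 := by
      rw [← hσ j']; simp only [embCols]; rw [dif_neg hge]
    rw [← hcval i j, ← hcval i j', h1, h2]
  refine ⟨fun i => ⟨r i, hrlt i⟩, σ, ?_, ?_, ?_⟩
  · intro i i' hii
    exact hrinj (by simpa using congrArg Fin.val hii)
  · intro j j' hjj
    apply hcinj
    rw [← hσ j, ← hσ j', hjj]
  · intro i j
    have := hcval i j
    rw [← hσ j] at this
    simpa only [embCols, dif_pos (hrlt i)] using this

/-- the enriched configurations contain the plain ones -/
lemma IE_contains_Imat {m n ℓ : ℕ} {A : Matrix (Fin m) (Fin n) (Fin 2)} (a b : Fin 2)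
    (ρ : Fin ℓ → Fin m) (σ : Fin (ℓ+1) → Fin n)
    (hρ : Function.Injective ρ) (hσ : Function.Injective σ)
    (hval : ∀ i j, A (ρ i) (σ j) = IE ℓ a b i j) :
    ConfigSub (Imat ℓ 2 a b) A := by
  refine ⟨ρ, fun j => σ (Fin.castSucc j), hρ, ?_, ?_⟩
  · intro j j' hjj
    exact Fin.castSucc_injective _ (hσ hjj)
  · intro i j
    rw [hval i (Fin.castSucc j)]
    simp only [IE, Imat, Fin.coe_castSucc]
    rw [if_neg (by exact Nat.ne_of_lt j.isLt)]
    by_cases hij : i = j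
    · rw [if_pos (by rw [hij]), if_pos hij]
    · rw [if_neg (by intro hv; exact hij (Fin.ext hv)), if_neg hij]

lemma TE_contains_Tmat {m n ℓ : ℕ} {A : Matrix (Fin m) (Fin n) (Fin 2)} (a b : Fin 2)
    (ρ : Fin ℓ → Fin m) (σ : Fin (ℓ+1) → Fin n)
    (hρ : Function.Injective ρ) (hσ : Function.Injective σ)
    (hval : ∀ i j, A (ρ i) (σ j) = TE ℓ a b i j) :
    ConfigSub (Tmat ℓ 2 a b) A := by
  refine ⟨ρ, fun j => σ (Fin.succ j), hρ, ?_, ?_⟩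
  · intro j j' hjj
    exact Fin.succ_injective _ (hσ hjj)
  · intro i j
    rw [hval i (Fin.succ j)]
    simp only [TE, Tmat, Fin.val_succ]
    rw [if_neg (by omega)]
    by_cases hij : (j : ℕ) < (i : ℕ)
    · rw [if_pos (by omega), if_pos hij]
    · rw [if_neg (by omega), if_neg hij]

/-- any simple matrix avoiding `𝓣_ℓ(2)` has at most `gbound ℓ` columns -/
lemma matrix_bound {m n ℓ : ℕ} (hℓ : 2 ≤ ℓ) (A : Matrix (Fin m) (Fin n) (Fin 2))
    (hS : Simple A) (hAv : AvoidsF (TFam ℓ 2) A) : n ≤ gbound ℓ := by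
  have hembinj : Function.Injective (embCols A) := by
    intro j j' h
    apply hS
    funext i
    have := congrFun h (i : ℕ)
    simpa only [embCols, dif_pos i.isLt, Fin.eta] using this
  set F : Finset Col := Finset.univ.image (embCols A) with hF
  have hFcard : F.card = n := by
    rw [hF, Finset.card_image_of_injective _ hembinj, Finset.card_univ, Fintype.card_fin]
  have hsupp : ∀ c ∈ F, ∀ y : ℕ, y ∉ Finset.range m → c y = 0 := by
    intro c hc y hy
    simp only [hF, Finset.mem_image, Finset.mem_univ, true_and] at hc
    obtain ⟨j, rfl⟩ := hc
    simp only [embCols]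
    rw [dif_neg (by simpa using hy)]
  have hAv' : AvoidE ℓ F := by
    intro a b hab
    constructor
    · intro hcfg
      obtain ⟨ρ, σ, hρ, hσ, hval⟩ := cfg_to_matrix (IE_row_ne hab) hcfg
      exact hAv ⟨ℓ, ℓ, Imat ℓ 2 a b⟩ ⟨a, b, hab, Or.inl rfl⟩
        (IE_contains_Imat a b ρ σ hρ hσ hval)
    · intro hcfg
      obtain ⟨ρ, σ, hρ, hσ, hval⟩ := cfg_to_matrix (TE_row_ne hab) hcfg
      exact hAv ⟨ℓ, ℓ, Tmat ℓ 2 a b⟩ ⟨a, b, hab, Or.inr rfl⟩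
        (TE_contains_Tmat a b ρ σ hρ hσ hval)
  have := main_bound ℓ (by omega) (Finset.range m) F hsupp hAv'
  omega

/-- the defining set of `forb` always contains 0 (for families of matrices with
at least one column each) -/
lemma zero_mem_forbset (m : ℕ) (𝓕 : Set (RMat 2)) (h𝓕 : ∀ G ∈ 𝓕, 0 < G.cols) :
    (0 : ℕ) ∈ { n | ∃ A : Matrix (Fin m) (Fin n) (Fin 2), Simple A ∧ AvoidsF 𝓕 A } := by
  refine ⟨fun _ j => j.elim0, ?_, ?_⟩
  · intro j; exact j.elim0
  · intro G hG hcfg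
    obtain ⟨ρ, σ, _, _, _⟩ := hcfg
    exact (σ ⟨0, h𝓕 G hG⟩).elim0

lemma TFam_cols_pos {ℓ : ℕ} (hℓ : 0 < ℓ) : ∀ G ∈ TFam ℓ 2, 0 < G.cols := by
  rintro G ⟨a, b, hab, h | h⟩ <;> (subst h; exact hℓ)

/-- part 1 of the theorem -/
lemma forb_lt (m ℓ : ℕ) (hℓ : 2 ≤ ℓ) :
    forb m 2 (TFam ℓ 2) < 6 ^ (6 * ℓ * (ℓ - 1)) := by
  have hbound : ∀ n ∈ { n | ∃ A : Matrix (Fin m) (Fin n) (Fin 2),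
      Simple A ∧ AvoidsF (TFam ℓ 2) A }, n ≤ gbound ℓ := by
    rintro n ⟨A, hS, hAv⟩
    exact matrix_bound hℓ A hS hAv
  have hne : { n | ∃ A : Matrix (Fin m) (Fin n) (Fin 2),
      Simple A ∧ AvoidsF (TFam ℓ 2) A }.Nonempty :=
    ⟨0, zero_mem_forbset m _ (TFam_cols_pos (by omega))⟩
  have h1 : forb m 2 (TFam ℓ 2) ≤ gbound ℓ := csSup_le hne hbound
  exact lt_of_le_of_lt h1 (gbound_lt ℓ hℓ)

/-- transitivity of configuration containment -/
lemma configsub_trans {k l k' l' m n : ℕ}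
    {M : Matrix (Fin k) (Fin l) (Fin 2)} {N : Matrix (Fin k') (Fin l') (Fin 2)}
    {A : Matrix (Fin m) (Fin n) (Fin 2)}
    (h1 : ConfigSub M N) (h2 : ConfigSub N A) : ConfigSub M A := by
  obtain ⟨ρ1, σ1, hρ1, hσ1, hv1⟩ := h1
  obtain ⟨ρ2, σ2, hρ2, hσ2, hv2⟩ := h2
  exact ⟨ρ2 ∘ ρ1, σ2 ∘ σ1, hρ2.comp hρ1, hσ2.comp hσ1,
    fun i j => by simp only [Function.comp_apply]; rw [hv2, hv1]⟩

lemma Imat_sub (ℓ : ℕ) (a b : Fin 2) :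
    ConfigSub (Imat ℓ 2 a b) (Imat (ℓ+1) 2 a b) := by
  refine ⟨Fin.castSucc, Fin.castSucc, Fin.castSucc_injective _, Fin.castSucc_injective _, ?_⟩
  intro i j
  simp only [Imat]
  by_cases hij : i = j
  · rw [if_pos (by rw [hij]), if_pos hij]
  · rw [if_neg (by intro hv; exact hij (Fin.castSucc_injective _ hv)), if_neg hij]

lemma Tmat_sub (ℓ : ℕ) (a b : Fin 2) :
    ConfigSub (Tmat ℓ 2 a b) (Tmat (ℓ+1) 2 a b) := by
  refine ⟨Fin.castSucc, Fin.castSucc, Fin.castSucc_injective _, Fin.castSucc_injective _, ?_⟩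
  intro i j
  simp only [Tmat, Fin.coe_castSucc]

lemma Tmat_rev (ℓ : ℕ) (hℓ : 1 ≤ ℓ) :
    ConfigSub (Tmat ℓ 2 0 1) (Tmat (ℓ+1) 2 1 0) := by
  refine ⟨fun i => ⟨ℓ - (i : ℕ), by omega⟩, fun j => ⟨ℓ - 1 - (j : ℕ), by omega⟩, ?_, ?_, ?_⟩
  · intro i i' hii
    have := congrArg Fin.val hii
    simp only [Fin.val_mk] at this
    have hi := i.isLt
    have hi' := i'.isLt
    exact Fin.ext (by omega)
  · intro j j' hjj
    have := congrArg Fin.val hjj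
    simp only [Fin.val_mk] at this
    have hj := j.isLt
    have hj' := j'.isLt
    exact Fin.ext (by omega)
  · intro i j
    simp only [Tmat, Fin.val_mk]
    have hi := i.isLt
    have hj := j.isLt
    by_cases hij : (j : ℕ) < (i : ℕ)
    · rw [if_neg (by omega), if_pos hij]
    · rw [if_pos (by omega), if_neg hij]

/-- part 2: the triple's forb is at most that of `𝓣_{ℓ+1}(2)` -/
lemma forb_triple_le (m ℓ : ℕ) (hℓ : 2 ≤ ℓ) :
    forb m 2 ({⟨ℓ, ℓ, Imat ℓ 2 1 0⟩, ⟨ℓ, ℓ, Imat ℓ 2 0 1⟩, ⟨ℓ, ℓ, Tmat ℓ 2 0 1⟩} :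
        Set (RMat 2)) ≤ forb m 2 (TFam (ℓ + 1) 2) := by
  have hsub : { n | ∃ A : Matrix (Fin m) (Fin n) (Fin 2), Simple A ∧
      AvoidsF ({⟨ℓ, ℓ, Imat ℓ 2 1 0⟩, ⟨ℓ, ℓ, Imat ℓ 2 0 1⟩, ⟨ℓ, ℓ, Tmat ℓ 2 0 1⟩} :
        Set (RMat 2)) A }
      ⊆ { n | ∃ A : Matrix (Fin m) (Fin n) (Fin 2), Simple A ∧
          AvoidsF (TFam (ℓ+1) 2) A } := by
    rintro n ⟨A, hS, hAv⟩
    refine ⟨A, hS, ?_⟩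
    rintro G ⟨a, b, hab, hG | hG⟩ <;> subst hG <;> intro hcfg
    · -- identity member
      rcases fin2_cases a with ha | ha <;> rcases fin2_cases b with hb | hb <;>
        (try (exfalso; rw [ha, hb] at hab; exact hab rfl)) <;> subst ha <;> subst hb
      · exact hAv ⟨ℓ, ℓ, Imat ℓ 2 0 1⟩ (by simp)
          (configsub_trans (Imat_sub ℓ 0 1) hcfg)
      · exact hAv ⟨ℓ, ℓ, Imat ℓ 2 1 0⟩ (by simp)
          (configsub_trans (Imat_sub ℓ 1 0) hcfg)
    · -- triangle member
      rcases fin2_cases a with ha | ha <;> rcases fin2_cases b with hb | hb <;>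
        (try (exfalso; rw [ha, hb] at hab; exact hab rfl)) <;> subst ha <;> subst hb
      · exact hAv ⟨ℓ, ℓ, Tmat ℓ 2 0 1⟩ (by simp)
          (configsub_trans (Tmat_sub ℓ 0 1) hcfg)
      · exact hAv ⟨ℓ, ℓ, Tmat ℓ 2 0 1⟩ (by simp)
          (configsub_trans (Tmat_rev ℓ (by omega)) hcfg)
  have hbdd : BddAbove { n | ∃ A : Matrix (Fin m) (Fin n) (Fin 2), Simple A ∧
      AvoidsF (TFam (ℓ+1) 2) A } := by
    refine ⟨gbound (ℓ+1), ?_⟩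
    rintro n ⟨A, hS, hAv⟩
    exact matrix_bound (by omega) A hS hAv
  have hne : { n | ∃ A : Matrix (Fin m) (Fin n) (Fin 2), Simple A ∧
      AvoidsF ({⟨ℓ, ℓ, Imat ℓ 2 1 0⟩, ⟨ℓ, ℓ, Imat ℓ 2 0 1⟩, ⟨ℓ, ℓ, Tmat ℓ 2 0 1⟩} :
        Set (RMat 2)) A }.Nonempty := by
    refine ⟨0, zero_mem_forbset m _ ?_⟩
    rintro G (hG | hG | hG) <;> (subst hG; show 0 < ℓ; omega)
  exact csSup_le_csSup hbdd hne hsub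

end AL

/-- For every `ℓ ≥ 2` and `m ≥ 1`:
`forb(m, 2, 𝓣_ℓ(2)) < 6^{6ℓ(ℓ−1)}`, and consequently
`forb(m, {I_ℓ, I_ℓᶜ, T_ℓ}) ≤ forb(m, 2, 𝓣_{ℓ+1}(2)) < 6^{6ℓ(ℓ+1)}`.
Here `I_ℓ = I_ℓ(1,0)`, `I_ℓᶜ = I_ℓ(0,1)`, `T_ℓ = T_ℓ(0,1)`. -/
theorem forb_TFam_two_lt (ℓ m : ℕ) (hℓ : 2 ≤ ℓ) (hm : 1 ≤ m) :
    forb m 2 (TFam ℓ 2) < 6 ^ (6 * ℓ * (ℓ - 1)) ∧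
    forb m 2 ({⟨ℓ, ℓ, Imat ℓ 2 1 0⟩, ⟨ℓ, ℓ, Imat ℓ 2 0 1⟩, ⟨ℓ, ℓ, Tmat ℓ 2 0 1⟩} :
        Set (RMat 2)) ≤ forb m 2 (TFam (ℓ + 1) 2) ∧
    forb m 2 (TFam (ℓ + 1) 2) < 6 ^ (6 * ℓ * (ℓ + 1)) := by
  refine ⟨AL.forb_lt m ℓ hℓ, AL.forb_triple_le m ℓ hℓ, ?_⟩
  have h := AL.forb_lt m (ℓ+1) (by omega)
  have he : 6 * (ℓ+1) * ((ℓ+1) - 1) = 6 * ℓ * (ℓ + 1) := by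
    have h1 : (ℓ+1) - 1 = ℓ := rfl
    rw [h1]; ring
  rwa [he] at h
end

section
/- Let ℓ ≥ 2, r ≥ 2 and t ≥ 1 be given. Then there is a constant c (depending on ℓ, r, t but not on m) such that for all m ≥ 1, forb(m, r, t·𝓣_ℓ(r)) ≤ 2r(r−1)(t−1)·m + c. -/
namespace ForbAux

open Finset

/-- extensionality off one row -/
lemma ext_off {r m : ℕ} (i : Fin (m+1)) {f g : Fin (m+1) → Fin r}
    (h0 : f i = g i) (h1 : f ∘ i.succAbove = g ∘ i.succAbove) : f = g := by
  funext x
  rcases eq_or_ne x i with rfl | hx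
  · exact h0
  · obtain ⟨y, rfl⟩ := Fin.exists_succAbove_eq hx
    exact congrFun h1 y

lemma update_comp_succAbove {r m : ℕ} (i : Fin (m+1)) (f : Fin (m+1) → Fin r) (e : Fin r) :
    (Function.update f i e) ∘ i.succAbove = f ∘ i.succAbove := by
  funext y
  exact Function.update_of_ne (Fin.succAbove_ne i y) e f

/-- enumerate `k` elements of a finset -/
lemma enum_of_card {α : Type*} {s : Finset α} {k : ℕ} (h : k ≤ s.card) :
    ∃ g : Fin k → α, Function.Injective g ∧ ∀ q, g q ∈ s := by
  obtain ⟨u, hus, huc⟩ := Finset.exists_subset_card_eq h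
  have e : { x // x ∈ u } ≃ Fin k := huc ▸ u.equivFin
  refine ⟨fun q => (e.symm q).1, fun q q' hq => ?_, fun q => hus (e.symm q).2⟩
  have := Subtype.ext hq
  exact e.symm.injective this

/-- three increasing elements from a finset of card ≥ 3 -/
lemma three_chain {α : Type*} [LinearOrder α] {s : Finset α} (h : 3 ≤ s.card) :
    ∃ a ∈ s, ∃ b ∈ s, ∃ c ∈ s, a < b ∧ b < c := by
  have hne : s.Nonempty := by
    rw [← Finset.card_pos]; omega
  set a := s.min' hne with ha'
  set c := s.max' hne with hc'
  have ha : a ∈ s := s.min'_mem hne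
  have hc : c ∈ s := s.max'_mem hne
  have hac : a ≠ c := by
    intro hac
    have : s.card ≤ 1 := by
      apply Finset.card_le_one.2
      intro x hx y hy
      have hx1 : x = a := le_antisymm (by rw [hac]; exact s.le_max' x hx) (s.min'_le x hx)
      have hy1 : y = a := le_antisymm (by rw [hac]; exact s.le_max' y hy) (s.min'_le y hy)
      rw [hx1, hy1]
    omega
  have hu : 1 ≤ ((s.erase a).erase c).card := by
    have h1 : (s.erase a).card = s.card - 1 := Finset.card_erase_of_mem ha
    have hc2 : c ∈ s.erase a := Finset.mem_erase.2 ⟨Ne.symm hac, hc⟩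
    have h2 : ((s.erase a).erase c).card = (s.erase a).card - 1 := Finset.card_erase_of_mem hc2
    omega
  obtain ⟨b, hb⟩ := Finset.card_pos.1 hu
  have hbc := Finset.mem_erase.1 hb
  have hba := Finset.mem_erase.1 hbc.2
  refine ⟨a, ha, b, hba.2, c, hc, ?_, ?_⟩
  · exact lt_of_le_of_ne (s.min'_le b hba.2) (Ne.symm hba.1)
  · exact lt_of_le_of_ne (s.le_max' b hba.2) hbc.1


lemma chain_lemma {α γ : Type*} [LinearOrder α] [DecidableEq γ] [Fintype γ] [Nonempty γ]
    (f : α → α → γ) :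
    ∀ (P : ℕ) (A : Finset α), (Fintype.card γ + 1) ^ P ≤ A.card →
    ∃ (s : Finset α) (cf : α → γ), s ⊆ A ∧ s.card = P ∧
      ∀ a ∈ s, ∀ b ∈ s, a < b → f a b = cf a := by
  intro P
  induction P with
  | zero =>
    intro A _
    exact ⟨∅, fun _ => Classical.arbitrary γ, by simp, by simp, by simp⟩
  | succ P ih =>
    intro A hA
    set k := Fintype.card γ with hk'
    have hk : 1 ≤ k := Fintype.card_pos
    have hQ : 1 ≤ (k+1)^P := Nat.one_le_pow _ _ (by omega)
    have hAne : A.Nonempty := by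
      rw [← Finset.card_pos]
      have : 0 < (k+1)^(P+1) := Nat.pow_pos (by omega)
      omega
    set ξ := A.min' hAne with hξ'
    have hξA : ξ ∈ A := A.min'_mem hAne
    set A' := A.erase ξ with hA''
    have hcardA' : A.card - 1 = A'.card := (Finset.card_erase_of_mem hξA).symm
    have hpow : (k+1)^(P+1) = (k+1)^P * (k+1) := by ring
    have hineq : (Finset.univ : Finset γ).card * ((k+1)^P - 1) < A'.card := by
      rw [Finset.card_univ, ← hk']
      obtain ⟨Q, hQeq⟩ : ∃ Q, (k+1)^P = Q + 1 := ⟨(k+1)^P - 1, by omega⟩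
      rw [hQeq] at hpow ⊢
      have h2 : (Q+1)*(k+1) = k * Q + Q + k + 1 := by ring
      simp only [Nat.add_sub_cancel]
      omega
    obtain ⟨y, -, hy⟩ := Finset.exists_lt_card_fiber_of_mul_lt_card_of_maps_to
      (f := fun a => f ξ a) (t := (Finset.univ : Finset γ)) (fun a _ => Finset.mem_univ _) hineq
    set B := A'.filter (fun a => f ξ a = y) with hB'
    have hBcard : (k+1)^P ≤ B.card := by omega
    obtain ⟨s', cf', hs'B, hs'card, hmono'⟩ := ih B hBcard
    have hs'A' : s' ⊆ A' := hs'B.trans (Finset.filter_subset _ _)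
    have hξs' : ξ ∉ s' := fun h => (Finset.mem_erase.1 (hs'A' h)).1 rfl
    refine ⟨insert ξ s', fun a => if a = ξ then y else cf' a, ?_, ?_, ?_⟩
    · intro x hx
      rcases Finset.mem_insert.1 hx with rfl | hx
      · exact hξA
      · exact Finset.mem_of_mem_erase (hs'A' hx)
    · rw [Finset.card_insert_of_notMem hξs', hs'card]
    · intro a ha b hb hab
      rcases Finset.mem_insert.1 ha with rfl | ha
      · rcases Finset.mem_insert.1 hb with rfl | hb
        · exact absurd hab (lt_irrefl _)
        · have hfy : f ξ b = y := (Finset.mem_filter.1 (hs'B hb)).2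
          simp [hfy]
      · have haξ : a ≠ ξ := fun h => hξs' (h ▸ ha)
        rcases Finset.mem_insert.1 hb with rfl | hb
        · exfalso
          have : ξ ≤ a := A.min'_le a (Finset.mem_of_mem_erase (hs'A' ha))
          exact absurd hab (not_lt.2 this)
        · simp only [if_neg haξ]
          exact hmono' a ha b hb hab

lemma ramsey_pairs {α γ : Type*} [LinearOrder α] [DecidableEq γ] [Fintype γ] [Nonempty γ]
    (f : α → α → γ) (L : ℕ) (A : Finset α)
    (hA : (Fintype.card γ + 1) ^ (Fintype.card γ * L + 1) ≤ A.card) :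
    ∃ (s : Finset α) (c : γ), s ⊆ A ∧ L ≤ s.card ∧
      ∀ a ∈ s, ∀ b ∈ s, a < b → f a b = c := by
  obtain ⟨s, cf, hsA, hscard, hmono⟩ := chain_lemma f (Fintype.card γ * L + 1) A hA
  have hineq : (Finset.univ : Finset γ).card * L < s.card := by
    rw [hscard, Finset.card_univ]; omega
  obtain ⟨c, -, hc⟩ := Finset.exists_lt_card_fiber_of_mul_lt_card_of_maps_to
    (f := cf) (t := (Finset.univ : Finset γ)) (fun a _ => Finset.mem_univ _) hineq
  refine ⟨s.filter (fun a => cf a = c), c, (Finset.filter_subset _ _).trans hsA, by omega, ?_⟩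
  intro a ha b hb hab
  have ha' := Finset.mem_filter.1 ha
  have hb' := Finset.mem_filter.1 hb
  rw [hmono a ha'.1 b hb'.1 hab, ha'.2]


/-- the set of columns `C` contains `t` disjoint copies of the `ℓ×ℓ` pattern `P` -/
def GoodCols {r : ℕ} (ℓ t m : ℕ) (C : Finset (Fin m → Fin r))
    (P : Matrix (Fin ℓ) (Fin ℓ) (Fin r)) : Prop :=
  ∃ ρ : Fin ℓ → Fin m, Function.Injective ρ ∧
    ∃ h : Fin ℓ → Fin t → (Fin m → Fin r),
      (∀ j q, h j q ∈ C) ∧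
      (∀ j q j' q', h j q = h j' q' → j = j' ∧ q = q') ∧
      (∀ i j q, h j q (ρ i) = P i j)

def AvoidAll {r : ℕ} (ℓ t m : ℕ) (C : Finset (Fin m → Fin r)) : Prop :=
  ∀ a b : Fin r, a ≠ b →
    ¬ GoodCols ℓ t m C (Imat ℓ r a b) ∧ ¬ GoodCols ℓ t m C (Tmat ℓ r a b)

lemma goodCols_lift {r ℓ t m : ℕ} (i : Fin (m+1)) (C : Finset (Fin (m+1) → Fin r))
    (P : Matrix (Fin ℓ) (Fin ℓ) (Fin r))
    (hg : GoodCols ℓ t m (C.image (fun f => f ∘ i.succAbove)) P) :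
    GoodCols ℓ t (m+1) C P := by
  obtain ⟨ρ, hρ, h, hmem, hinj, hval⟩ := hg
  have hch : ∀ j q, ∃ g, g ∈ C ∧ g ∘ i.succAbove = h j q := by
    intro j q
    obtain ⟨g, hgC, hgeq⟩ := Finset.mem_image.1 (hmem j q)
    exact ⟨g, hgC, hgeq⟩
  choose g hgC hgeq using hch
  refine ⟨fun i' => i.succAbove (ρ i'), fun a b hab => hρ (i.succAbove_right_injective hab),
    g, hgC, ?_, ?_⟩
  · intro j q j' q' hgg
    apply hinj
    rw [← hgeq j q, ← hgeq j' q', hgg]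
  · intro i' j q
    have h1 : g j q (i.succAbove (ρ i')) = h j q (ρ i') := congrFun (hgeq j q) (ρ i')
    rw [h1, hval i' j q]

lemma avoidAll_lift {r ℓ t m : ℕ} (i : Fin (m+1)) (C : Finset (Fin (m+1) → Fin r))
    (hav : AvoidAll ℓ t (m+1) C) :
    AvoidAll ℓ t m (C.image (fun f => f ∘ i.succAbove)) := by
  intro a b hab
  exact ⟨fun hg => (hav a b hab).1 (goodCols_lift i C _ hg),
         fun hg => (hav a b hab).2 (goodCols_lift i C _ hg)⟩


/-- structure of a "bad" row: K distinct (representative, extra-value) pairs -/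
lemma bad_row_pairs {r m : ℕ} (hr : 0 < r) (C : Finset (Fin (m+1) → Fin r)) (i : Fin (m+1))
    (K : ℕ)
    (hbad : (C.image (fun f => f ∘ i.succAbove)).card + K ≤ C.card) :
    ∃ g : Fin K → ((Fin (m+1) → Fin r) × Fin r),
      Function.Injective g ∧
      (∀ p, (g p).1 ∈ C) ∧
      (∀ p, (g p).2 ≠ (g p).1 i) ∧
      (∀ p, Function.update (g p).1 i (g p).2 ∈ C) ∧
      (∀ p q, (g p).1 ∘ i.succAbove = (g q).1 ∘ i.succAbove → (g p).1 = (g q).1) := by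
  classical
  have hinh : Nonempty (Fin (m+1) → Fin r) := ⟨fun _ => ⟨0, hr⟩⟩
  set π : (Fin (m+1) → Fin r) → (Fin m → Fin r) := fun f => f ∘ i.succAbove with hπ
  set Rep : (Fin m → Fin r) → (Fin (m+1) → Fin r) := fun v =>
    if h : ∃ f, f ∈ C ∧ π f = v then h.choose else Classical.arbitrary _ with hRep
  have hRepSpec : ∀ v, (∃ f, f ∈ C ∧ π f = v) → Rep v ∈ C ∧ π (Rep v) = v := by
    intro v hv
    rw [hRep]
    simp only [dif_pos hv]
    exact hv.choose_spec
  -- the set of non-representative columns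
  set S := C.filter (fun f => ¬ f = Rep (π f)) with hS
  set T := C.filter (fun f => f = Rep (π f)) with hT
  have hCT : ∀ f ∈ C, Rep (π f) ∈ C ∧ π (Rep (π f)) = π f := fun f hf =>
    hRepSpec (π f) ⟨f, hf, rfl⟩
  -- T bijects with the image of π
  have hTcard : T.card = (C.image π).card := by
    apply Finset.card_bij (fun f _ => π f)
    · intro f hf
      exact Finset.mem_image_of_mem π (Finset.mem_filter.1 hf).1
    · intro f hf f' hf' hππ
      have h1 := (Finset.mem_filter.1 hf).2
      have h2 := (Finset.mem_filter.1 hf').2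
      rw [h1, h2, hππ]
    · intro v hv
      obtain ⟨f, hf, rfl⟩ := Finset.mem_image.1 hv
      have h1 := hCT f hf
      refine ⟨Rep (π f), Finset.mem_filter.2 ⟨h1.1, ?_⟩, h1.2⟩
      rw [h1.2]
  have hScard : K ≤ S.card := by
    have := Finset.card_filter_add_card_filter_not
      (s := C) (p := fun f => f = Rep (π f))
    have hST : T.card + S.card = C.card := this
    omega
  -- pairs
  set φ : (Fin (m+1) → Fin r) → ((Fin (m+1) → Fin r) × Fin r) :=
    fun f => (Rep (π f), f i) with hφ
  have hφinj : Set.InjOn φ S := by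
    intro f hf f' hf' heq
    have h1 : Rep (π f) = Rep (π f') := congrArg Prod.fst heq
    have h2 : f i = f' i := congrArg Prod.snd heq
    have hππ : π f = π f' := by
      have e1 := (hCT f (Finset.mem_filter.1 hf).1).2
      have e2 := (hCT f' (Finset.mem_filter.1 hf').1).2
      rw [← e1, ← e2, h1]
    exact ext_off i h2 hππ
  set PS := S.image φ with hPS
  have hPScard : K ≤ PS.card := by
    rw [hPS, Finset.card_image_of_injOn hφinj]; exact hScard
  have hPSprop : ∀ pr ∈ PS, pr.1 ∈ C ∧ pr.2 ≠ pr.1 i ∧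
      Function.update pr.1 i pr.2 ∈ C ∧ pr.1 = Rep (π pr.1) := by
    intro pr hpr
    obtain ⟨f, hfS, rfl⟩ := Finset.mem_image.1 hpr
    have hfC := (Finset.mem_filter.1 hfS).1
    have hfne := (Finset.mem_filter.1 hfS).2
    have h1 := hCT f hfC
    have hππ : π (Rep (π f)) = π f := h1.2
    have hne2 : f i ≠ (Rep (π f)) i := by
      intro heq
      exact hfne (ext_off i heq hππ.symm)
    refine ⟨h1.1, hne2, ?_, ?_⟩
    · have : Function.update (Rep (π f)) i (f i) = f := by
        apply ext_off i
        · simp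
        · rw [update_comp_succAbove]
          exact hππ
      rw [hφ]
      simpa [this] using hfC
    · simp only [hφ]
      rw [hππ]
  obtain ⟨g, hginj, hgmem⟩ := enum_of_card hPScard
  refine ⟨g, hginj, fun p => (hPSprop _ (hgmem p)).1, fun p => (hPSprop _ (hgmem p)).2.1,
    fun p => (hPSprop _ (hgmem p)).2.2.1, ?_⟩
  intro p q hpq
  have e1 := (hPSprop _ (hgmem p)).2.2.2
  have e2 := (hPSprop _ (hgmem q)).2.2.2
  rw [e1, e2]
  exact congrArg Rep hpq


def Ebound (r t : ℕ) : ℕ := 2*r*(r-1)*(t-1)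
def K0 (r t : ℕ) : ℕ := Ebound r t + 1
def L0 (r ℓ t : ℕ) : ℕ := ℓ*(2*t+1) + r*r*ℓ + 1
noncomputable def M0 (r ℓ t : ℕ) : ℕ :=
  (Fintype.card (Fin (K0 r t) → Fin r × Fin r) + 1) ^
    (Fintype.card (Fin (K0 r t) → Fin r × Fin r) * L0 r ℓ t + 1)


lemma bad_bounded {r ℓ t m : ℕ} (hr : 2 ≤ r) (hℓ : 2 ≤ ℓ) (ht : 1 ≤ t)
    (C : Finset (Fin (m+1) → Fin r)) (hav : AvoidAll ℓ t (m+1) C) :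
    ((Finset.univ : Finset (Fin (m+1))).filter
      (fun i => (C.image (fun f => f ∘ i.succAbove)).card + K0 r t ≤ C.card)).card
      ≤ M0 r ℓ t := by
  classical
  by_contra hcon
  push_neg at hcon
  set Bad := ((Finset.univ : Finset (Fin (m+1))).filter
      (fun i => (C.image (fun f => f ∘ i.succAbove)).card + K0 r t ≤ C.card)) with hBad
  -- data for bad rows
  have hdat0 : ∀ i : Fin (m+1), ∃ g : Fin (K0 r t) → ((Fin (m+1) → Fin r) × Fin r),
      i ∈ Bad → (Function.Injective g ∧
      (∀ p, (g p).1 ∈ C) ∧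
      (∀ p, (g p).2 ≠ (g p).1 i) ∧
      (∀ p, Function.update (g p).1 i (g p).2 ∈ C) ∧
      (∀ p q, (g p).1 ∘ i.succAbove = (g q).1 ∘ i.succAbove → (g p).1 = (g q).1)) := by
    intro i
    by_cases hi : i ∈ Bad
    · obtain ⟨g, h1, h2, h3, h4, h5⟩ := bad_row_pairs (by omega) C i (K0 r t)
        (Finset.mem_filter.1 hi).2
      exact ⟨g, fun _ => ⟨h1, h2, h3, h4, h5⟩⟩
    · exact ⟨fun _ => ⟨fun _ => ⟨0, by omega⟩, ⟨0, by omega⟩⟩, fun h => absurd h hi⟩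
  choose dat hdat using hdat0
  haveI : Nonempty (Fin (K0 r t) → Fin r × Fin r) :=
    ⟨fun _ => (⟨0, by omega⟩, ⟨0, by omega⟩)⟩
  set fcolor : Fin (m+1) → Fin (m+1) → (Fin (K0 r t) → Fin r × Fin r) :=
    fun u w => fun p => ((dat u p).1 w, (dat w p).1 u) with hfcolor
  obtain ⟨s, c, hsBad, hscard, hmono⟩ := ramsey_pairs fcolor (L0 r ℓ t) Bad (le_of_lt hcon)
  obtain ⟨s3, hs3s, hs3card⟩ := Finset.exists_subset_card_eq hscard
  set Rm : Fin (L0 r ℓ t) → Fin (m+1) :=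
    fun k => ((s3.orderIsoOfFin hs3card) k : Fin (m+1)) with hRm
  have hRmono : StrictMono Rm := by
    intro a b hab
    exact (s3.orderIsoOfFin hs3card).strictMono hab
  have hRmemS : ∀ k, Rm k ∈ s := fun k => hs3s ((s3.orderIsoOfFin hs3card) k).2
  have hRmem : ∀ k, Rm k ∈ Bad := fun k => hsBad (hRmemS k)
  set X : Fin (K0 r t) → Fin r := fun p => (c p).1 with hX
  set Y : Fin (K0 r t) → Fin r := fun p => (c p).2 with hY
  have hmonoval : ∀ k k' : Fin (L0 r ℓ t), k < k' → ∀ p,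
      (dat (Rm k) p).1 (Rm k') = X p ∧ (dat (Rm k') p).1 (Rm k) = Y p := by
    intro k k' hkk p
    have h1 := hmono (Rm k) (hRmemS k) (Rm k') (hRmemS k') (hRmono hkk)
    have h2 := congrFun h1 p
    exact ⟨congrArg Prod.fst h2, congrArg Prod.snd h2⟩
  by_cases hXY : ∀ p, X p = Y p
  · -- Case B : identity pattern
    set valOf : Fin (L0 r ℓ t) → Fin (K0 r t) → Fin r := fun u p =>
      if (dat (Rm u) p).2 = X p then (dat (Rm u) p).1 (Rm u) else (dat (Rm u) p).2 with hvalOf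
    set colOf : Fin (L0 r ℓ t) → Fin (K0 r t) → (Fin (m+1) → Fin r) := fun u p =>
      if (dat (Rm u) p).2 = X p then (dat (Rm u) p).1
      else Function.update (dat (Rm u) p).1 (Rm u) (dat (Rm u) p).2 with hcolOf
    have hcol_mem : ∀ u p, colOf u p ∈ C := by
      intro u p
      by_cases hb : (dat (Rm u) p).2 = X p
      · simp only [hcolOf, if_pos hb]
        exact (hdat (Rm u) (hRmem u)).2.1 p
      · simp only [hcolOf, if_neg hb]
        exact (hdat (Rm u) (hRmem u)).2.2.2.1 p
    have hcol_self : ∀ u p, colOf u p (Rm u) = valOf u p := by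
      intro u p
      by_cases hb : (dat (Rm u) p).2 = X p
      · simp only [hcolOf, hvalOf, if_pos hb]
      · simp only [hcolOf, hvalOf, if_neg hb, Function.update_self]
    have hval_ne : ∀ u p, valOf u p ≠ X p := by
      intro u p
      by_cases hb : (dat (Rm u) p).2 = X p
      · simp only [hvalOf, if_pos hb]
        intro hcon2
        exact ((hdat (Rm u) (hRmem u)).2.2.1 p) (by rw [hb, ← hcon2])
      · simp only [hvalOf, if_neg hb]
        exact hb
    have hcol_other : ∀ u u' p, u ≠ u' → colOf u p (Rm u') = X p := by
      intro u u' p huu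
      have hR : Rm u' ≠ Rm u := fun h => huu (hRmono.injective h).symm
      have hoff : colOf u p (Rm u') = (dat (Rm u) p).1 (Rm u') := by
        by_cases hb : (dat (Rm u) p).2 = X p
        · simp only [hcolOf, if_pos hb]
        · simp only [hcolOf, if_neg hb]
          exact Function.update_of_ne hR _ _
      rw [hoff]
      rcases lt_or_gt_of_ne huu with h | h
      · exact (hmonoval u u' h p).1
      · rw [hXY p]
        exact (hmonoval u' u h p).2
    have hcol_canon : ∀ u p,
        colOf u p = Function.update (dat (Rm u) p).1 (Rm u) (valOf u p) := by
      intro u p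
      by_cases hb : (dat (Rm u) p).2 = X p
      · simp only [hcolOf, hvalOf, if_pos hb]
        exact (Function.update_eq_self _ _).symm
      · simp only [hcolOf, hvalOf, if_neg hb]
    have hcol_distinct : ∀ u p p', p ≠ p' → X p = X p' → valOf u p = valOf u p' →
        colOf u p ≠ colOf u p' := by
      intro u p p' hpp hXX hvv heq
      have h1 : (dat (Rm u) p).1 ∘ (Rm u).succAbove = (dat (Rm u) p').1 ∘ (Rm u).succAbove := by
        have e1 := hcol_canon u p
        have e2 := hcol_canon u p'
        calc (dat (Rm u) p).1 ∘ (Rm u).succAbove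
            = (colOf u p) ∘ (Rm u).succAbove := by rw [e1, update_comp_succAbove]
          _ = (colOf u p') ∘ (Rm u).succAbove := by rw [heq]
          _ = (dat (Rm u) p').1 ∘ (Rm u).succAbove := by rw [e2, update_comp_succAbove]
      have h2 : (dat (Rm u) p).1 = (dat (Rm u) p').1 :=
        (hdat (Rm u) (hRmem u)).2.2.2.2 p p' h1
      have h3 : (dat (Rm u) p).2 ≠ (dat (Rm u) p').2 := by
        intro h4
        exact hpp ((hdat (Rm u) (hRmem u)).1 (Prod.ext h2 h4))
      by_cases hb : (dat (Rm u) p).2 = X p <;> by_cases hb' : (dat (Rm u) p').2 = X p'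
      · exact h3 (by rw [hb, hb', hXX])
      · have v1 : valOf u p = (dat (Rm u) p).1 (Rm u) := by simp only [hvalOf, if_pos hb]
        have v2 : valOf u p' = (dat (Rm u) p').2 := by simp only [hvalOf, if_neg hb']
        have := (hdat (Rm u) (hRmem u)).2.2.1 p'
        rw [← h2] at this
        exact this (by rw [← v2, ← hvv, v1])
      · have v1 : valOf u p = (dat (Rm u) p).2 := by simp only [hvalOf, if_neg hb]
        have v2 : valOf u p' = (dat (Rm u) p').1 (Rm u) := by simp only [hvalOf, if_pos hb']
        have := (hdat (Rm u) (hRmem u)).2.2.1 p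
        rw [h2] at this
        exact this (by rw [← v1, hvv, v2])
      · have v1 : valOf u p = (dat (Rm u) p).2 := by simp only [hvalOf, if_neg hb]
        have v2 : valOf u p' = (dat (Rm u) p').2 := by simp only [hvalOf, if_neg hb']
        exact h3 (by rw [← v1, ← v2, hvv])
    -- per-row pigeonhole
    have hcell : ∀ u : Fin (L0 r ℓ t), ∃ cc : Fin r × Fin r, ∃ pfn : Fin t → Fin (K0 r t),
        Function.Injective pfn ∧ ∀ q, (X (pfn q), valOf u (pfn q)) = cc := by
      intro u
      have hineq : (Finset.univ : Finset (Fin r × Fin r)).card * (t-1)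
          < (Finset.univ : Finset (Fin (K0 r t))).card := by
        rw [Finset.card_univ, Finset.card_univ, Fintype.card_prod, Fintype.card_fin,
          Fintype.card_fin]
        have h1 : r*r ≤ 2*r*(r-1) := by
          obtain ⟨r2, rfl⟩ : ∃ r2, r = r2 + 2 := ⟨r - 2, by omega⟩
          have : (r2+2) * (r2+2) ≤ 2*(r2+2)*(r2+1) := by nlinarith
          have h2 : r2 + 2 - 1 = r2 + 1 := by omega
          rw [h2]
          exact this
        have h2 : r*r*(t-1) ≤ 2*r*(r-1)*(t-1) := Nat.mul_le_mul_right _ h1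
        have h3 : Fintype.card (Fin (K0 r t)) = 2*r*(r-1)*(t-1) + 1 := by
          rw [Fintype.card_fin]; rfl
        simp only [Fintype.card_fin] at *
        unfold K0 Ebound
        omega
      obtain ⟨y, -, hy⟩ := Finset.exists_lt_card_fiber_of_mul_lt_card_of_maps_to
        (f := fun p => ((X p, valOf u p) : Fin r × Fin r))
        (t := (Finset.univ : Finset (Fin r × Fin r))) (fun p _ => Finset.mem_univ _) hineq
      have hy2 : t ≤ ((Finset.univ : Finset (Fin (K0 r t))).filter
          (fun p => ((X p, valOf u p) : Fin r × Fin r) = y)).card := by omega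
      obtain ⟨pfn, hpfinj, hpfmem⟩ := enum_of_card hy2
      exact ⟨y, pfn, hpfinj, fun q => (Finset.mem_filter.1 (hpfmem q)).2⟩
    choose cu pfn hpfinj hpfcell using hcell
    -- pigeonhole over rows
    have hineqrow : (Finset.univ : Finset (Fin r × Fin r)).card * (ℓ-1)
        < (Finset.univ : Finset (Fin (L0 r ℓ t))).card := by
      simp only [Finset.card_univ, Fintype.card_prod, Fintype.card_fin]
      have h1 : r*r*(ℓ-1) ≤ r*r*ℓ := Nat.mul_le_mul_left _ (by omega)
      unfold L0
      omega
    obtain ⟨cz, -, hcz⟩ := Finset.exists_lt_card_fiber_of_mul_lt_card_of_maps_to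
      (f := cu) (t := (Finset.univ : Finset (Fin r × Fin r))) (fun u _ => Finset.mem_univ _)
      hineqrow
    have hcz2 : ℓ ≤ ((Finset.univ : Finset (Fin (L0 r ℓ t))).filter
        (fun u => cu u = cz)).card := by omega
    obtain ⟨us, husinj, husmem⟩ := enum_of_card hcz2
    have huscell : ∀ s', cu (us s') = cz := fun s' => (Finset.mem_filter.1 (husmem s')).2
    set z := cz.1 with hz
    set w := cz.2 with hw
    have hkey : ∀ (s' : Fin ℓ) q, X (pfn (us s') q) = z ∧ valOf (us s') (pfn (us s') q) = w := by
      intro s' q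
      have h5 := hpfcell (us s') q
      rw [huscell s'] at h5
      exact ⟨(Prod.ext_iff.1 h5).1, (Prod.ext_iff.1 h5).2⟩
    have hwz : w ≠ z := by
      have h0 : (0 : ℕ) < ℓ := by omega
      have t0 : (0 : ℕ) < t := by omega
      have := hkey ⟨0, h0⟩ ⟨0, t0⟩
      rw [← this.1, ← this.2]
      exact hval_ne _ _
    apply (hav w z hwz).1
    refine ⟨fun s' => Rm (us s'), fun a b hab => husinj (hRmono.injective hab),
      fun s' q => colOf (us s') (pfn (us s') q), fun s' q => hcol_mem _ _, ?_, ?_⟩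
    · intro j q j' q' heq
      replace heq : colOf (us j) (pfn (us j) q) = colOf (us j') (pfn (us j') q') := heq
      by_cases hjj : j = j'
      · subst hjj
        refine ⟨rfl, ?_⟩
        by_contra hqq
        have hpp : pfn (us j) q ≠ pfn (us j) q' := fun h => hqq (hpfinj (us j) h)
        exact hcol_distinct (us j) _ _ hpp
          (by rw [(hkey j q).1, (hkey j q').1])
          (by rw [(hkey j q).2, (hkey j q').2]) heq
      · exfalso
        have e1 : colOf (us j) (pfn (us j) q) (Rm (us j)) = w := by
          rw [hcol_self]; exact (hkey j q).2
        have e2 : colOf (us j') (pfn (us j') q') (Rm (us j)) = z := by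
          rw [hcol_other (us j') (us j) _ (fun h => hjj (husinj h).symm)]
          exact (hkey j' q').1
        rw [heq, e2] at e1
        exact hwz e1.symm
    · intro i j q
      show colOf (us j) (pfn (us j) q) (Rm (us i)) = Imat ℓ r w z i j
      by_cases hij : i = j
      · subst hij
        rw [hcol_self]
        simp only [Imat, if_pos rfl]
        exact (hkey i q).2
      · rw [hcol_other (us j) (us i) _ (fun h => hij (husinj h).symm)]
        simp only [Imat, if_neg hij]
        exact (hkey j q).1
  · -- Case A : triangular pattern
    push_neg at hXY
    obtain ⟨p, hp⟩ := hXY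
    set fcol : Fin (L0 r ℓ t) → (Fin (m+1) → Fin r) := fun k => (dat (Rm k) p).1 with hfcol
    -- positions of the selected rows
    have hposlt : ∀ i' : Fin ℓ, (ℓ-1-(i':ℕ))*(2*t+1) + 2*t < L0 r ℓ t := by
      intro i'
      have h1 : (ℓ-1-(i':ℕ)) ≤ ℓ-1 := by omega
      have h2 : (ℓ-1-(i':ℕ))*(2*t+1) ≤ (ℓ-1)*(2*t+1) := Nat.mul_le_mul_right _ h1
      have h3 : (ℓ-1)*(2*t+1) + (2*t+1) = ℓ*(2*t+1) := by
        obtain ⟨l1, rfl⟩ : ∃ l1, ℓ = l1 + 1 := ⟨ℓ-1, by omega⟩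
        simp only [Nat.add_sub_cancel]
        ring
      unfold L0
      omega
    set pos : Fin ℓ → Fin (L0 r ℓ t) :=
      fun i' => ⟨(ℓ-1-(i':ℕ))*(2*t+1) + 2*t, hposlt i'⟩ with hpos
    have hposinj : Function.Injective pos := by
      intro a b hab
      have h1 : (ℓ-1-(a:ℕ))*(2*t+1) + 2*t = (ℓ-1-(b:ℕ))*(2*t+1) + 2*t :=
        congrArg Fin.val hab
      have h1' : (ℓ-1-(a:ℕ))*(2*t+1) = (ℓ-1-(b:ℕ))*(2*t+1) := by omega
      have h2 : (ℓ-1-(a:ℕ)) = (ℓ-1-(b:ℕ)) :=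
        Nat.eq_of_mul_eq_mul_right (show 0 < 2*t+1 by omega) h1'
      have ha := a.isLt
      have hb := b.isLt
      exact Fin.ext (by omega)
    have hgaplt : ∀ (j : Fin ℓ), ∀ x ∈ Finset.Ico ((ℓ-1-(j:ℕ))*(2*t+1))
        ((ℓ-1-(j:ℕ))*(2*t+1) + 2*t), x < L0 r ℓ t := by
      intro j x hx
      rw [Finset.mem_Ico] at hx
      have := hposlt j
      omega
    set gap : Fin ℓ → Finset (Fin (L0 r ℓ t)) := fun j =>
      Finset.attachFin (Finset.Ico ((ℓ-1-(j:ℕ))*(2*t+1)) ((ℓ-1-(j:ℕ))*(2*t+1) + 2*t))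
        (hgaplt j) with hgap
    have hgapcard : ∀ j, (gap j).card = 2*t := by
      intro j
      rw [hgap]
      rw [Finset.card_attachFin, Nat.card_Ico]
      omega
    -- key comparison
    have hcompare : ∀ (j : Fin ℓ), ∀ k ∈ gap j, ∀ i' : Fin ℓ,
        ((j:ℕ) < (i':ℕ) → pos i' < k) ∧ (¬ (j:ℕ) < (i':ℕ) → k < pos i') := by
      intro j k hk i'
      rw [hgap, Finset.mem_attachFin, Finset.mem_Ico] at hk
      constructor
      · intro hji
        have h1 : (ℓ-1-(i':ℕ)) + 1 ≤ (ℓ-1-(j:ℕ)) := by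
          have := i'.isLt
          have := j.isLt
          omega
        have h2 : ((ℓ-1-(i':ℕ)) + 1)*(2*t+1) ≤ (ℓ-1-(j:ℕ))*(2*t+1) :=
          Nat.mul_le_mul_right _ h1
        have h3 : ((ℓ-1-(i':ℕ)) + 1)*(2*t+1) = (ℓ-1-(i':ℕ))*(2*t+1) + 2*t + 1 := by ring
        show (ℓ-1-(i':ℕ))*(2*t+1) + 2*t < (k:ℕ)
        omega
      · intro hji
        have h1 : (ℓ-1-(j:ℕ)) ≤ (ℓ-1-(i':ℕ)) := by omega
        have h2 : (ℓ-1-(j:ℕ))*(2*t+1) ≤ (ℓ-1-(i':ℕ))*(2*t+1) := Nat.mul_le_mul_right _ h1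
        show (k:ℕ) < (ℓ-1-(i':ℕ))*(2*t+1) + 2*t
        omega
    have hvalpat : ∀ (j : Fin ℓ), ∀ k ∈ gap j, ∀ i' : Fin ℓ,
        fcol k (Rm (pos i')) = if (j:ℕ) < (i':ℕ) then Y p else X p := by
      intro j k hk i'
      by_cases hji : (j:ℕ) < (i':ℕ)
      · rw [if_pos hji]
        exact (hmonoval (pos i') k ((hcompare j k hk i').1 hji) p).2
      · rw [if_neg hji]
        exact (hmonoval k (pos i') ((hcompare j k hk i').2 hji) p).1
    -- fibers of fcol have size ≤ 2
    have hfib : ∀ (j : Fin ℓ), ∀ wc ∈ (gap j).image fcol,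
        ((gap j).filter (fun k => fcol k = wc)).card ≤ 2 := by
      intro j wc _
      by_contra hcon2
      push_neg at hcon2
      obtain ⟨k1, hk1, k2, hk2, k3, hk3, h12, h23⟩ :=
        three_chain (s := (gap j).filter (fun k => fcol k = wc)) (by omega)
      have e1 : fcol k1 (Rm k2) = X p := (hmonoval k1 k2 h12 p).1
      have e3 : fcol k3 (Rm k2) = Y p := (hmonoval k2 k3 h23 p).2
      have w1 := (Finset.mem_filter.1 hk1).2
      have w3 := (Finset.mem_filter.1 hk3).2
      rw [w1] at e1
      rw [w3] at e3
      exact hp (by rw [← e1, ← e3])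
    have htle : ∀ j : Fin ℓ, t ≤ ((gap j).image fcol).card := by
      intro j
      have := Finset.card_le_mul_card_image (gap j) 2 (hfib j)
      rw [hgapcard j] at this
      omega
    have hwcol : ∀ j : Fin ℓ, ∃ wc : Fin t → (Fin (m+1) → Fin r),
        Function.Injective wc ∧ ∀ q, wc q ∈ (gap j).image fcol :=
      fun j => enum_of_card (htle j)
    choose wcol hwinj hwmem using hwcol
    have hweval : ∀ (j : Fin ℓ) q (i' : Fin ℓ),
        wcol j q (Rm (pos i')) = if (j:ℕ) < (i':ℕ) then Y p else X p := by
      intro j q i'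
      obtain ⟨k, hk, hkeq⟩ := Finset.mem_image.1 (hwmem j q)
      rw [← hkeq]
      exact hvalpat j k hk i'
    have hwmemC : ∀ (j : Fin ℓ) q, wcol j q ∈ C := by
      intro j q
      obtain ⟨k, hk, hkeq⟩ := Finset.mem_image.1 (hwmem j q)
      rw [← hkeq]
      exact (hdat (Rm k) (hRmem k)).2.1 p
    apply (hav (Y p) (X p) (Ne.symm hp)).2
    refine ⟨fun i' => Rm (pos i'), fun a b hab => hposinj (hRmono.injective hab),
      wcol, hwmemC, ?_, ?_⟩
    · intro j q j' q' heq
      rcases lt_trichotomy (j:ℕ) (j':ℕ) with h | h | h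
      · exfalso
        have e1 := hweval j q j'
        have e2 := hweval j' q' j'
        rw [heq, if_pos h] at e1
        rw [if_neg (lt_irrefl _)] at e2
        rw [e2] at e1
        exact hp e1
      · have hjj : j = j' := Fin.ext h
        subst hjj
        exact ⟨rfl, hwinj j heq⟩
      · exfalso
        have e1 := hweval j' q' j
        have e2 := hweval j q j
        rw [← heq, if_pos h] at e1
        rw [if_neg (lt_irrefl _)] at e2
        rw [e2] at e1
        exact hp e1
    · intro i' j q
      rw [hweval j q i']
      simp only [Tmat]


lemma card_le_pow {r m : ℕ} (hr : 1 ≤ r) (C : Finset (Fin m → Fin r)) :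
    C.card ≤ r ^ m := by
  have h1 := Finset.card_le_univ C
  rw [Fintype.card_fun, Fintype.card_fin, Fintype.card_fin] at h1
  exact h1

lemma main_card_bound {r ℓ t : ℕ} (hr : 2 ≤ r) (hℓ : 2 ≤ ℓ) (ht : 1 ≤ t) :
    ∀ m (C : Finset (Fin m → Fin r)), AvoidAll ℓ t m C →
      C.card ≤ Ebound r t * m + r ^ (M0 r ℓ t) := by
  intro m
  induction m with
  | zero =>
    intro C _
    have h1 := card_le_pow (by omega) C
    have h2 : 1 ≤ r ^ (M0 r ℓ t) := Nat.one_le_pow _ _ (by omega)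
    simp only [pow_zero] at h1
    omega
  | succ m ih =>
    intro C hav
    by_cases hm : m + 1 ≤ M0 r ℓ t
    · have h1 := card_le_pow (show 1 ≤ r by omega) C
      have h2 : r^(m+1) ≤ r^(M0 r ℓ t) := Nat.pow_le_pow_right (by omega) hm
      omega
    · have hbad := bad_bounded hr hℓ ht C hav
      obtain ⟨i, hi⟩ : ∃ i : Fin (m+1),
          ¬ ((C.image (fun f => f ∘ i.succAbove)).card + K0 r t ≤ C.card) := by
        by_contra hall
        push_neg at hall
        have heq : ((Finset.univ : Finset (Fin (m+1))).filter
            (fun i => (C.image (fun f => f ∘ i.succAbove)).card + K0 r t ≤ C.card))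
            = Finset.univ := by
          apply Finset.filter_true_of_mem
          intro i _
          exact hall i
        rw [heq, Finset.card_univ, Fintype.card_fin] at hbad
        omega
      have hgood : C.card ≤ (C.image (fun f => f ∘ i.succAbove)).card + Ebound r t := by
        unfold K0 at hi
        omega
      have hD := ih (C.image (fun f => f ∘ i.succAbove)) (avoidAll_lift i C hav)
      have hmul : Ebound r t * (m+1) = Ebound r t * m + Ebound r t := by ring
      omega


lemma config_of_goodCols {r ℓ t m n : ℕ} (A : Matrix (Fin m) (Fin n) (Fin r))
    (hA : Simple A) (P : Matrix (Fin ℓ) (Fin ℓ) (Fin r))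
    (hg : GoodCols ℓ t m (Finset.univ.image (fun j => fun i => A i j)) P) :
    ConfigIn (tCopy t ⟨ℓ, ℓ, P⟩) A := by
  obtain ⟨ρ, hρ, h, hmem, hinj, hval⟩ := hg
  have hch : ∀ (j : Fin ℓ) (q : Fin t), ∃ jdx : Fin n, (fun i => A i jdx) = h j q := by
    intro j q
    obtain ⟨jdx, -, hj⟩ := Finset.mem_image.1 (hmem j q)
    exact ⟨jdx, hj⟩
  choose idx hidx using hch
  refine ⟨ρ, fun jq => idx (finProdFinEquiv.symm jq).2 (finProdFinEquiv.symm jq).1,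
    hρ, ?_, ?_⟩
  · intro a b hab
    have h1 : h (finProdFinEquiv.symm a).2 (finProdFinEquiv.symm a).1
        = h (finProdFinEquiv.symm b).2 (finProdFinEquiv.symm b).1 := by
      rw [← hidx, ← hidx]
      exact congrArg (fun jdx => fun i => A i jdx) hab
    obtain ⟨h2, h3⟩ := hinj _ _ _ _ h1
    have h4 : finProdFinEquiv.symm a = finProdFinEquiv.symm b := Prod.ext h3 h2
    exact finProdFinEquiv.symm.injective h4
  · intro i jq
    show A (ρ i) (idx (finProdFinEquiv.symm jq).2 (finProdFinEquiv.symm jq).1)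
        = P i (finProdFinEquiv.symm jq).2
    have h5 := congrFun (hidx (finProdFinEquiv.symm jq).2 (finProdFinEquiv.symm jq).1) (ρ i)
    exact h5.trans (hval i _ _)


lemma avoidAll_of_avoidsF {r ℓ t m n : ℕ}
    (A : Matrix (Fin m) (Fin n) (Fin r)) (hA : Simple A)
    (hav : AvoidsF (tCopy t '' TFam ℓ r) A) :
    AvoidAll ℓ t m (Finset.univ.image (fun j => fun i => A i j)) := by
  intro a b hab
  constructor
  · intro hg
    exact hav (tCopy t ⟨ℓ, ℓ, Imat ℓ r a b⟩)
      ⟨⟨ℓ, ℓ, Imat ℓ r a b⟩, ⟨a, b, hab, Or.inl rfl⟩, rfl⟩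
      (config_of_goodCols A hA _ hg)
  · intro hg
    exact hav (tCopy t ⟨ℓ, ℓ, Tmat ℓ r a b⟩)
      ⟨⟨ℓ, ℓ, Tmat ℓ r a b⟩, ⟨a, b, hab, Or.inr rfl⟩, rfl⟩
      (config_of_goodCols A hA _ hg)

lemma forb_le {r ℓ t : ℕ} (hr : 2 ≤ r) (hℓ : 2 ≤ ℓ) (ht : 1 ≤ t) (m : ℕ) :
    forb m r (tCopy t '' TFam ℓ r) ≤ Ebound r t * m + r ^ (M0 r ℓ t) := by
  apply csSup_le
  · refine ⟨0, (fun _ j => j.elim0 : Matrix (Fin m) (Fin 0) (Fin r)), ?_, ?_⟩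
    · intro j
      exact j.elim0
    · rintro F ⟨M, hM, rfl⟩ ⟨ρ, σ, -, -, -⟩
      obtain ⟨a, b, hab, hor⟩ := hM
      have hc : 0 < (tCopy t M).cols := by
        rcases hor with rfl | rfl <;>
        · show 0 < t * ℓ
          have : 0 < t := ht
          have : 0 < ℓ := by omega
          positivity
      exact (σ ⟨0, hc⟩).elim0
  · rintro nn ⟨A, hS, hAv⟩
    have hcard : (Finset.univ.image (fun j => fun i => A i j)).card = nn := by
      rw [Finset.card_image_of_injective _ hS, Finset.card_univ, Fintype.card_fin]
    have hb := main_card_bound hr hℓ ht m _ (avoidAll_of_avoidsF A hS hAv)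
    omega


end ForbAux

/-- Let `ℓ ≥ 2`, `r ≥ 2`, `t ≥ 1`. Then there is a constant `c`
(depending on `ℓ, r, t` but not on `m`) with
`forb(m, r, t·𝓣_ℓ(r)) ≤ 2r(r−1)(t−1)·m + c` for all `m ≥ 1`. -/
theorem forb_tTFam_linear_upper (ℓ r t : ℕ) (hℓ : 2 ≤ ℓ) (hr : 2 ≤ r) (ht : 1 ≤ t) :
    ∃ c : ℕ, ∀ m : ℕ, 1 ≤ m →
      forb m r (tCopy t '' TFam ℓ r) ≤ 2 * r * (r - 1) * (t - 1) * m + c := by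
  refine ⟨r ^ (ForbAux.M0 r ℓ t), fun m _ => ?_⟩
  have := ForbAux.forb_le hr hℓ ht m
  simpa [ForbAux.Ebound] using this
end
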